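/- arXiv:1109.1586 — 9 statements merged into one kernel-verified Lean document; each statement's English description precedes it below -/
import Mathlib

section
/- For every integer n ≥ 3 there exist points λ = (λ_1,…,λ_n) and μ = (μ_1,…,μ_n) in 𝔻ⁿ, each with pairwise distinct coordinates (λ_i ≠ λ_j and μ_i ≠ μ_j for i ≠ j), such that det[(1 − λ_j·conj(μ_k))^{−2}]_{1≤j,k≤n} = 0. (By the Edigarian–Zwonek formula for the Bergman kernel of the symmetrized polydisc, this vanishing determinant is exactly the statement that the symmetrized polydisc 𝔾_n is not a Lu Qi-Keng domain for n ≥ 3.) -/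
open Complex

/-- Key analytic fact: if `qⁿ = -1/(n-1)` with `‖q‖ < 1` and `ω` is a primitive
`n`-th root of unity, then `∑ l, (1 - q ωˡ)⁻² = 0`. -/
lemma keySum (n : ℕ) (hn : 3 ≤ n) (q ω : ℂ) (hq : ‖q‖ < 1)
    (hqn : q ^ n = -(((n : ℂ) - 1)⁻¹)) (hω : IsPrimitiveRoot ω n) :
    ∑ l : Fin n, ((1 - q * ω ^ (l : ℕ)) ^ 2)⁻¹ = 0 := by
  have hn0 : n ≠ 0 := by omega
  have hωn : ω ^ n = 1 := hω.pow_eq_one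
  have hωabs : ‖ω‖ = 1 := by
    have h1 : ‖ω‖ ^ n = 1 := by rw [← norm_pow, hωn, norm_one]
    rcases lt_trichotomy ‖ω‖ 1 with h | h | h
    · have := pow_lt_one₀ (norm_nonneg ω) h hn0; linarith
    · exact h
    · have := one_lt_pow₀ h hn0; linarith
  -- norms of the points
  have hz : ∀ l : Fin n, ‖q * ω ^ (l : ℕ)‖ < 1 := by
    intro l
    rw [norm_mul, norm_pow, hωabs, one_pow, mul_one]
    exact hq
  -- partial sums: for each l, HasSum of (s+1)(qω^l)^s to (1-qω^l)⁻²
  have h1 : ∀ l : Fin n,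
      HasSum (fun s : ℕ => ((s : ℂ) * (q * ω ^ (l : ℕ)) ^ s + (q * ω ^ (l : ℕ)) ^ s))
        (((1 - q * ω ^ (l : ℕ)) ^ 2)⁻¹) := by
    intro l
    set z := q * ω ^ (l : ℕ) with hzdef
    have hz1 : ‖z‖ < 1 := hz l
    have hne : (1 : ℂ) - z ≠ 0 := by
      intro h
      have : z = 1 := by linear_combination -h
      rw [this] at hz1; simp at hz1
    have hA := hasSum_coe_mul_geometric_of_norm_lt_one hz1
    have hB := hasSum_geometric_of_norm_lt_one hz1
    have := hA.add hB
    convert this using 1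
    · rfl
    field_simp
    ring
  have h2 := hasSum_sum
    (f := fun (l : Fin n) (s : ℕ) => ((s : ℂ) * (q * ω ^ (l : ℕ)) ^ s + (q * ω ^ (l : ℕ)) ^ s))
    (a := fun l : Fin n => ((1 - q * ω ^ (l : ℕ)) ^ 2)⁻¹)
    (s := (Finset.univ : Finset (Fin n)))
    (fun l _ => h1 l)
  -- identify the summand with the arithmetic-progression function
  have h3 : (fun s : ℕ => ∑ l : Fin n,
        ((s : ℂ) * (q * ω ^ (l : ℕ)) ^ s + (q * ω ^ (l : ℕ)) ^ s))
      = fun s : ℕ => if n ∣ s then ((s : ℂ) + 1) * q ^ s * n else 0 := by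
    funext s
    have hsum : ∑ l : Fin n, (q * ω ^ (l : ℕ)) ^ s
        = q ^ s * ∑ l : Fin n, (ω ^ s) ^ (l : ℕ) := by
      rw [Finset.mul_sum]
      refine Finset.sum_congr rfl fun l _ => ?_
      rw [mul_pow, ← pow_mul, ← pow_mul, mul_comm (l : ℕ) s]
    have hroots : ∑ l : Fin n, (ω ^ s) ^ (l : ℕ)
        = if n ∣ s then (n : ℂ) else 0 := by
      rw [Fin.sum_univ_eq_sum_range]
      by_cases hd : n ∣ s
      · rw [if_pos hd, (hω.pow_eq_one_iff_dvd s).mpr hd]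
        simp
      · rw [if_neg hd]
        have hne1 : ω ^ s ≠ 1 := fun h => hd ((hω.pow_eq_one_iff_dvd s).mp h)
        rw [geom_sum_eq hne1]
        have : (ω ^ s) ^ n = 1 := by
          rw [← pow_mul, mul_comm, pow_mul, hωn, one_pow]
        rw [this]; simp
    have : ∑ l : Fin n, ((s : ℂ) * (q * ω ^ (l : ℕ)) ^ s + (q * ω ^ (l : ℕ)) ^ s)
        = ((s : ℂ) + 1) * (∑ l : Fin n, (q * ω ^ (l : ℕ)) ^ s) := by
      rw [Finset.mul_sum]
      refine Finset.sum_congr rfl fun l _ => ?_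
      ring
    rw [this, hsum, hroots]
    by_cases hd : n ∣ s
    · rw [if_pos hd, if_pos hd]; ring
    · rw [if_neg hd, if_neg hd]; ring
  -- the arithmetic-progression function sums to 0
  have h4 : HasSum (fun s : ℕ => if n ∣ s then ((s : ℂ) + 1) * q ^ s * n else 0) 0 := by
    set x : ℂ := q ^ n with hxdef
    have hx1 : ‖x‖ < 1 := by
      rw [hxdef, norm_pow]
      exact pow_lt_one₀ (norm_nonneg q) hq hn0
    have hxne : (1 : ℂ) - x ≠ 0 := by
      intro h
      have : x = 1 := by linear_combination -h
      rw [this] at hx1; simp at hx1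
    have hinj : Function.Injective (fun t : ℕ => n * t) := fun a b h => by
      simpa [hn0] using h
    have hsupp : ∀ s ∉ Set.range (fun t : ℕ => n * t),
        (if n ∣ s then ((s : ℂ) + 1) * q ^ s * n else 0) = 0 := by
      intro s hs
      rw [if_neg]
      intro ⟨t, ht⟩
      exact hs ⟨t, ht.symm⟩
    rw [← Function.Injective.hasSum_iff hinj hsupp]
    have hA := (hasSum_coe_mul_geometric_of_norm_lt_one hx1).mul_left ((n : ℂ) * n)
    have hB := (hasSum_geometric_of_norm_lt_one hx1).mul_left (n : ℂ)
    have hAB := hA.add hB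
    have hfun : ((fun s : ℕ => if n ∣ s then ((s : ℂ) + 1) * q ^ s * n else 0)
          ∘ fun t : ℕ => n * t)
        = fun t : ℕ => (n : ℂ) * n * ((t : ℂ) * x ^ t) + (n : ℂ) * x ^ t := by
      funext t
      simp only [Function.comp_apply]
      rw [if_pos ⟨t, rfl⟩, hxdef, ← pow_mul]
      push_cast
      ring
    rw [hfun]
    convert hAB using 1
    · rfl
    -- show 0 = n² (x/(1-x)²) + n (1-x)⁻¹ for x = -(1/(n-1))
    have hcn : ((n : ℂ) - 1) ≠ 0 := by
      intro h
      have : (n : ℂ) = 1 := by linear_combination h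
      have : (n : ℕ) = 1 := by exact_mod_cast this
      omega
    have hxval : x = -(((n : ℂ) - 1)⁻¹) := hqn
    have hnc : (n : ℂ) ≠ 0 := Nat.cast_ne_zero.mpr hn0
    have h1x : 1 - x = (n : ℂ) * ((n : ℂ) - 1)⁻¹ := by
      rw [hxval]; field_simp; ring
    rw [h1x, hxval]
    field_simp
    ring
  rw [h3] at h2
  exact h2.unique h4


/-- `‖z‖ = 1` for any root of unity. -/
lemma norm_eq_one_of_pow_eq_one' {z : ℂ} {n : ℕ} (hn0 : n ≠ 0) (h : z ^ n = 1) : ‖z‖ = 1 := by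
  have h1 : ‖z‖ ^ n = 1 := by rw [← norm_pow, h, norm_one]
  rcases lt_trichotomy ‖z‖ 1 with hlt | he | hgt
  · have := pow_lt_one₀ (norm_nonneg z) hlt hn0; linarith
  · exact he
  · have := one_lt_pow₀ hgt hn0; linarith

/-- For every integer `n ≥ 3` there exist points `λ, μ ∈ 𝔻ⁿ`, each with
pairwise distinct coordinates, such that `det[(1 - λ_j conj(μ_k))⁻²] = 0`
(i.e. the Bergman kernel of the symmetrized polydisc `𝔾_n` has a zero, so `𝔾_n`
is not a Lu Qi-Keng domain for `n ≥ 3`). -/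
theorem symmetrizedPolydisc_not_LuQiKeng (n : ℕ) (hn : 3 ≤ n) :
    ∃ lam mu : Fin n → ℂ,
      (∀ j, ‖lam j‖ < 1) ∧ (∀ j, ‖mu j‖ < 1) ∧
      Function.Injective lam ∧ Function.Injective mu ∧
      Matrix.det (Matrix.of fun j k : Fin n =>
        ((1 - lam j * (starRingEnd ℂ) (mu k)) ^ 2)⁻¹) = 0 := by
  have hn0 : n ≠ 0 := by omega
  haveI : NeZero n := ⟨hn0⟩
  have hnR0 : (0 : ℝ) < (n : ℝ) := by
    exact_mod_cast Nat.pos_of_ne_zero hn0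
  have hnR : (1 : ℝ) < (n : ℝ) - 1 := by
    have : (3 : ℝ) ≤ (n : ℝ) := by exact_mod_cast hn
    linarith
  -- the basic data
  set θ : ℝ := Real.pi / (2 * n) with hθdef
  set r : ℝ := ((n : ℝ) - 1) ^ (-(1 / (2 * (n : ℝ)))) with hrdef
  have hr0 : 0 < r := Real.rpow_pos_of_pos (by linarith) _
  have hr1 : r < 1 := by
    apply Real.rpow_lt_one_of_one_lt_of_neg hnR
    have : 0 < 1 / (2 * (n : ℝ)) := by positivity
    linarith
  set w : ℂ := (r : ℂ) * Complex.exp ((θ : ℂ) * I) with hwdef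
  have hwnorm : ‖w‖ = r := by
    rw [hwdef, norm_mul, Complex.norm_real, Real.norm_of_nonneg hr0.le,
      Complex.norm_exp_ofReal_mul_I, mul_one]
  have hwne : w ≠ 0 := by
    intro h; rw [h, norm_zero] at hwnorm; exact hr0.ne hwnorm
  set ω : ℂ := Complex.exp (2 * Real.pi * I / n) with hωdef
  have hω : IsPrimitiveRoot ω n := Complex.isPrimitiveRoot_exp n hn0
  have hωn : ω ^ n = 1 := hω.pow_eq_one
  have hωnorm : ‖ω‖ = 1 := norm_eq_one_of_pow_eq_one' hn0 hωn
  have hωne : ω ≠ 0 := by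
    intro h; rw [h, norm_zero] at hωnorm; norm_num at hωnorm
  set q : ℂ := w ^ 2 with hqdef
  have hqnorm : ‖q‖ < 1 := by
    rw [hqdef, norm_pow, hwnorm]
    nlinarith
  -- q ^ n = -(1/(n-1))
  have hr2n : r ^ (2 * n) = (((n : ℝ) - 1)⁻¹) := by
    rw [hrdef, ← Real.rpow_natCast (((n : ℝ) - 1) ^ (-(1 / (2 * (n : ℝ))))) (2 * n),
      ← Real.rpow_mul (by linarith)]
    have : (-(1 / (2 * (n : ℝ)))) * ((2 * n : ℕ) : ℝ) = -1 := by
      push_cast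
      field_simp
    rw [this, Real.rpow_neg_one]
  have hqn : q ^ n = -(((n : ℂ) - 1)⁻¹) := by
    have hexp : Complex.exp ((θ : ℂ) * I) ^ (2 * n) = -1 := by
      rw [← Complex.exp_nat_mul]
      have harg : ((2 * n : ℕ) : ℂ) * ((θ : ℂ) * I) = (Real.pi : ℂ) * I := by
        rw [hθdef]
        push_cast
        have : (n : ℂ) ≠ 0 := Nat.cast_ne_zero.mpr hn0
        field_simp
      rw [harg, Complex.exp_pi_mul_I]
    calc q ^ n = w ^ (2 * n) := by rw [hqdef, ← pow_mul]
    _ = (r : ℂ) ^ (2 * n) * Complex.exp ((θ : ℂ) * I) ^ (2 * n) := by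
        rw [hwdef, mul_pow]
    _ = (r : ℂ) ^ (2 * n) * (-1) := by rw [hexp]
    _ = -(((n : ℂ) - 1)⁻¹) := by
        rw [← Complex.ofReal_pow, hr2n]
        push_cast
        ring
  -- the points
  refine ⟨fun j => w * ω ^ (j : ℕ), fun k => (starRingEnd ℂ) w * ω ^ (k : ℕ), ?_, ?_, ?_, ?_, ?_⟩
  · intro j
    rw [norm_mul, norm_pow, hwnorm, hωnorm, one_pow, mul_one]
    exact hr1
  · intro k
    rw [norm_mul, norm_pow, hωnorm, one_pow, mul_one, Complex.norm_conj]
    rw [hwnorm]; exact hr1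
  · intro a b h
    simp only at h
    exact Fin.ext (hω.pow_inj a.isLt b.isLt (mul_left_cancel₀ hwne h))
  · intro a b h
    simp only at h
    have hcwne : (starRingEnd ℂ) w ≠ 0 := by
      simpa using hwne
    exact Fin.ext (hω.pow_inj a.isLt b.isLt (mul_left_cancel₀ hcwne h))
  · -- determinant vanishes
    rw [← Matrix.exists_mulVec_eq_zero_iff]
    refine ⟨fun _ => 1, ?_, ?_⟩
    · intro h
      have := congrFun h ⟨0, Nat.pos_of_ne_zero hn0⟩
      simp at this
    · -- entries as a circulant
      have hmod : ∀ m : ℕ, ω ^ (m % n) = ω ^ m := by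
        intro m
        conv_rhs => rw [← Nat.div_add_mod m n]
        rw [pow_add, pow_mul, hωn, one_pow, one_mul]
      have hpowadd : ∀ a b : Fin n, ω ^ ((a + b : Fin n) : ℕ) = ω ^ (a : ℕ) * ω ^ (b : ℕ) := by
        intro a b
        rw [Fin.val_add, hmod, pow_add]
      have hconjω : (starRingEnd ℂ) ω = ω⁻¹ :=
        (Complex.inv_eq_conj hωnorm).symm
      have hentry : ∀ j k : Fin n,
          w * ω ^ (j : ℕ) * (starRingEnd ℂ) ((starRingEnd ℂ) w * ω ^ (k : ℕ))
            = q * ω ^ ((j - k : Fin n) : ℕ) := by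
        intro j k
        have h1 : ω ^ ((j - k : Fin n) : ℕ) * ω ^ (k : ℕ) = ω ^ (j : ℕ) := by
          rw [← hpowadd, sub_add_cancel]
        rw [map_mul, Complex.conj_conj, map_pow, hconjω]
        rw [hqdef]
        field_simp
        rw [← h1]
        rw [one_div, inv_pow, mul_assoc, mul_inv_cancel₀ (pow_ne_zero _ hωne), mul_one]
      funext j
      have : (Matrix.of fun j k : Fin n =>
            ((1 - (w * ω ^ (j : ℕ)) * (starRingEnd ℂ) ((starRingEnd ℂ) w * ω ^ (k : ℕ))) ^ 2)⁻¹).mulVec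
            (fun _ => 1) j
          = ∑ k : Fin n, ((1 - q * ω ^ ((j - k : Fin n) : ℕ)) ^ 2)⁻¹ := by
        simp only [Matrix.mulVec, dotProduct, Matrix.of_apply, mul_one]
        exact Finset.sum_congr rfl fun k _ => by rw [hentry j k]
      rw [this]
      have hre : ∑ k : Fin n, ((1 - q * ω ^ ((j - k : Fin n) : ℕ)) ^ 2)⁻¹
          = ∑ l : Fin n, ((1 - q * ω ^ (l : ℕ)) ^ 2)⁻¹ := by
        exact Fintype.sum_equiv (Equiv.subLeft j)
          (fun k => ((1 - q * ω ^ ((j - k : Fin n) : ℕ)) ^ 2)⁻¹)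
          (fun l => ((1 - q * ω ^ (l : ℕ)) ^ 2)⁻¹)
          (fun k => rfl)
      rw [hre, keySum n hn q ω hqnorm hqn hω]
      rfl
end

section
/- A balanced domain D ⊆ ℂⁿ belongs to the class 𝓔 if and only if D is convex. -/
/-- `D'` is biholomorphic to `G`: there is a holomorphic bijection `D' → G`
whose inverse is holomorphic. -/
def Biholo {N : ℕ} (D G : Set (Fin N → ℂ)) : Prop :=
  ∃ f g : (Fin N → ℂ) → (Fin N → ℂ),
    DifferentiableOn ℂ f D ∧ DifferentiableOn ℂ g G ∧
    Set.MapsTo f D G ∧ Set.MapsTo g G D ∧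
    (∀ z ∈ D, g (f z) = z) ∧ (∀ w ∈ G, f (g w) = w)

/-- The class `𝓔`: every compact subset of `D` is contained in a subdomain of `D`
that is biholomorphic to a convex (open) domain. -/
def ClassE {N : ℕ} (D : Set (Fin N → ℂ)) : Prop :=
  ∀ K : Set (Fin N → ℂ), IsCompact K → K ⊆ D →
    ∃ D' : Set (Fin N → ℂ), K ⊆ D' ∧ D' ⊆ D ∧ IsOpen D' ∧ IsConnected D' ∧
      ∃ G : Set (Fin N → ℂ), IsOpen G ∧ Convex ℝ G ∧ Biholo D' G

open Set Metric Complex MeasureTheory Function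
open scoped Real Topology Pointwise


lemma exists_fderiv_bound {E F : Type*} [NormedAddCommGroup E] [NormedSpace ℂ E] [ProperSpace E]
    [NormedAddCommGroup F] [NormedSpace ℂ F]
    {U : Set E} (hU : IsOpen U) {f : E → F}
    (hf : DifferentiableOn ℂ f U) {K : Set E} (hK : IsCompact K) (hKU : K ⊆ U) :
    ∃ C : ℝ, 0 ≤ C ∧ ∀ p ∈ K, ‖fderiv ℂ f p‖ ≤ C := by
  obtain ⟨ρ, hρpos, hρ⟩ := hK.exists_cthickening_subset_open hU hKU
  have hK' : IsCompact (cthickening ρ K) := hK.cthickening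
  obtain ⟨B, hB⟩ := hK'.exists_bound_of_continuousOn ((hf.continuousOn).mono hρ)
  rcases K.eq_empty_or_nonempty with rfl | ⟨p₀, hp₀⟩
  · exact ⟨0, le_rfl, by simp⟩
  have hB0 : 0 ≤ B := le_trans (norm_nonneg _) (hB p₀ (self_subset_cthickening _ hp₀))
  refine ⟨B / ρ, div_nonneg hB0 hρpos.le, fun p hp => ?_⟩
  have hpU : p ∈ U := hKU hp
  have hball : ∀ q, dist q p ≤ ρ → q ∈ U := fun q hq =>
    hρ (closedBall_subset_cthickening hp ρ hq)
  refine ContinuousLinearMap.opNorm_le_bound _ (div_nonneg hB0 hρpos.le) fun v => ?_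
  rcases eq_or_ne v 0 with rfl | hv
  · simp
  have hvn : (0:ℝ) < ‖v‖ := norm_pos_iff.mpr hv
  set R : ℝ := ρ / ‖v‖ with hR
  have hRpos : 0 < R := div_pos hρpos hvn
  set φ : ℂ → F := fun t => f (p + t • v) with hφ
  have hmem : ∀ t : ℂ, t ∈ closedBall (0:ℂ) R → p + t • v ∈ U := by
    intro t ht
    apply hball
    rw [dist_eq_norm, add_sub_cancel_left, norm_smul]
    rw [mem_closedBall, dist_zero_right] at ht
    calc ‖t‖ * ‖v‖ ≤ R * ‖v‖ := by gcongr
    _ = ρ := by rw [hR, div_mul_cancel₀ ρ hvn.ne']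
  have hdφ : DifferentiableOn ℂ φ (closedBall (0:ℂ) R) := by
    intro t ht
    have h1 : DifferentiableWithinAt ℂ (fun t : ℂ => p + t • v) (closedBall 0 R) t :=
      (differentiableWithinAt_id.smul_const v).const_add p
    exact ((hf (p + t • v) (hmem t ht)).comp t h1 (fun s hs => hmem s hs))
  have hdc : DiffContOnCl ℂ φ (ball (0:ℂ) R) :=
    ⟨hdφ.mono ball_subset_closedBall, by
      rw [closure_ball (0:ℂ) hRpos.ne']
      exact hdφ.continuousOn⟩
  have hsphere : ∀ z ∈ sphere (0:ℂ) R, ‖φ z‖ ≤ B := by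
    intro z hz
    apply hB
    apply closedBall_subset_cthickening hp ρ
    rw [mem_closedBall, dist_eq_norm, add_comm, add_sub_cancel_right, norm_smul]
    rw [mem_sphere, dist_zero_right] at hz
    rw [hz, hR]; field_simp; exact le_rfl
  have hder : HasDerivAt φ ((fderiv ℂ f p) v) 0 := by
    have h1 : HasDerivAt (fun t : ℂ => p + t • v) v 0 := by
      simpa using ((hasDerivAt_id (0:ℂ)).smul_const v).const_add p
    have h2 : HasFDerivAt f (fderiv ℂ f p) (p + (0:ℂ) • v) := by
      rw [zero_smul, add_zero]
      exact (hf.differentiableAt (hU.mem_nhds hpU)).hasFDerivAt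
    exact h2.comp_hasDerivAt (0:ℂ) h1
  have := Complex.norm_deriv_le_of_forall_mem_sphere_norm_le hRpos hdc hsphere
  rw [hder.deriv] at this
  calc ‖(fderiv ℂ f p) v‖ ≤ B / R := this
  _ = B / ρ * ‖v‖ := by rw [hR]; field_simp

lemma key_lemma {n : ℕ} {D : Set (Fin n → ℂ)} (hDopen : IsOpen D)
    (hbal : ∀ lam : ℂ, ‖lam‖ ≤ 1 → ∀ z ∈ D, lam • z ∈ D)
    (hE : ClassE D) {φ : ℂ → (Fin n → ℂ)} {R : ℝ} (hR : 1 < R)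
    (hφ : DifferentiableOn ℂ φ (Metric.ball 0 R))
    (hmaps : Set.MapsTo φ (Metric.ball 0 R) D) (hφ0 : φ 0 = 0) :
    deriv φ 0 ∈ D := by
  classical
  have hRpos : (0:ℝ) < R := lt_trans one_pos hR
  set r : ℝ := (1 + R)/2 with hrdef
  have hr1 : 1 < r := by rw [hrdef]; linarith
  have hrR : r < R := by rw [hrdef]; linarith
  have hr0 : (0:ℝ) < r := lt_trans one_pos hr1
  have hballr : closedBall (0:ℂ) r ⊆ ball 0 R := closedBall_subset_ball hrR
  -- the compact balanced hull of the disc image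
  set K : Set (Fin n → ℂ) :=
    (fun p : ℂ × ℂ => p.1 • φ p.2) '' ((closedBall 0 1) ×ˢ (closedBall 0 r)) with hKdef
  have hφcont : ContinuousOn φ (closedBall 0 r) := (hφ.continuousOn).mono hballr
  have hKcomp : IsCompact K := by
    apply (isCompact_closedBall (0:ℂ) 1 |>.prod (isCompact_closedBall (0:ℂ) r)).image_of_continuousOn
    exact (continuousOn_fst).smul (hφcont.comp continuousOn_snd (fun p hp => hp.2))
  have hval : ∀ {μ lam : ℂ}, ‖μ‖ ≤ 1 → ‖lam‖ ≤ r → μ • φ lam ∈ K := by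
    intro μ lam hμ hlam
    exact ⟨(μ, lam), ⟨mem_closedBall_zero_iff.mpr hμ, mem_closedBall_zero_iff.mpr hlam⟩, rfl⟩
  have hKD : K ⊆ D := by
    rintro _ ⟨⟨μ, lam⟩, ⟨hμ, hlam⟩, rfl⟩
    exact hbal μ (mem_closedBall_zero_iff.mp hμ) _
      (hmaps (hballr (mem_closedBall_zero_iff.mpr (mem_closedBall_zero_iff.mp hlam))))
  obtain ⟨D₂, hKD₂, hD₂D, hD₂open, -, G, hGopen, hGconv, f, g, hf, hg, hfG, hgD₂, hgf, hfg⟩ :=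
    hE K hKcomp hKD
  have h0K : (0 : Fin n → ℂ) ∈ K := by
    have := hval (μ := 0) (lam := 0) (by simp) (by simp [hr0.le])
    simpa using this
  have h0D₂ : (0 : Fin n → ℂ) ∈ D₂ := hKD₂ h0K
  -- the slope function
  set g0 : ℂ → (Fin n → ℂ) := dslope φ 0 with hg0def
  have hg0 : DifferentiableOn ℂ g0 (ball 0 R) :=
    (differentiableOn_dslope (isOpen_ball.mem_nhds (mem_ball_self hRpos))).mpr hφ
  have hX : deriv φ 0 = g0 0 := (dslope_same φ 0).symm
  have hφeq : ∀ ν : ℂ, φ ν = ν • g0 ν := by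
    intro ν
    rcases eq_or_ne ν 0 with rfl | hν
    · simp [hφ0]
    · rw [hg0def, dslope_of_ne φ hν, slope_def_module, hφ0, sub_zero, sub_zero, smul_smul,
        mul_inv_cancel₀ hν, one_smul]
  obtain ⟨M, hM⟩ := (isCompact_closedBall (0:ℂ) r).exists_bound_of_continuousOn
    (hg0.continuousOn.mono hballr)
  have hM0 : 0 ≤ M := le_trans (norm_nonneg _) (hM 0 (mem_closedBall_self hr0.le))
  obtain ⟨ε, hεpos, hεD₂⟩ := Metric.isOpen_iff.mp hD₂open 0 h0D₂
  set δ : ℝ := min (ε / (M+1)) 1 with hδdef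
  have hδpos : 0 < δ := lt_min (div_pos hεpos (by linarith)) one_pos
  have hδ1 : δ ≤ 1 := min_le_right _ _
  have hδr : δ < r := lt_of_le_of_lt hδ1 hr1
  have hsmul_mem : ∀ {lam ν : ℂ}, ‖lam‖ < δ → ‖ν‖ ≤ r → lam • g0 ν ∈ D₂ := by
    intro lam ν hlam hν
    apply hεD₂
    rw [mem_ball_zero_iff, norm_smul]
    have h1 : ‖lam‖ * ‖g0 ν‖ ≤ ‖lam‖ * (M+1) := by
      have := hM ν (mem_closedBall_zero_iff.mpr hν)
      have : ‖g0 ν‖ ≤ M + 1 := by linarith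
      exact mul_le_mul_of_nonneg_left this (norm_nonneg _)
    have h2 : ‖lam‖ * (M+1) < (ε / (M+1)) * (M+1) := by
      have hlt : ‖lam‖ < ε / (M+1) := lt_of_lt_of_le hlam (min_le_left _ _)
      exact mul_lt_mul_of_pos_right hlt (by linarith)
    have h3 : (ε / (M+1)) * (M+1) = ε := div_mul_cancel₀ ε (by linarith)
    linarith
  -- the integrand
  set u : ℝ → ℂ → (Fin n → ℂ) :=
    fun θ lam => f (exp (-(θ:ℂ) * I) • φ (exp ((θ:ℂ) * I) * lam)) with hudef
  have hexp1 : ∀ θ : ℝ, ‖exp ((θ:ℂ) * I)‖ = 1 := fun θ => Complex.norm_exp_ofReal_mul_I θ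
  have hexp1' : ∀ θ : ℝ, ‖exp (-(θ:ℂ) * I)‖ = 1 := by
    intro θ
    have : (-(θ:ℂ)) = ((-θ : ℝ) : ℂ) := by push_cast; ring
    rw [this]
    exact Complex.norm_exp_ofReal_mul_I (-θ)
  have hargK : ∀ (θ : ℝ) {lam : ℂ}, ‖lam‖ ≤ r →
      exp (-(θ:ℂ)*I) • φ (exp ((θ:ℂ)*I) * lam) ∈ K := by
    intro θ lam hlam
    refine hval (le_of_eq (hexp1' θ)) ?_
    rw [norm_mul, hexp1, one_mul]; exact hlam
  have hinner_cont : ∀ (lam : ℂ), ‖lam‖ ≤ r →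
      Continuous (fun θ : ℝ => exp (-(θ:ℂ) * I) • φ (exp ((θ:ℂ) * I) * lam)) := by
    intro lam hlam
    have c0 : Continuous fun θ : ℝ => (θ:ℂ) := Complex.continuous_ofReal
    have c1 : Continuous fun θ : ℝ => exp (-(θ:ℂ) * I) :=
      Complex.continuous_exp.comp ((c0.neg).mul continuous_const)
    have c2 : Continuous fun θ : ℝ => exp ((θ:ℂ) * I) * lam :=
      (Complex.continuous_exp.comp (c0.mul continuous_const)).mul continuous_const
    refine c1.smul (hφcont.comp_continuous c2 ?_)
    intro θ
    rw [mem_closedBall_zero_iff, norm_mul, hexp1, one_mul]; exact hlam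
  have hucont : ∀ {lam : ℂ}, ‖lam‖ ≤ r → Continuous (fun θ => u θ lam) := by
    intro lam hlam
    exact (hf.continuousOn).comp_continuous (hinner_cont lam hlam)
      (fun θ => hKD₂ (hargK θ hlam))
  -- the average
  set Φ : ℂ → (Fin n → ℂ) := fun lam => (2*π)⁻¹ • ∫ θ in (0:ℝ)..(2*π), u θ lam with hΦdef
  have h2π : (0:ℝ) < 2*π := by positivity
  -- value of Φ on the convex hull
  have hCcomp : IsCompact (f '' K) := hKcomp.image_of_continuousOn (hf.continuousOn.mono hKD₂)
  have hCG : f '' K ⊆ G := by rintro _ ⟨z, hz, rfl⟩; exact hfG (hKD₂ hz)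
  obtain ⟨σ, hσpos, hσ⟩ := hCcomp.exists_thickening_subset_open hGopen hCG
  set S : Set (Fin n → ℂ) := closure (convexHull ℝ (f '' K)) with hSdef
  have hSconv : Convex ℝ S := (convex_convexHull ℝ _).closure
  have hSclosed : IsClosed S := isClosed_closure
  have hCS : f '' K ⊆ S := (subset_convexHull ℝ _).trans subset_closure
  have hSG : S ⊆ G := by
    have h1 : S ⊆ thickening σ (convexHull ℝ (f '' K)) :=
      closure_subset_thickening hσpos _
    have h2 : thickening σ (convexHull ℝ (f '' K)) ⊆ convexHull ℝ (thickening σ (f '' K)) := by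
      intro x hx
      rw [mem_thickening_iff] at hx
      obtain ⟨c, hc, hdist⟩ := hx
      have hxw : x = c + (x - c) := by ring_nf
      have hwball : x - c ∈ ball (0 : Fin n → ℂ) σ := by
        rw [mem_ball_zero_iff, ← dist_eq_norm]; exact hdist
      have : x ∈ convexHull ℝ (f '' K) + convexHull ℝ (ball (0 : Fin n → ℂ) σ) := by
        rw [(convex_ball _ _).convexHull_eq]
        exact ⟨c, hc, x - c, hwball, by ring_nf⟩
      rw [← convexHull_add] at this
      refine convexHull_mono ?_ this
      rintro _ ⟨p, hp, w, hw, rfl⟩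
      rw [mem_thickening_iff]
      exact ⟨p, hp, by rw [dist_eq_norm, add_sub_cancel_left]; exact mem_ball_zero_iff.mp hw⟩
    have h3 : convexHull ℝ (thickening σ (f '' K)) ⊆ G := by
      rw [← hGconv.convexHull_eq]
      exact convexHull_mono hσ
    exact h1.trans (h2.trans h3)
  have hΦS : ∀ {lam : ℂ}, ‖lam‖ ≤ r → Φ lam ∈ S := by
    intro lam hlam
    have havg := hSconv.set_average_mem (μ := volume) (f := fun θ => u θ lam)
      (t := Ioc (0:ℝ) (2*π)) hSclosed
      (by rw [Real.volume_Ioc]; simp [h2π.le]; positivity)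
      (by rw [Real.volume_Ioc]; exact ENNReal.ofReal_ne_top)
      (Filter.Eventually.of_forall ?_) ?_
    · rw [setAverage_eq] at havg
      have hveq : volume.real (Ioc (0:ℝ) (2*π)) = 2*π := by
        rw [measureReal_def, Real.volume_Ioc, ENNReal.toReal_ofReal (by linarith)]; ring
      rw [hveq] at havg
      rw [hΦdef]
      simpa [intervalIntegral.integral_of_le h2π.le] using havg
    · intro θ
      exact hCS ⟨_, hargK θ hlam, rfl⟩
    · exact ((hucont hlam).integrableOn_Ioc)
  -- Step A3 : for small lam, Φ lam = f (lam • g0 0)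
  have hsmall : ∀ {lam : ℂ}, ‖lam‖ < δ → Φ lam = f (lam • (g0 0)) := by
    intro lam hlam
    rcases eq_or_ne lam 0 with rfl | hne
    · have hconst : ∀ θ : ℝ, u θ 0 = f 0 := by
        intro θ
        simp only [hudef, mul_zero, hφ0, smul_zero]
      rw [hΦdef]
      simp only [hconst]
      rw [intervalIntegral.integral_const, sub_zero, smul_smul,
        inv_mul_cancel₀ (by positivity : (2*π:ℝ) ≠ 0), one_smul, zero_smul]
    · set F : ℂ → (Fin n → ℂ) := fun μ => f (lam • g0 (μ * lam)) with hFdef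
      have hlamr : ‖lam‖ < r := lt_trans hlam hδr
      have hlampos : 0 < ‖lam‖ := norm_pos_iff.mpr hne
      have h1lt : (1:ℝ) < r / ‖lam‖ := (one_lt_div hlampos).mpr hlamr
      have hmulmaps : MapsTo (fun μ : ℂ => μ * lam) (ball 0 (r / ‖lam‖)) (ball 0 r) := by
        intro μ hμ
        rw [mem_ball_zero_iff] at hμ ⊢
        rw [norm_mul]
        calc ‖μ‖ * ‖lam‖ < (r / ‖lam‖) * ‖lam‖ := mul_lt_mul_of_pos_right hμ hlampos
        _ = r := div_mul_cancel₀ r hlampos.ne'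
      have hFdiff : DifferentiableOn ℂ F (ball 0 (r / ‖lam‖)) := by
        have hmul : DifferentiableOn ℂ (fun μ : ℂ => μ * lam) (ball 0 (r / ‖lam‖)) :=
          differentiableOn_id.mul_const lam
        have hg0c : DifferentiableOn ℂ (fun μ : ℂ => lam • g0 (μ * lam))
            (ball 0 (r / ‖lam‖)) :=
          ((hg0.mono (fun z hz => hballr (ball_subset_closedBall hz))).comp hmul hmulmaps).const_smul lam
        refine hf.comp hg0c ?_
        intro μ hμ
        exact hsmul_mem hlam (le_of_lt (mem_ball_zero_iff.mp (hmulmaps hμ)))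
      have hdc : DiffContOnCl ℂ F (ball 0 1) :=
        ⟨hFdiff.mono (ball_subset_ball h1lt.le), by
          rw [closure_ball (0:ℂ) one_ne_zero]
          exact hFdiff.continuousOn.mono (closedBall_subset_ball h1lt)⟩
      have hcauchy := hdc.circleIntegral_sub_inv_smul (mem_ball_self one_pos)
      have hunfold : (∮ z in C((0:ℂ), 1), (z - 0)⁻¹ • F z) = ∫ θ in (0:ℝ)..(2*π), I • u θ lam := by
        rw [circleIntegral]
        apply intervalIntegral.integral_congr
        intro θ hθ
        show deriv (circleMap 0 1) θ • (circleMap 0 1 θ - 0)⁻¹ • F (circleMap 0 1 θ)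
          = I • u θ lam
        have hcm : circleMap 0 1 θ = exp ((θ:ℂ) * I) := by
          simp [circleMap]
        rw [deriv_circleMap, hcm, sub_zero, smul_smul]
        have hne' : exp ((θ:ℂ)*I) ≠ 0 := Complex.exp_ne_zero _
        have hsc : exp ((θ:ℂ)*I) * I * (exp ((θ:ℂ)*I))⁻¹ = I := by
          field_simp
        rw [hsc]
        congr 1
        show f (lam • g0 (exp ((θ:ℂ)*I) * lam)) = u θ lam
        rw [hudef]
        simp only []
        congr 1
        rw [hφeq (exp ((θ:ℂ)*I) * lam), smul_smul]
        congr 1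
        rw [show (-(θ:ℂ)*I) = -((θ:ℂ)*I) by ring, Complex.exp_neg,
          inv_mul_cancel_left₀ hne']
      rw [hunfold, intervalIntegral.integral_smul] at hcauchy
      have hrw : ((2:ℂ) * π * I) • F 0 = I • (((2*π : ℝ)) • F 0) := by
        have h1 : ((2*π : ℝ) : ℂ) • F 0 = (2*π : ℝ) • F 0 := by
          rw [← Complex.coe_algebraMap]
          exact IsScalarTower.algebraMap_smul ℂ _ _
        rw [← h1, smul_smul]
        congr 1
        push_cast
        ring
      rw [hrw] at hcauchy
      have hint : (∫ θ in (0:ℝ)..(2*π), u θ lam) = (2*π : ℝ) • F 0 :=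
        smul_right_injective (Fin n → ℂ) Complex.I_ne_zero hcauchy
      rw [hΦdef]
      simp only []
      rw [hint, smul_smul, inv_mul_cancel₀ (by positivity : (2*π:ℝ) ≠ 0), one_smul, hFdef]
      simp only [zero_mul]
  -- Step A1 : Φ is holomorphic on a slightly smaller disc
  set r' : ℝ := (1 + r)/2 with hr'def
  have hr'1 : 1 < r' := by rw [hr'def]; linarith
  have hr'r : r' < r := by rw [hr'def]; linarith
  obtain ⟨C₁, hC₁0, hC₁⟩ := exists_fderiv_bound hD₂open hf hKcomp hKD₂
  have hφan : AnalyticOnNhd ℂ φ (ball 0 R) := hφ.analyticOnNhd isOpen_ball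
  have hdφcont : ContinuousOn (deriv φ) (ball 0 R) := (hφan.deriv).continuousOn
  obtain ⟨C₂, hC₂⟩ := (isCompact_closedBall (0:ℂ) r).exists_bound_of_continuousOn
    (hdφcont.mono hballr)
  have hΦdiff : DifferentiableOn ℂ Φ (ball 0 r') := by
    intro lam₀ hlam₀
    apply DifferentiableAt.differentiableWithinAt
    set ε' : ℝ := (r - r')/2 with hε'def
    have hε'pos : 0 < ε' := by rw [hε'def]; linarith
    have hlam₀' : ‖lam₀‖ < r' := mem_ball_zero_iff.mp hlam₀
    have hmemball : ∀ lam ∈ ball lam₀ ε', ‖lam‖ < r := by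
      intro lam hlam
      rw [mem_ball, dist_eq_norm] at hlam
      calc ‖lam‖ = ‖lam₀ + (lam - lam₀)‖ := by ring_nf
      _ ≤ ‖lam₀‖ + ‖lam - lam₀‖ := norm_add_le _ _
      _ < r' + ε' := by gcongr
      _ ≤ r := by rw [hε'def]; linarith
    set F' : ℂ → ℝ → (Fin n → ℂ) := fun lam θ =>
      (fderiv ℂ f (exp (-(θ:ℂ)*I) • φ (exp ((θ:ℂ)*I) * lam)))
        (deriv φ (exp ((θ:ℂ)*I) * lam)) with hF'def
    have hdiffu : ∀ (θ:ℝ), ∀ lam ∈ ball lam₀ ε',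
        HasDerivAt (fun lam => u θ lam) (F' lam θ) lam := by
      intro θ lam hlam
      have hzr : ‖exp ((θ:ℂ)*I) * lam‖ < r := by
        rw [norm_mul, hexp1, one_mul]; exact hmemball lam hlam
      have hzR : exp ((θ:ℂ)*I) * lam ∈ ball (0:ℂ) R := mem_ball_zero_iff.mpr (hzr.trans hrR)
      have h1 : HasDerivAt (fun x : ℂ => exp ((θ:ℂ)*I) * x) (exp ((θ:ℂ)*I)) lam := by
        simpa using (hasDerivAt_id lam).const_mul (exp ((θ:ℂ)*I))
      have h2 : HasDerivAt φ (deriv φ (exp ((θ:ℂ)*I) * lam)) (exp ((θ:ℂ)*I) * lam) :=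
        (hφ.differentiableAt (isOpen_ball.mem_nhds hzR)).hasDerivAt
      have h3 : HasDerivAt (fun x : ℂ => φ (exp ((θ:ℂ)*I) * x))
          (exp ((θ:ℂ)*I) • deriv φ (exp ((θ:ℂ)*I) * lam)) lam := by
        simpa [Function.comp_def] using h2.scomp_of_eq lam h1 rfl
      have h4 := h3.const_smul (exp (-(θ:ℂ)*I))
      have h5 : exp (-(θ:ℂ)*I) • (exp ((θ:ℂ)*I) • deriv φ (exp ((θ:ℂ)*I) * lam))
          = deriv φ (exp ((θ:ℂ)*I) * lam) := by
        rw [smul_smul, ← Complex.exp_add, show (-(θ:ℂ)*I + (θ:ℂ)*I) = 0 by ring,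
          Complex.exp_zero, one_smul]
      rw [h5] at h4
      have hp : exp (-(θ:ℂ)*I) • φ (exp ((θ:ℂ)*I) * lam) ∈ D₂ :=
        hKD₂ (hargK θ (hmemball lam hlam).le)
      have h6 : HasFDerivAt f (fderiv ℂ f (exp (-(θ:ℂ)*I) • φ (exp ((θ:ℂ)*I) * lam)))
          (exp (-(θ:ℂ)*I) • φ (exp ((θ:ℂ)*I) * lam)) :=
        (hf.differentiableAt (hD₂open.mem_nhds hp)).hasFDerivAt
      exact h6.comp_hasDerivAt lam h4
    have hboundu : ∀ (θ:ℝ), ∀ lam ∈ ball lam₀ ε', ‖F' lam θ‖ ≤ C₁ * C₂ := by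
      intro θ lam hlam
      have hzr : ‖exp ((θ:ℂ)*I) * lam‖ ≤ r := by
        rw [norm_mul, hexp1, one_mul]; exact (hmemball lam hlam).le
      have hp : exp (-(θ:ℂ)*I) • φ (exp ((θ:ℂ)*I) * lam) ∈ K :=
        hargK θ (hmemball lam hlam).le
      calc ‖F' lam θ‖ ≤ ‖fderiv ℂ f (exp (-(θ:ℂ)*I) • φ (exp ((θ:ℂ)*I) * lam))‖ *
          ‖deriv φ (exp ((θ:ℂ)*I) * lam)‖ := ContinuousLinearMap.le_opNorm _ _
      _ ≤ C₁ * C₂ := mul_le_mul (hC₁ _ hp) (hC₂ _ (mem_closedBall_zero_iff.mpr hzr))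
          (norm_nonneg _) hC₁0
    have hmeasF : ∀ᶠ lam in 𝓝 lam₀, AEStronglyMeasurable (fun θ => u θ lam)
        (volume.restrict (Set.uIoc (0:ℝ) (2*π))) := by
      refine Filter.eventually_of_mem (Metric.ball_mem_nhds lam₀ hε'pos) ?_
      intro lam hlam
      exact (hucont (hmemball lam hlam).le).aestronglyMeasurable
    have hintF : IntervalIntegrable (fun θ => u θ lam₀) volume 0 (2*π) :=
      (hucont (hmemball lam₀ (mem_ball_self hε'pos)).le).intervalIntegrable _ _
    have hlam₀r : ‖lam₀‖ < r := hmemball lam₀ (mem_ball_self hε'pos)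
    have hmeasF' : AEStronglyMeasurable (fun θ => F' lam₀ θ)
        (volume.restrict (Set.uIoc (0:ℝ) (2*π))) := by
      have hpcont : Continuous (fun θ : ℝ => exp (-(θ:ℂ)*I) • φ (exp ((θ:ℂ)*I) * lam₀)) :=
        hinner_cont lam₀ hlam₀r.le
      have hecont : Continuous (fun θ : ℝ => exp ((θ:ℂ)*I) * lam₀) :=
        (Complex.continuous_exp.comp (Complex.continuous_ofReal.mul continuous_const)).mul
          continuous_const
      have hvcont : Continuous (fun θ : ℝ => deriv φ (exp ((θ:ℂ)*I) * lam₀)) := by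
        refine hdφcont.comp_continuous hecont ?_
        intro θ
        exact mem_ball_zero_iff.mpr
          (by rw [norm_mul, hexp1, one_mul]; exact hlam₀r.trans hrR)
      have hAmeas : Measurable
          (fun θ : ℝ => fderiv ℂ f (exp (-(θ:ℂ)*I) • φ (exp ((θ:ℂ)*I) * lam₀))) :=
        (measurable_fderiv ℂ f).comp hpcont.measurable
      have hmeas : Measurable (fun θ => F' lam₀ θ) := by
        have happly : Measurable
            (fun p : ((Fin n → ℂ) →L[ℂ] (Fin n → ℂ)) × (Fin n → ℂ) => p.1 p.2) :=
          isBoundedBilinearMap_apply.continuous.measurable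
        exact happly.comp (hAmeas.prodMk hvcont.measurable)
      exact hmeas.aestronglyMeasurable
    have hder := intervalIntegral.hasDerivAt_integral_of_dominated_loc_of_deriv_le (Metric.ball_mem_nhds lam₀ hε'pos)
      hmeasF hintF hmeasF'
      (Filter.Eventually.of_forall (fun θ _ lam hlam => hboundu θ lam hlam))
      intervalIntegrable_const
      (Filter.Eventually.of_forall (fun θ _ lam hlam => hdiffu θ lam hlam))
    exact (hder.2.const_smul ((2*π:ℝ))⁻¹).differentiableAt
  -- Step A4 : identity theorem
  set X : Fin n → ℂ := g0 0 with hXdef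
  have hX_in : ∀ lam : ℂ, ‖lam‖ < δ → lam • X ∈ D₂ := fun lam hlam =>
    hsmul_mem hlam (by simpa using hr0.le)
  have hΦG : ∀ {lam : ℂ}, ‖lam‖ ≤ r → Φ lam ∈ G := fun h => hSG (hΦS h)
  have hηdiff : DifferentiableOn ℂ (fun lam => g (Φ lam)) (ball 0 r') :=
    hg.comp hΦdiff (fun lam hlam =>
      hΦG (le_of_lt ((mem_ball_zero_iff.mp hlam).trans hr'r)))
  have hι : Differentiable ℂ (fun lam : ℂ => lam • X) := differentiable_id.smul_const X
  have heq : EqOn (fun lam => g (Φ lam)) (fun lam : ℂ => lam • X) (ball 0 r') := by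
    apply AnalyticOnNhd.eqOn_of_preconnected_of_eventuallyEq
      (hηdiff.analyticOnNhd isOpen_ball)
      (hι.differentiableOn.analyticOnNhd isOpen_ball)
      (convex_ball (0:ℂ) r').isPreconnected
      (mem_ball_self (by linarith : (0:ℝ) < r'))
    refine Filter.eventuallyEq_of_mem (Metric.ball_mem_nhds (0:ℂ) hδpos) ?_
    intro lam hlam
    have hlam' : ‖lam‖ < δ := mem_ball_zero_iff.mp hlam
    show g (Φ lam) = lam • X
    rw [hsmall hlam']
    exact hgf _ (hX_in lam hlam')
  have h1mem : (1:ℂ) ∈ ball (0:ℂ) r' := mem_ball_zero_iff.mpr (by simpa using hr'1)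
  have h1eq := heq h1mem
  have hΦ1 : Φ 1 ∈ G := hΦG (by simpa using hr1.le)
  have hXD₂ : X ∈ D₂ := by
    have h2 := hgD₂ hΦ1
    rwa [show g (Φ 1) = X by simpa using h1eq] at h2
  rw [hX]
  exact hD₂D hXD₂

/-- a balanced domain `D ⊆ ℂⁿ` belongs to the class `𝓔`
if and only if `D` is convex. -/
theorem balanced_classE_iff_convex {n : ℕ} (D : Set (Fin n → ℂ))
    (hDopen : IsOpen D) (hDconn : IsConnected D)
    (hbal : ∀ lam : ℂ, ‖lam‖ ≤ 1 → ∀ z ∈ D, lam • z ∈ D) :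
    ClassE D ↔ Convex ℝ D := by
  constructor
  · intro hE
    intro x hx y hy a b ha hb hab
    -- a bit of room around `x` and `y`
    have hUx : IsOpen {c : ℂ | c • x ∈ D} := hDopen.preimage (continuous_id.smul continuous_const)
    have hUy : IsOpen {c : ℂ | c • y ∈ D} := hDopen.preimage (continuous_id.smul continuous_const)
    obtain ⟨dx, hdxpos, hdx⟩ := Metric.isOpen_iff.mp hUx 1 (by simp [one_smul]; exact hx)
    obtain ⟨dy, hdypos, hdy⟩ := Metric.isOpen_iff.mp hUy 1 (by simp [one_smul]; exact hy)
    set d : ℝ := min dx dy with hddef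
    have hdpos : 0 < d := lt_min hdxpos hdypos
    set R : ℝ := 1 + d/2 with hRdef
    have hR : 1 < R := by rw [hRdef]; linarith
    set c : ℂ := ((R : ℝ) : ℂ) with hcdef
    have hcnorm : ‖c‖ = R := by
      rw [hcdef, Complex.norm_real, Real.norm_eq_abs, abs_of_pos (by linarith)]
    have hcne : c ≠ 0 := by
      intro h
      rw [h] at hcnorm
      simp at hcnorm
      linarith
    have hcx : c • x ∈ D := by
      apply hdx
      rw [mem_ball, dist_eq_norm, hcdef]
      have : ((R:ℝ):ℂ) - 1 = ((d/2 : ℝ) : ℂ) := by rw [hRdef]; push_cast; ring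
      rw [this, Complex.norm_real, Real.norm_eq_abs, abs_of_pos (by linarith)]
      calc d/2 < d := by linarith
      _ ≤ dx := min_le_left _ _
    have hcy : c • y ∈ D := by
      apply hdy
      rw [mem_ball, dist_eq_norm, hcdef]
      have : ((R:ℝ):ℂ) - 1 = ((d/2 : ℝ) : ℂ) := by rw [hRdef]; push_cast; ring
      rw [this, Complex.norm_real, Real.norm_eq_abs, abs_of_pos (by linarith)]
      calc d/2 < d := by linarith
      _ ≤ dy := min_le_right _ _
    -- the compact set
    set K₁ : Set (Fin n → ℂ) := (fun μ : ℂ => μ • (c • x)) '' closedBall 0 1 ∪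
      (fun μ : ℂ => μ • (c • y)) '' closedBall 0 1 with hK₁def
    have hK₁comp : IsCompact K₁ :=
      ((isCompact_closedBall _ _).image (continuous_id.smul continuous_const)).union
        ((isCompact_closedBall _ _).image (continuous_id.smul continuous_const))
    have hK₁D : K₁ ⊆ D := by
      rintro _ (⟨μ, hμ, rfl⟩ | ⟨μ, hμ, rfl⟩)
      · exact hbal μ (mem_closedBall_zero_iff.mp hμ) _ hcx
      · exact hbal μ (mem_closedBall_zero_iff.mp hμ) _ hcy
    obtain ⟨D₁, hK₁D₁, hD₁D, hD₁open, -, G₁, hG₁open, hG₁conv, f₁, g₁, hf₁, hg₁, hf₁G, hg₁D₁,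
      hg₁f₁, hf₁g₁⟩ := hE K₁ hK₁comp hK₁D
    have hmemx : ∀ {lam : ℂ}, ‖lam‖ < R → lam • x ∈ K₁ := by
      intro lam hlam
      refine Or.inl ⟨lam / c, mem_closedBall_zero_iff.mpr ?_, ?_⟩
      · rw [norm_div, hcnorm]
        rw [div_le_one (by linarith)]
        exact hlam.le
      · show (lam / c) • (c • x) = lam • x
        rw [smul_smul, div_mul_cancel₀ _ hcne]
    have hmemy : ∀ {lam : ℂ}, ‖lam‖ < R → lam • y ∈ K₁ := by
      intro lam hlam
      refine Or.inr ⟨lam / c, mem_closedBall_zero_iff.mpr ?_, ?_⟩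
      · rw [norm_div, hcnorm]
        rw [div_le_one (by linarith)]
        exact hlam.le
      · show (lam / c) • (c • y) = lam • y
        rw [smul_smul, div_mul_cancel₀ _ hcne]
    set φ : ℂ → (Fin n → ℂ) := fun lam => g₁ (a • f₁ (lam • x) + b • f₁ (lam • y)) with hφdef
    have hcomb : ∀ {lam : ℂ}, ‖lam‖ < R → a • f₁ (lam • x) + b • f₁ (lam • y) ∈ G₁ :=
      fun h => hG₁conv (hf₁G (hK₁D₁ (hmemx h))) (hf₁G (hK₁D₁ (hmemy h))) ha hb hab
    have hmapsφ : MapsTo φ (ball 0 R) D := fun lam hlam =>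
      hD₁D (hg₁D₁ (hcomb (mem_ball_zero_iff.mp hlam)))
    have hdiffφ : DifferentiableOn ℂ φ (ball 0 R) := by
      have hin1 : DifferentiableOn ℂ (fun lam : ℂ => f₁ (lam • x)) (ball 0 R) :=
        hf₁.comp ((differentiable_id.smul_const x).differentiableOn)
          (fun lam hlam => hK₁D₁ (hmemx (mem_ball_zero_iff.mp hlam)))
      have hin2 : DifferentiableOn ℂ (fun lam : ℂ => f₁ (lam • y)) (ball 0 R) :=
        hf₁.comp ((differentiable_id.smul_const y).differentiableOn)
          (fun lam hlam => hK₁D₁ (hmemy (mem_ball_zero_iff.mp hlam)))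
      exact hg₁.comp ((hin1.const_smul a).add (hin2.const_smul b))
        (fun lam hlam => hcomb (mem_ball_zero_iff.mp hlam))
    have h0K₁ : (0 : Fin n → ℂ) ∈ K₁ := Or.inl ⟨0, by simp, by simp⟩
    have h0D₁ : (0 : Fin n → ℂ) ∈ D₁ := hK₁D₁ h0K₁
    have hφ0 : φ 0 = 0 := by
      rw [hφdef]
      simp only [zero_smul, Convex.combo_self hab]
      exact hg₁f₁ 0 h0D₁
    -- the derivative of φ at 0
    have hf₁at : DifferentiableAt ℂ f₁ 0 := hf₁.differentiableAt (hD₁open.mem_nhds h0D₁)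
    set L := fderiv ℂ f₁ 0 with hLdef
    have hfx : HasDerivAt (fun lam : ℂ => f₁ (lam • x)) (L x) 0 := by
      have h1 : HasDerivAt (fun lam : ℂ => lam • x) x 0 := by
        simpa using (hasDerivAt_id (0:ℂ)).smul_const x
      have h2 : HasFDerivAt f₁ L ((0:ℂ) • x) := by
        rw [zero_smul]; exact hf₁at.hasFDerivAt
      exact h2.comp_hasDerivAt 0 h1
    have hfy : HasDerivAt (fun lam : ℂ => f₁ (lam • y)) (L y) 0 := by
      have h1 : HasDerivAt (fun lam : ℂ => lam • y) y 0 := by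
        simpa using (hasDerivAt_id (0:ℂ)).smul_const y
      have h2 : HasFDerivAt f₁ L ((0:ℂ) • y) := by
        rw [zero_smul]; exact hf₁at.hasFDerivAt
      exact h2.comp_hasDerivAt 0 h1
    have hsum : HasDerivAt (fun lam : ℂ => a • f₁ (lam • x) + b • f₁ (lam • y))
        (a • L x + b • L y) 0 := (hfx.const_smul a).add (hfy.const_smul b)
    have hf₁0G : f₁ 0 ∈ G₁ := hf₁G h0D₁
    have hg₁at : DifferentiableAt ℂ g₁ (f₁ 0) := hg₁.differentiableAt (hG₁open.mem_nhds hf₁0G)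
    set L' := fderiv ℂ g₁ (f₁ 0) with hL'def
    have hg₁fd : HasFDerivAt g₁ L' (a • f₁ ((0:ℂ) • x) + b • f₁ ((0:ℂ) • y)) := by
      rw [zero_smul, zero_smul, Convex.combo_self hab]
      exact hg₁at.hasFDerivAt
    have hφder : HasDerivAt φ (L' (a • L x + b • L y)) 0 := hg₁fd.comp_hasDerivAt 0 hsum
    have hLL : ∀ v, L' (L v) = v := by
      intro v
      have hid : (fun z => g₁ (f₁ z)) =ᶠ[𝓝 (0 : Fin n → ℂ)] id := by
        refine Filter.eventually_of_mem (hD₁open.mem_nhds h0D₁) ?_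
        intro z hz
        exact hg₁f₁ z hz
      have hcomp : HasFDerivAt (fun z => g₁ (f₁ z)) (L'.comp L) 0 :=
        hg₁at.hasFDerivAt.comp 0 hf₁at.hasFDerivAt
      have hid' : HasFDerivAt (id : (Fin n → ℂ) → (Fin n → ℂ)) (L'.comp L) 0 :=
        hcomp.congr_of_eventuallyEq hid.symm
      have huniq := hid'.unique (hasFDerivAt_id 0)
      calc L' (L v) = (L'.comp L) v := rfl
      _ = (ContinuousLinearMap.id ℂ _) v := by rw [huniq]
      _ = v := rfl
    have hder0 : deriv φ 0 = a • x + b • y := by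
      rw [hφder.deriv, map_add, ContinuousLinearMap.map_smul_of_tower,
        ContinuousLinearMap.map_smul_of_tower, hLL, hLL]
    have hkey := key_lemma hDopen hbal hE hR hdiffφ hmapsφ hφ0
    rwa [hder0] at hkey
  · intro hconv
    intro K hK hKD
    exact ⟨D, hKD, subset_rfl, hDopen, hDconn, D, hDopen, hconv, _root_.id, _root_.id,
      differentiableOn_id, differentiableOn_id, Set.mapsTo_id D, Set.mapsTo_id D,
      fun z _ => rfl, fun w _ => rfl⟩
end

section
/- Let m = ⌊n/2⌋ and let G_n ⊆ ℂ^{n−m} be the set of tuples (a_{m+1},…,a_n) such that all complex zeroes of the polynomial f(ζ) = ζⁿ + Σ_{j=m+1}^{n} a_j ζ^{n−j} lie in the open unit disc 𝔻. Then for every n ≥ 3 the set G_n is not convex. -/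
set_option maxHeartbeats 1000000

namespace GnNotConvexAux

open Finset in
lemma sum_two {k : ℕ} (i₁ i₂ : Fin k) (hne : i₁ ≠ i₂) (u v : ℂ) (E : Fin k → ℕ) (ζ : ℂ) :
    ∑ i : Fin k, (if i = i₁ then u else if i = i₂ then v else 0) * ζ ^ (E i)
      = u * ζ ^ (E i₁) + v * ζ ^ (E i₂) := by
  have h : ∀ i : Fin k, (if i = i₁ then u else if i = i₂ then v else 0) * ζ ^ (E i)
      = (if i = i₁ then u * ζ ^ (E i₁) else 0) + (if i = i₂ then v * ζ ^ (E i₂) else 0) := by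
    intro i
    by_cases h1 : i = i₁
    · subst h1; simp [hne]
    · by_cases h2 : i = i₂
      · subst h2; simp [Ne.symm hne]
      · simp [h1, h2]
  rw [Finset.sum_congr rfl (fun i _ => h i), Finset.sum_add_distrib]
  simp

lemma pow_norm_lt {d : ℕ} {ζ r : ℂ} (hr : ‖r‖ < 1) (h : ζ ^ d = r) : ‖ζ‖ < 1 := by
  by_contra hc
  push_neg at hc
  have : (1:ℝ) ≤ ‖ζ‖ ^ d := one_le_pow₀ hc
  rw [← norm_pow, h] at this
  linarith

lemma norm_lt_one_of {z : ℂ} (h : z.re^2 + z.im^2 < 1) : ‖z‖ < 1 := by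
  have h2 : ‖z‖^2 = z.re^2 + z.im^2 := by
    rw [Complex.sq_norm, Complex.normSq_apply]; ring
  nlinarith [norm_nonneg z]

lemma cubic_mem (d e₂ : ℕ) (hd : 1 ≤ d) (r₁ r₂ r₃ : ℂ) (hsum : r₁ + r₂ + r₃ = 0)
    (h1 : ‖r₁‖ < 1) (h2 : ‖r₂‖ < 1) (h3 : ‖r₃‖ < 1) (ζ : ℂ)
    (hζ : ζ ^ (e₂ + 3 * d)
      + ((r₁*r₂ + r₁*r₃ + r₂*r₃) * ζ ^ (e₂ + d) + (-(r₁*r₂*r₃)) * ζ ^ e₂) = 0) :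
    ‖ζ‖ < 1 := by
  by_cases hζ0 : ζ = 0
  · subst hζ0; simp
  · have expand : ζ ^ (e₂ + 3 * d)
        + ((r₁*r₂ + r₁*r₃ + r₂*r₃) * ζ ^ (e₂ + d) + (-(r₁*r₂*r₃)) * ζ ^ e₂)
        = ζ ^ e₂ * ((ζ^d - r₁) * ((ζ^d - r₂) * (ζ^d - r₃))) := by
      rw [pow_add, pow_add, pow_mul]
      linear_combination (ζ^e₂ * (ζ^d)^2) * hsum
    rw [expand] at hζ
    rcases mul_eq_zero.mp hζ with h | h
    · exact absurd (pow_eq_zero_iff'.mp h).1 hζ0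
    · rcases mul_eq_zero.mp h with h | h
      · exact pow_norm_lt h1 (sub_eq_zero.mp h)
      · rcases mul_eq_zero.mp h with h | h
        · exact pow_norm_lt h2 (sub_eq_zero.mp h)
        · exact pow_norm_lt h3 (sub_eq_zero.mp h)

lemma quartic_mem (d e₂ : ℕ) (hd : 1 ≤ d) (r₁ r₂ r₃ r₄ : ℂ) (hsum : r₁ + r₂ + r₃ + r₄ = 0)
    (hpair : r₁*r₂ + r₁*r₃ + r₁*r₄ + r₂*r₃ + r₂*r₄ + r₃*r₄ = 0)
    (h1 : ‖r₁‖ < 1) (h2 : ‖r₂‖ < 1) (h3 : ‖r₃‖ < 1) (h4 : ‖r₄‖ < 1) (ζ : ℂ)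
    (hζ : ζ ^ (e₂ + 4 * d)
      + ((-(r₁*r₂*r₃ + r₁*r₂*r₄ + r₁*r₃*r₄ + r₂*r₃*r₄)) * ζ ^ (e₂ + d)
         + (r₁*r₂*r₃*r₄) * ζ ^ e₂) = 0) :
    ‖ζ‖ < 1 := by
  by_cases hζ0 : ζ = 0
  · subst hζ0; simp
  · have expand : ζ ^ (e₂ + 4 * d)
        + ((-(r₁*r₂*r₃ + r₁*r₂*r₄ + r₁*r₃*r₄ + r₂*r₃*r₄)) * ζ ^ (e₂ + d)
          + (r₁*r₂*r₃*r₄) * ζ ^ e₂)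
        = ζ ^ e₂ * ((ζ^d - r₁) * ((ζ^d - r₂) * ((ζ^d - r₃) * (ζ^d - r₄)))) := by
      rw [pow_add, pow_add, pow_mul]
      linear_combination (ζ^e₂ * (ζ^d)^3) * hsum - (ζ^e₂ * (ζ^d)^2) * hpair
    rw [expand] at hζ
    rcases mul_eq_zero.mp hζ with h | h
    · exact absurd (pow_eq_zero_iff'.mp h).1 hζ0
    · rcases mul_eq_zero.mp h with h | h
      · exact pow_norm_lt h1 (sub_eq_zero.mp h)
      · rcases mul_eq_zero.mp h with h | h
        · exact pow_norm_lt h2 (sub_eq_zero.mp h)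
        · rcases mul_eq_zero.mp h with h | h
          · exact pow_norm_lt h3 (sub_eq_zero.mp h)
          · exact pow_norm_lt h4 (sub_eq_zero.mp h)

lemma branch (n : ℕ) (hn : 3 ≤ n)
    (hconv : Convex ℝ {a : Fin (n - n / 2) → ℂ |
        ∀ ζ : ℂ, ζ ^ n + ∑ i : Fin (n - n / 2), a i * ζ ^ (n - (n / 2 + 1 + i.val)) = 0 →
          ‖ζ‖ < 1})
    (d e₂ : ℕ) (hd : 1 ≤ d) (he : e₂ + d ≤ n - n / 2 - 1) (u v : ℂ)
    (hmem : ∀ ζ : ℂ, ζ ^ n + (u * ζ ^ (e₂ + d) + v * ζ ^ e₂) = 0 → ‖ζ‖ < 1)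
    (hmem' : ∀ ζ : ℂ, ζ ^ n + ((starRingEnd ℂ) u * ζ ^ (e₂ + d) + (starRingEnd ℂ) v * ζ ^ e₂) = 0 →
      ‖ζ‖ < 1)
    (hre : 1 + u.re + v.re < 0) (hα : |u.re| ≤ 1) (hβ : |v.re| ≤ 1) : False := by
  have hk : 2 ≤ n - n / 2 := by omega
  have hi₁lt : n - n / 2 - 1 - (e₂ + d) < n - n / 2 := by omega
  have hi₂lt : n - n / 2 - 1 - e₂ < n - n / 2 := by omega
  set i₁ : Fin (n - n / 2) := ⟨n - n / 2 - 1 - (e₂ + d), hi₁lt⟩ with hi₁def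
  set i₂ : Fin (n - n / 2) := ⟨n - n / 2 - 1 - e₂, hi₂lt⟩ with hi₂def
  have hne : i₁ ≠ i₂ := by
    apply Fin.ne_of_val_ne
    simp only [hi₁def, hi₂def]
    omega
  have hE₁ : n - (n / 2 + 1 + i₁.val) = e₂ + d := by
    simp only [hi₁def]; omega
  have hE₂ : n - (n / 2 + 1 + i₂.val) = e₂ := by
    simp only [hi₂def]; omega
  have m₁ : (fun i => if i = i₁ then u else if i = i₂ then v else 0) ∈
      {a : Fin (n - n / 2) → ℂ |
        ∀ ζ : ℂ, ζ ^ n + ∑ i : Fin (n - n / 2), a i * ζ ^ (n - (n / 2 + 1 + i.val)) = 0 →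
          ‖ζ‖ < 1} := by
    intro ζ hζ
    rw [sum_two i₁ i₂ hne u v (fun i => n - (n / 2 + 1 + i.val)) ζ] at hζ
    simp only [hE₁, hE₂] at hζ
    exact hmem ζ hζ
  have m₂ : (fun i => if i = i₁ then (starRingEnd ℂ) u else if i = i₂ then (starRingEnd ℂ) v else 0) ∈
      {a : Fin (n - n / 2) → ℂ |
        ∀ ζ : ℂ, ζ ^ n + ∑ i : Fin (n - n / 2), a i * ζ ^ (n - (n / 2 + 1 + i.val)) = 0 →
          ‖ζ‖ < 1} := by
    intro ζ hζ
    rw [sum_two i₁ i₂ hne _ _ (fun i => n - (n / 2 + 1 + i.val)) ζ] at hζ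
    simp only [hE₁, hE₂] at hζ
    exact hmem' ζ hζ
  have hmid := hconv m₁ m₂ (by norm_num : (0:ℝ) ≤ 1/2) (by norm_num : (0:ℝ) ≤ 1/2)
    (by norm_num : (1/2 : ℝ) + 1/2 = 1)
  have hne' : i₂ ≠ i₁ := Ne.symm hne
  have midid : ((1/2 : ℝ) • (fun i => if i = i₁ then u else if i = i₂ then v else 0)
      + (1/2 : ℝ) • (fun i => if i = i₁ then (starRingEnd ℂ) u else if i = i₂ then (starRingEnd ℂ) v else 0) : Fin (n - n/2) → ℂ)
      = fun i => if i = i₁ then ((u.re : ℝ) : ℂ) else if i = i₂ then ((v.re : ℝ) : ℂ) else 0 := by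
    funext i
    simp only [Pi.add_apply, Pi.smul_apply]
    by_cases h1 : i = i₁
    · simp only [h1, if_pos rfl]
      apply Complex.ext <;>
        simp [Complex.real_smul, Complex.mul_re, Complex.mul_im] <;> ring
    · by_cases h2 : i = i₂
      · simp only [h1, h2, if_neg hne', if_false, if_pos rfl]
        apply Complex.ext <;>
          simp [Complex.real_smul, Complex.mul_re, Complex.mul_im, hne'] <;> ring
      · simp [h1, h2]
  rw [midid] at hmid
  have hcont : Continuous (fun x : ℝ => x ^ n + (u.re * x ^ (e₂ + d) + v.re * x ^ e₂)) := by
    apply Continuous.add (continuous_pow n)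
    exact Continuous.add (continuous_const.mul (continuous_pow _)) (continuous_const.mul (continuous_pow _))
  have hG1 : (1:ℝ) ^ n + (u.re * 1 ^ (e₂ + d) + v.re * 1 ^ e₂) < 0 := by
    simp; linarith
  have hG2 : (0:ℝ) ≤ (2:ℝ) ^ n + (u.re * 2 ^ (e₂ + d) + v.re * 2 ^ e₂) := by
    have hp : (0:ℝ) < 2 ^ (n-2) := by positivity
    have h1 : (2:ℝ) ^ (e₂ + d) ≤ 2 ^ (n-2) := by
      apply pow_le_pow_right₀ (by norm_num)
      omega
    have h2 : (2:ℝ) ^ e₂ ≤ 2 ^ (n-2) := by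
      apply pow_le_pow_right₀ (by norm_num)
      omega
    have h3 : (2:ℝ) ^ n = 2 ^ (n-2) * 2 ^ 2 := by
      rw [← pow_add]
      congr 1
      omega
    have hpa : (0:ℝ) < 2 ^ (e₂ + d) := by positivity
    have hpb : (0:ℝ) < 2 ^ e₂ := by positivity
    have hα' := abs_le.mp hα
    have hβ' := abs_le.mp hβ
    have ha2 : u.re * 2 ^ (e₂ + d) ≥ -(2 ^ (n-2)) := by nlinarith
    have hb2 : v.re * 2 ^ e₂ ≥ -(2 ^ (n-2)) := by nlinarith
    nlinarith
  obtain ⟨x₀, hx₀mem, hGx₀⟩ := intermediate_value_Icc (by norm_num : (1:ℝ) ≤ 2)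
    hcont.continuousOn ⟨le_of_lt hG1, hG2⟩
  have hx₀1 : (1:ℝ) ≤ x₀ := hx₀mem.1
  have hCeq : (x₀ : ℂ) ^ n + (((u.re : ℝ) : ℂ) * (x₀:ℂ) ^ (e₂ + d) + ((v.re : ℝ) : ℂ) * (x₀:ℂ) ^ e₂) = 0 := by
    have h := congrArg (Complex.ofReal) hGx₀
    push_cast at h
    exact h
  have hlt : ‖(x₀ : ℂ)‖ < 1 := by
    apply hmid (x₀ : ℂ)
    rw [sum_two i₁ i₂ hne _ _ (fun i => n - (n / 2 + 1 + i.val)) (x₀:ℂ)]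
    simp only [hE₁, hE₂]
    exact hCeq
  rw [Complex.norm_real, Real.norm_eq_abs] at hlt
  rw [abs_of_nonneg (by linarith)] at hlt
  linarith

-- cubic witness roots
noncomputable def c1 : ℂ := Complex.ofReal (178/179) + Complex.ofReal (-13/179) * Complex.I
noncomputable def c2 : ℂ := Complex.ofReal (-27/179) + Complex.ofReal (-83/179) * Complex.I
noncomputable def c3 : ℂ := Complex.ofReal (-151/179) + Complex.ofReal (96/179) * Complex.I

lemma c_sum : c1 + c2 + c3 = 0 := by
  simp only [c1, c2, c3, Complex.ext_iff, Complex.add_re, Complex.add_im, Complex.mul_re,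
    Complex.mul_im, Complex.ofReal_re, Complex.ofReal_im, Complex.I_re, Complex.I_im,
    Complex.zero_re, Complex.zero_im]
  norm_num

lemma c1_norm : ‖c1‖ < 1 := by
  apply norm_lt_one_of
  simp only [c1, Complex.add_re, Complex.add_im, Complex.mul_re, Complex.mul_im,
    Complex.ofReal_re, Complex.ofReal_im, Complex.I_re, Complex.I_im]
  norm_num

lemma c2_norm : ‖c2‖ < 1 := by
  apply norm_lt_one_of
  simp only [c2, Complex.add_re, Complex.add_im, Complex.mul_re, Complex.mul_im,
    Complex.ofReal_re, Complex.ofReal_im, Complex.I_re, Complex.I_im]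
  norm_num

lemma c3_norm : ‖c3‖ < 1 := by
  apply norm_lt_one_of
  simp only [c3, Complex.add_re, Complex.add_im, Complex.mul_re, Complex.mul_im,
    Complex.ofReal_re, Complex.ofReal_im, Complex.I_re, Complex.I_im]
  norm_num

lemma c_re_neg : 1 + (c1*c2 + c1*c3 + c2*c3).re + (-(c1*c2*c3)).re < 0 := by
  simp only [c1, c2, c3, Complex.add_re, Complex.add_im, Complex.mul_re, Complex.mul_im,
    Complex.neg_re, Complex.ofReal_re, Complex.ofReal_im, Complex.I_re, Complex.I_im]
  norm_num

lemma c_u_abs : |(c1*c2 + c1*c3 + c2*c3).re| ≤ 1 := by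
  rw [abs_le]
  simp only [c1, c2, c3, Complex.add_re, Complex.add_im, Complex.mul_re, Complex.mul_im,
    Complex.ofReal_re, Complex.ofReal_im, Complex.I_re, Complex.I_im]
  norm_num

lemma c_v_abs : |(-(c1*c2*c3)).re| ≤ 1 := by
  rw [abs_le]
  simp only [c1, c2, c3, Complex.add_re, Complex.add_im, Complex.mul_re, Complex.mul_im,
    Complex.neg_re, Complex.ofReal_re, Complex.ofReal_im, Complex.I_re, Complex.I_im]
  norm_num

-- quartic witness roots
noncomputable def q1 : ℂ := Complex.ofReal (150338757388926237373/150400068524506387373)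
  + Complex.ofReal (2988899442578518000/150400068524506387373) * Complex.I
noncomputable def q2 : ℂ := Complex.ofReal (-13387743737541726496/150400068524506387373)
  + Complex.ofReal (110112314603278974905/150400068524506387373) * Complex.I
noncomputable def q3 : ℂ := Complex.ofReal (-105596553662228297393/150400068524506387373)
  + Complex.ofReal (33962127732151996460/150400068524506387373) * Complex.I
noncomputable def q4 : ℂ := Complex.ofReal (-31354459989156213484/150400068524506387373)
  + Complex.ofReal (-147063341778009489365/150400068524506387373) * Complex.I

lemma q_sum : q1 + q2 + q3 + q4 = 0 := by
  simp only [q1, q2, q3, q4, Complex.ext_iff, Complex.add_re, Complex.add_im, Complex.mul_re,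
    Complex.mul_im, Complex.ofReal_re, Complex.ofReal_im, Complex.I_re, Complex.I_im,
    Complex.zero_re, Complex.zero_im]
  norm_num

lemma q_pair : q1*q2 + q1*q3 + q1*q4 + q2*q3 + q2*q4 + q3*q4 = 0 := by
  simp only [q1, q2, q3, q4, Complex.ext_iff, Complex.add_re, Complex.add_im, Complex.mul_re,
    Complex.mul_im, Complex.ofReal_re, Complex.ofReal_im, Complex.I_re, Complex.I_im,
    Complex.zero_re, Complex.zero_im]
  norm_num

lemma q1_norm : ‖q1‖ < 1 := by
  apply norm_lt_one_of
  simp only [q1, Complex.add_re, Complex.add_im, Complex.mul_re, Complex.mul_im,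
    Complex.ofReal_re, Complex.ofReal_im, Complex.I_re, Complex.I_im]
  norm_num

lemma q2_norm : ‖q2‖ < 1 := by
  apply norm_lt_one_of
  simp only [q2, Complex.add_re, Complex.add_im, Complex.mul_re, Complex.mul_im,
    Complex.ofReal_re, Complex.ofReal_im, Complex.I_re, Complex.I_im]
  norm_num

lemma q3_norm : ‖q3‖ < 1 := by
  apply norm_lt_one_of
  simp only [q3, Complex.add_re, Complex.add_im, Complex.mul_re, Complex.mul_im,
    Complex.ofReal_re, Complex.ofReal_im, Complex.I_re, Complex.I_im]
  norm_num

lemma q4_norm : ‖q4‖ < 1 := by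
  apply norm_lt_one_of
  simp only [q4, Complex.add_re, Complex.add_im, Complex.mul_re, Complex.mul_im,
    Complex.ofReal_re, Complex.ofReal_im, Complex.I_re, Complex.I_im]
  norm_num

lemma q_re_neg :
    1 + (-(q1*q2*q3 + q1*q2*q4 + q1*q3*q4 + q2*q3*q4)).re + (q1*q2*q3*q4).re < 0 := by
  simp only [q1, q2, q3, q4, Complex.add_re, Complex.add_im, Complex.mul_re, Complex.mul_im,
    Complex.neg_re, Complex.ofReal_re, Complex.ofReal_im, Complex.I_re, Complex.I_im]
  norm_num

lemma q_u_abs : |(-(q1*q2*q3 + q1*q2*q4 + q1*q3*q4 + q2*q3*q4)).re| ≤ 1 := by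
  rw [abs_le]
  simp only [q1, q2, q3, q4, Complex.add_re, Complex.add_im, Complex.mul_re, Complex.mul_im,
    Complex.neg_re, Complex.ofReal_re, Complex.ofReal_im, Complex.I_re, Complex.I_im]
  norm_num

lemma q_v_abs : |(q1*q2*q3*q4).re| ≤ 1 := by
  rw [abs_le]
  simp only [q1, q2, q3, q4, Complex.add_re, Complex.add_im, Complex.mul_re, Complex.mul_im,
    Complex.ofReal_re, Complex.ofReal_im, Complex.I_re, Complex.I_im]
  norm_num

end GnNotConvexAux

open GnNotConvexAux in
/-- let `m = ⌊n/2⌋` and let `G_n ⊆ ℂ^{n-m}` be the set of tuples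
`(a_{m+1}, …, a_n)` such that all complex zeroes of
`f(ζ) = ζⁿ + Σ_{j=m+1}^{n} a_j ζ^{n-j}` lie in the open unit disc.
Then for every `n ≥ 3` the set `G_n` is not convex. -/
theorem Gn_not_convex (n : ℕ) (hn : 3 ≤ n) :
    ¬ Convex ℝ {a : Fin (n - n / 2) → ℂ |
        ∀ ζ : ℂ, ζ ^ n + ∑ i : Fin (n - n / 2), a i * ζ ^ (n - (n / 2 + 1 + i.val)) = 0 →
          ‖ζ‖ < 1} := by
  intro hconv
  by_cases h458 : n = 4 ∨ n = 5 ∨ n = 8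
  · -- quartic cases
    have hconj_u : (starRingEnd ℂ) (-(q1*q2*q3 + q1*q2*q4 + q1*q3*q4 + q2*q3*q4))
        = -((starRingEnd ℂ q1)*(starRingEnd ℂ q2)*(starRingEnd ℂ q3)
          + (starRingEnd ℂ q1)*(starRingEnd ℂ q2)*(starRingEnd ℂ q4)
          + (starRingEnd ℂ q1)*(starRingEnd ℂ q3)*(starRingEnd ℂ q4)
          + (starRingEnd ℂ q2)*(starRingEnd ℂ q3)*(starRingEnd ℂ q4)) := by
      simp
    have hconj_v : (starRingEnd ℂ) (q1*q2*q3*q4)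
        = (starRingEnd ℂ q1)*(starRingEnd ℂ q2)*(starRingEnd ℂ q3)*(starRingEnd ℂ q4) := by
      simp
    have hcsum : (starRingEnd ℂ q1) + (starRingEnd ℂ q2) + (starRingEnd ℂ q3) + (starRingEnd ℂ q4) = 0 := by
      rw [← map_add, ← map_add, ← map_add, q_sum, map_zero]
    have hcpair : (starRingEnd ℂ q1)*(starRingEnd ℂ q2) + (starRingEnd ℂ q1)*(starRingEnd ℂ q3)
        + (starRingEnd ℂ q1)*(starRingEnd ℂ q4) + (starRingEnd ℂ q2)*(starRingEnd ℂ q3)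
        + (starRingEnd ℂ q2)*(starRingEnd ℂ q4) + (starRingEnd ℂ q3)*(starRingEnd ℂ q4) = 0 := by
      simp only [← map_mul, ← map_add]
      rw [q_pair, map_zero]
    have hq1' : ‖(starRingEnd ℂ) q1‖ < 1 := by rw [RCLike.norm_conj]; exact q1_norm
    have hq2' : ‖(starRingEnd ℂ) q2‖ < 1 := by rw [RCLike.norm_conj]; exact q2_norm
    have hq3' : ‖(starRingEnd ℂ) q3‖ < 1 := by rw [RCLike.norm_conj]; exact q3_norm
    have hq4' : ‖(starRingEnd ℂ) q4‖ < 1 := by rw [RCLike.norm_conj]; exact q4_norm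
    rcases h458 with h | h | h <;> subst h
    · exact branch 4 (by norm_num) hconv 1 0 (by norm_num) (by norm_num) _ _
        (fun ζ hζ => quartic_mem 1 0 le_rfl q1 q2 q3 q4 q_sum q_pair
          q1_norm q2_norm q3_norm q4_norm ζ hζ)
        (fun ζ hζ => by
          rw [hconj_u, hconj_v] at hζ
          exact quartic_mem 1 0 le_rfl _ _ _ _ hcsum hcpair hq1' hq2' hq3' hq4' ζ hζ)
        q_re_neg q_u_abs q_v_abs
    · exact branch 5 (by norm_num) hconv 1 1 (by norm_num) (by norm_num) _ _
        (fun ζ hζ => quartic_mem 1 1 le_rfl q1 q2 q3 q4 q_sum q_pair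
          q1_norm q2_norm q3_norm q4_norm ζ hζ)
        (fun ζ hζ => by
          rw [hconj_u, hconj_v] at hζ
          exact quartic_mem 1 1 le_rfl _ _ _ _ hcsum hcpair hq1' hq2' hq3' hq4' ζ hζ)
        q_re_neg q_u_abs q_v_abs
    · exact branch 8 (by norm_num) hconv 2 0 (by norm_num) (by norm_num) _ _
        (fun ζ hζ => quartic_mem 2 0 (by norm_num) q1 q2 q3 q4 q_sum q_pair
          q1_norm q2_norm q3_norm q4_norm ζ hζ)
        (fun ζ hζ => by
          rw [hconj_u, hconj_v] at hζ
          exact quartic_mem 2 0 (by norm_num) _ _ _ _ hcsum hcpair hq1' hq2' hq3' hq4' ζ hζ)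
        q_re_neg q_u_abs q_v_abs
  · -- cubic case
    push_neg at h458
    obtain ⟨h4, h5, h8⟩ := h458
    have hd : 1 ≤ n / 3 := by omega
    have hne3 : n = n % 3 + 3 * (n / 3) := by omega
    have he : n % 3 + n / 3 ≤ n - n / 2 - 1 := by omega
    have hconj_u : (starRingEnd ℂ) (c1*c2 + c1*c3 + c2*c3)
        = (starRingEnd ℂ c1)*(starRingEnd ℂ c2) + (starRingEnd ℂ c1)*(starRingEnd ℂ c3)
          + (starRingEnd ℂ c2)*(starRingEnd ℂ c3) := by
      simp
    have hconj_v : (starRingEnd ℂ) (-(c1*c2*c3))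
        = -((starRingEnd ℂ c1)*(starRingEnd ℂ c2)*(starRingEnd ℂ c3)) := by
      simp
    have hcsum : (starRingEnd ℂ c1) + (starRingEnd ℂ c2) + (starRingEnd ℂ c3) = 0 := by
      rw [← map_add, ← map_add, c_sum, map_zero]
    have hc1' : ‖(starRingEnd ℂ) c1‖ < 1 := by rw [RCLike.norm_conj]; exact c1_norm
    have hc2' : ‖(starRingEnd ℂ) c2‖ < 1 := by rw [RCLike.norm_conj]; exact c2_norm
    have hc3' : ‖(starRingEnd ℂ) c3‖ < 1 := by rw [RCLike.norm_conj]; exact c3_norm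
    exact branch n hn hconv (n / 3) (n % 3) hd he _ _
      (fun ζ hζ => by
        nth_rw 1 [hne3] at hζ
        exact cubic_mem (n / 3) (n % 3) hd c1 c2 c3 c_sum c1_norm c2_norm c3_norm ζ hζ)
      (fun ζ hζ => by
        rw [hconj_u, hconj_v] at hζ
        nth_rw 1 [hne3] at hζ
        exact cubic_mem (n / 3) (n % 3) hd _ _ _ hcsum hc1' hc2' hc3' ζ hζ)
      c_re_neg c_u_abs c_v_abs
end

section
/- Every weakly linearly convex balanced domain D ⊆ ℂⁿ is convex. -/
/-- every weakly linearly convex balanced domain `D ⊆ ℂⁿ` is convex.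
Weak linear convexity: through every boundary point `a ∈ ∂D` there passes a complex
affine hyperplane (here `{z | φ z = φ a}` for a nonzero `ℂ`-linear functional `φ`)
disjoint from `D`. -/
theorem weaklyLinearlyConvex_balanced_convex {n : ℕ} (D : Set (Fin n → ℂ))
    (hDopen : IsOpen D) (hDconn : IsConnected D)
    (hbal : ∀ lam : ℂ, ‖lam‖ ≤ 1 → ∀ z ∈ D, lam • z ∈ D)
    (hwlc : ∀ a ∈ frontier D, ∃ φ : (Fin n → ℂ) →ₗ[ℂ] ℂ, φ ≠ 0 ∧
      ∀ z ∈ D, φ z ≠ φ a) :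
    Convex ℝ D := by
  -- 0 ∈ D
  obtain ⟨w₀, hw₀⟩ := hDconn.nonempty
  have h0D : (0 : Fin n → ℂ) ∈ D := by
    have := hbal 0 (by simp) w₀ hw₀
    simpa using this
  intro x hx y hy a b ha hb hab
  by_contra hz
  set z : Fin n → ℂ := a • x + b • y with hzdef
  -- the path r ↦ r • z
  set f : ℝ → (Fin n → ℂ) := fun r => (r : ℂ) • z with hfdef
  have hf : Continuous f := by
    apply Continuous.smul (f := fun r : ℝ => (r : ℂ)) _ continuous_const
    exact Complex.continuous_ofReal
  set S : Set ℝ := {s | s ∈ Set.Icc (0 : ℝ) 1 ∧ f s ∈ D} with hSdef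
  have h0S : (0 : ℝ) ∈ S := by
    refine ⟨⟨le_refl _, zero_le_one⟩, ?_⟩
    simpa [hfdef] using h0D
  have hbdd : BddAbove S := ⟨1, fun s hs => hs.1.2⟩
  set s₀ : ℝ := sSup S with hs₀def
  have hs₀0 : 0 ≤ s₀ := le_csSup hbdd h0S
  have hs₀1 : s₀ ≤ 1 := csSup_le ⟨0, h0S⟩ fun s hs => hs.1.2
  -- f s₀ ∉ D
  have hnotD : f s₀ ∉ D := by
    intro hmem
    have hs₀lt : s₀ < 1 := by
      rcases lt_or_eq_of_le hs₀1 with h | h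
      · exact h
      · exfalso
        apply hz
        have : f s₀ = z := by simp [hfdef, h]
        rwa [this] at hmem
    have hnhds : f ⁻¹' D ∈ nhds s₀ := hf.continuousAt.preimage_mem_nhds (hDopen.mem_nhds hmem)
    obtain ⟨δ, hδ, hball⟩ := Metric.mem_nhds_iff.1 hnhds
    set t : ℝ := min 1 (s₀ + δ / 2) with htdef
    have hts : s₀ < t := lt_min hs₀lt (by linarith)
    have ht1 : t ≤ 1 := min_le_left _ _
    have htS : t ∈ S := by
      refine ⟨⟨le_trans hs₀0 hts.le, ht1⟩, ?_⟩
      apply hball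
      simp only [Metric.mem_ball, Real.dist_eq]
      rw [abs_of_pos (by linarith)]
      have : t ≤ s₀ + δ / 2 := min_le_right _ _
      linarith
    exact absurd (le_csSup hbdd htS) (not_le.2 hts)
  -- f s₀ ∈ closure D
  have hclos : f s₀ ∈ closure D := by
    have h1 : s₀ ∈ closure S := csSup_mem_closure ⟨0, h0S⟩ hbdd
    have h2 : f s₀ ∈ closure (f '' S) :=
      image_closure_subset_closure_image hf (Set.mem_image_of_mem f h1)
    refine closure_mono ?_ h2
    rintro _ ⟨s, hs, rfl⟩
    exact hs.2
  have hfront : f s₀ ∈ frontier D := by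
    rw [frontier, hDopen.interior_eq]
    exact ⟨hclos, hnotD⟩
  obtain ⟨φ, hφne, hφ⟩ := hwlc (f s₀) hfront
  have hφa0 : φ (f s₀) ≠ 0 := by
    intro h
    exact hφ 0 h0D (by simp [h])
  -- key: all points of D are strictly inside the "disc" |φ w| < |φ a|
  have key : ∀ w ∈ D, ‖φ w‖ < ‖φ (f s₀)‖ := by
    intro w hw
    by_contra h
    push_neg at h
    have hw0 : φ w ≠ 0 := by
      intro h0
      rw [h0, norm_zero] at h
      exact hφa0 (norm_le_zero_iff.1 h)
    have hlam : ‖φ (f s₀) / φ w‖ ≤ 1 := by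
      rw [norm_div]
      exact div_le_one_of_le₀ h (norm_nonneg _)
    have hmemD := hbal _ hlam w hw
    apply hφ _ hmemD
    rw [map_smul, smul_eq_mul, div_mul_cancel₀ _ hw0]
  -- compute φ (f s₀) and φ z
  have hφfs : ‖φ (f s₀)‖ = s₀ * ‖φ z‖ := by
    simp [hfdef, map_smul, abs_of_nonneg hs₀0]
  have hφz : φ z = (a : ℂ) * φ x + (b : ℂ) * φ y := by
    have hax : a • x = (a : ℂ) • x := (Complex.coe_smul a x).symm
    have hby : b • y = (b : ℂ) • y := (Complex.coe_smul b y).symm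
    rw [hzdef, hax, hby, map_add, map_smul, map_smul, smul_eq_mul, smul_eq_mul]
  have hznorm : ‖φ z‖ ≤ max ‖φ x‖ ‖φ y‖ := by
    calc ‖φ z‖ ≤ ‖(a : ℂ) * φ x‖ + ‖(b : ℂ) * φ y‖ := by rw [hφz]; exact norm_add_le _ _
    _ = a * ‖φ x‖ + b * ‖φ y‖ := by
        rw [norm_mul, norm_mul, Complex.norm_real, Complex.norm_real,
          Real.norm_of_nonneg ha, Real.norm_of_nonneg hb]
    _ ≤ a * max ‖φ x‖ ‖φ y‖ + b * max ‖φ x‖ ‖φ y‖ := by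
        gcongr
        · exact le_max_left _ _
        · exact le_max_right _ _
    _ = max ‖φ x‖ ‖φ y‖ := by rw [← add_mul, hab, one_mul]
  have hmaxlt : max ‖φ x‖ ‖φ y‖ < ‖φ (f s₀)‖ := max_lt (key x hx) (key y hy)
  have hzlt : ‖φ z‖ < ‖φ (f s₀)‖ := lt_of_le_of_lt hznorm hmaxlt
  rw [hφfs] at hzlt
  nlinarith [norm_nonneg (φ z)]
end

section
/- Let D ⊂ ℂⁿ be a bounded domain with the following property: for each point a ∈ ∂D there exist a neighborhood U_a of a and a holomorphic function f_a on D ∩ U_a such that |f_a(z)| → ∞ as z → a. Then D is a taut domain: for every sequence of holomorphic maps ψ_j : 𝔻 → D there is a subsequence which either converges locally uniformly on 𝔻 to a holomorphic map ψ : 𝔻 → D, or is compactly divergent (for every compact K ⊂ 𝔻 and every compact L ⊂ D one has ψ_j(K) ∩ L = ∅ for all sufficiently large j). In particular D is pseudoconvex. -/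
open Filter Metric Set Topology


variable {E : Type*} [NormedAddCommGroup E] [NormedSpace ℂ E] [ProperSpace E]

lemma lip_bound {c : ℂ} {R M : ℝ} {f : ℂ → E} (hf : DifferentiableOn ℂ f (ball c R))
    (hb : ∀ z ∈ ball c R, ‖f z‖ ≤ M) {ρ : ℝ} (hρR : ρ < R)
    {x y : ℂ} (hx : x ∈ closedBall c ρ) (hy : y ∈ closedBall c ρ) :
    ‖f x - f y‖ ≤ (M / ((R - ρ) / 2)) * ‖x - y‖ := by
  have hδ : 0 < (R - ρ) / 2 := by linarith
  set δ := (R - ρ) / 2 with hδdef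
  have hKB : closedBall c ρ ⊆ ball c R := closedBall_subset_ball hρR
  have hderiv : ∀ z ∈ closedBall c ρ, ‖deriv f z‖ ≤ M / δ := by
    intro z hz
    have hsub : closedBall z δ ⊆ ball c R := by
      intro w hw
      have h1 : dist w z ≤ δ := mem_closedBall.1 hw
      have h2 : dist z c ≤ ρ := mem_closedBall.1 hz
      have : dist w c < R := by
        calc dist w c ≤ dist w z + dist z c := dist_triangle _ _ _
        _ ≤ δ + ρ := add_le_add h1 h2
        _ < R := by rw [hδdef]; linarith
      exact mem_ball.2 this
    have hd : DiffContOnCl ℂ f (ball z δ) :=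
      ⟨hf.mono ((ball_subset_closedBall).trans hsub),
        (hf.continuousOn).mono ((closure_ball_subset_closedBall).trans hsub)⟩
    exact Complex.norm_deriv_le_of_forall_mem_sphere_norm_le hδ hd
      (fun w hw => hb w (hsub (sphere_subset_closedBall hw)))
  have hdiff : ∀ z ∈ closedBall c ρ, DifferentiableAt ℂ f z := fun z hz =>
    hf.differentiableAt (isOpen_ball.mem_nhds (hKB hz))
  exact (convex_closedBall c ρ).norm_image_sub_le_of_norm_deriv_le hdiff hderiv hy hx

lemma montel {c : ℂ} {R : ℝ} (hR : 0 < R) {f : ℕ → ℂ → E} {M : ℝ}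
    (hf : ∀ j, DifferentiableOn ℂ (f j) (ball c R))
    (hb : ∀ j, ∀ z ∈ ball c R, ‖f j z‖ ≤ M) :
    ∃ s : ℕ → ℕ, StrictMono s ∧ ∃ g : ℂ → E,
      TendstoLocallyUniformlyOn (fun j => f (s j)) g atTop (ball c R) := by
  classical
  have hM : 0 ≤ M := le_trans (norm_nonneg _) (hb 0 c (mem_ball_self hR))
  -- countable dense set
  obtain ⟨u, hu⟩ : ∃ u : ℕ → ℂ, DenseRange u :=
    ⟨TopologicalSpace.denseSeq ℂ, TopologicalSpace.denseRange_denseSeq ℂ⟩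
  -- values sequence
  set v : ℕ → ℕ → E := fun j k => if u k ∈ ball c R then f j (u k) else 0 with hv
  have hvmem : ∀ j, v j ∈ Set.pi univ (fun _ : ℕ => closedBall (0 : E) M) := by
    intro j k _
    simp only [hv, mem_closedBall, dist_zero_right]
    split
    · exact hb j _ ‹_›
    · simpa using hM
  obtain ⟨a, -, s, hs, hconv⟩ :=
    (isCompact_univ_pi (fun _ : ℕ => isCompact_closedBall (0 : E) M)).isSeqCompact hvmem
  have hpt : ∀ k, u k ∈ ball c R → Tendsto (fun j => f (s j) (u k)) atTop (𝓝 (a k)) := by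
    intro k hk
    have := (tendsto_pi_nhds.1 hconv) k
    simpa only [hv, Function.comp, if_pos hk] using this
  -- uniform Cauchy on closed balls
  have claim : ∀ ρ : ℝ, 0 ≤ ρ → ρ < R →
      UniformCauchySeqOn (fun j => f (s j)) atTop (closedBall c ρ) := by
    intro ρ hρ0 hρR
    rw [Metric.uniformCauchySeqOn_iff]
    intro ε hε
    set ρ' := (ρ + R) / 2 with hρ'def
    have hρρ' : ρ < ρ' := by rw [hρ'def]; linarith
    have hρ'R : ρ' < R := by rw [hρ'def]; linarith
    set C := M / ((R - ρ') / 2) with hC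
    have hC0 : 0 ≤ C := div_nonneg hM (by rw [hρ'def]; linarith)
    set r0 := min (ρ' - ρ) (ε / (3 * (C + 1))) with hr0
    have hr00 : 0 < r0 := by
      apply lt_min (by linarith)
      positivity
    -- cover
    set U : ℕ → Set ℂ := fun k => if u k ∈ closedBall c ρ' then ball (u k) r0 else ∅ with hU
    have hUopen : ∀ k, IsOpen (U k) := by
      intro k; rw [hU]; dsimp only; split
      · exact isOpen_ball
      · exact isOpen_empty
    have hcover : closedBall c ρ ⊆ ⋃ k, U k := by
      intro z hz
      obtain ⟨k, hk⟩ := hu.exists_dist_lt z hr00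
      have hk' : u k ∈ closedBall c ρ' := by
        have : dist (u k) c ≤ dist (u k) z + dist z c := dist_triangle _ _ _
        rw [mem_closedBall]
        have h1 : dist (u k) z < r0 := by rwa [dist_comm]
        have h2 : dist z c ≤ ρ := mem_closedBall.1 hz
        have h3 : r0 ≤ ρ' - ρ := min_le_left _ _
        linarith
      refine mem_iUnion.2 ⟨k, ?_⟩
      rw [hU]; dsimp only; rw [if_pos hk']
      exact mem_ball.2 hk
    obtain ⟨T, hT⟩ := (isCompact_closedBall c ρ).elim_finite_subcover U hUopen hcover
    -- Cauchy indices
    have hcau : ∀ k : ℕ, ∃ N : ℕ, u k ∈ ball c R →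
        ∀ m ≥ N, ∀ n ≥ N, dist (f (s m) (u k)) (f (s n) (u k)) < ε / 3 := by
      intro k
      by_cases hk : u k ∈ ball c R
      · obtain ⟨N, hN⟩ := Metric.cauchySeq_iff.1 ((hpt k hk).cauchySeq) (ε / 3) (by linarith)
        exact ⟨N, fun _ m hm n hn => hN m hm n hn⟩
      · exact ⟨0, fun hk' => absurd hk' hk⟩
    choose N hN using hcau
    refine ⟨T.sup N, fun m hm n hn z hz => ?_⟩
    obtain ⟨k, hkT, hkz⟩ := mem_iUnion₂.1 (hT hz)
    have hk' : u k ∈ closedBall c ρ' := by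
      by_contra h
      rw [hU] at hkz; dsimp only at hkz; rw [if_neg h] at hkz; exact hkz
    have hkz' : dist z (u k) < r0 := by
      rw [hU] at hkz; dsimp only at hkz; rw [if_pos hk'] at hkz; exact mem_ball.1 hkz
    have hkball : u k ∈ ball c R := lt_of_le_of_lt (mem_closedBall.1 hk') hρ'R
    have hzρ' : z ∈ closedBall c ρ' :=
      (closedBall_subset_closedBall (le_of_lt hρρ')) hz
    have hlip : ∀ j, dist (f (s j) z) (f (s j) (u k)) ≤ C * r0 := by
      intro j
      rw [dist_eq_norm]
      calc ‖f (s j) z - f (s j) (u k)‖ ≤ C * ‖z - u k‖ :=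
            lip_bound (hf (s j)) (hb (s j)) hρ'R hzρ' hk'
      _ ≤ C * r0 := by
            apply mul_le_mul_of_nonneg_left _ hC0
            rw [← dist_eq_norm]; exact le_of_lt hkz'
    have hCr0 : C * r0 < ε / 3 := by
      have h1 : r0 ≤ ε / (3 * (C + 1)) := min_le_right _ _
      have h2 : C * r0 ≤ C * (ε / (3 * (C + 1))) :=
        mul_le_mul_of_nonneg_left h1 hC0
      have h3 : C * (ε / (3 * (C + 1))) < ε / 3 := by
        have heq : C * (ε / (3 * (C + 1))) = C * ε / (3 * (C + 1)) := by ring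
        rw [heq, div_lt_div_iff₀ (by positivity) (by norm_num : (0:ℝ) < 3)]
        nlinarith
      linarith
    have hmid : dist (f (s m) (u k)) (f (s n) (u k)) < ε / 3 :=
      hN k hkball m (le_trans (Finset.le_sup hkT) hm) n (le_trans (Finset.le_sup hkT) hn)
    have tri : dist (f (s m) z) (f (s n) z) ≤ dist (f (s m) z) (f (s m) (u k))
        + dist (f (s m) (u k)) (f (s n) (u k)) + dist (f (s n) (u k)) (f (s n) z) :=
      dist_triangle4 _ _ _ _
    have hl1 := hlip m
    have hl2 := hlip n
    rw [dist_comm (f (s n) (u k))] at tri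
    linarith
  -- pointwise limit
  have hptc : ∀ z, z ∈ ball c R → ∃ b, Tendsto (fun j => f (s j) z) atTop (𝓝 b) := by
    intro z hz
    have hρ : dist z c < R := mem_ball.1 hz
    have := claim (dist z c) dist_nonneg hρ
    have hzin : z ∈ closedBall c (dist z c) := mem_closedBall.2 le_rfl
    have hcs : CauchySeq (fun j => f (s j) z) := by
      rw [Metric.cauchySeq_iff]
      intro ε hε
      obtain ⟨N, hN⟩ := Metric.uniformCauchySeqOn_iff.1 this ε hε
      exact ⟨N, fun m hm n hn => hN m hm n hn z hzin⟩
    exact cauchySeq_tendsto_of_complete hcs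
  choose! g hg using hptc
  refine ⟨s, hs, g, ?_⟩
  rw [tendstoLocallyUniformlyOn_iff_forall_isCompact isOpen_ball]
  intro K hK hKc
  rcases K.eq_empty_or_nonempty with rfl | hKne
  · simp [tendstoUniformlyOn_empty]
  obtain ⟨z₀, hz₀K, hz₀max⟩ := hKc.exists_isMaxOn hKne
    ((continuous_id.dist continuous_const).continuousOn)
  have hρR : dist z₀ c < R := mem_ball.1 (hK hz₀K)
  have hKsub : K ⊆ closedBall c (dist z₀ c) := fun z hz => mem_closedBall.2 (hz₀max hz)
  exact ((claim (dist z₀ c) dist_nonneg hρR).mono hKsub).tendstoUniformlyOn_of_tendsto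
    (fun z hz => hg z (hK hz))

lemma boundary_step {n : ℕ} {D : Set (Fin n → ℂ)} (hDopen : IsOpen D)
    {U : Set (Fin n → ℂ)} {fa : (Fin n → ℂ) → ℂ} {a : Fin n → ℂ}
    (hU : U ∈ nhds a) (hfa : DifferentiableOn ℂ fa (D ∩ U))
    (hfat : Tendsto (fun z => ‖fa z‖) (nhdsWithin a (D ∩ U)) atTop)
    {ψs : ℕ → ℂ → (Fin n → ℂ)}
    (hhol : ∀ j, DifferentiableOn ℂ (ψs j) (ball 0 1))
    (hmaps : ∀ j, Set.MapsTo (ψs j) (ball 0 1) D)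
    {ψ₀ : ℂ → (Fin n → ℂ)}
    (hTLU : TendstoLocallyUniformlyOn ψs ψ₀ atTop (ball 0 1))
    {z₀ : ℂ} (hz₀ : z₀ ∈ ball (0:ℂ) 1) (haz : ψ₀ z₀ = a) :
    ∃ r > 0, ball z₀ r ⊆ ball 0 1 ∧ ∀ z₁ ∈ ball z₀ r, ψ₀ z₁ ∉ D := by
  classical
  have hψ₀diff : DifferentiableOn ℂ ψ₀ (ball 0 1) :=
    hTLU.differentiableOn (Eventually.of_forall hhol) isOpen_ball
  have hψ₀cont : ContinuousOn ψ₀ (ball 0 1) := hψ₀diff.continuousOn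
  -- open U' ⊆ U
  obtain ⟨U', hU'sub, hU'open, haU'⟩ := _root_.mem_nhds_iff.1 hU
  -- V where ‖fa‖ ≥ 1
  have hev : ∀ᶠ z in nhds a, z ∈ D ∩ U → 1 ≤ ‖fa z‖ :=
    eventually_nhdsWithin_iff.1 (hfat.eventually_ge_atTop 1)
  obtain ⟨V, hV1, hVopen, haV⟩ := _root_.eventually_nhds_iff.1 hev
  -- O and ε
  have hOopen : IsOpen (U' ∩ V) := hU'open.inter hVopen
  have haO : a ∈ U' ∩ V := ⟨haU', haV⟩
  obtain ⟨ε₂, hε₂, hballO⟩ := Metric.isOpen_iff.1 hOopen a haO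
  set ε := ε₂ / 2 with hεdef
  have hε : 0 < ε := by positivity
  have hball2 : ball a (2 * ε) ⊆ U' ∩ V := by
    rw [hεdef]; convert hballO using 2; ring
  -- r with closedBall z₀ r ⊆ ball 0 1 and ψ₀ → ball a ε
  have hca : ContinuousAt ψ₀ z₀ := hψ₀cont.continuousAt (isOpen_ball.mem_nhds hz₀)
  have hmem : ψ₀ ⁻¹' ball a ε ∩ ball 0 1 ∈ nhds z₀ := by
    refine inter_mem ?_ (isOpen_ball.mem_nhds hz₀)
    have : ball a ε ∈ nhds (ψ₀ z₀) := by rw [haz]; exact ball_mem_nhds a hε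
    exact hca.preimage_mem_nhds this
  obtain ⟨δ, hδ0, hδsub⟩ := Metric.mem_nhds_iff.1 hmem
  set r := δ / 2 with hrdef
  have hr0 : 0 < r := by positivity
  have hKsub' : closedBall z₀ r ⊆ ball z₀ δ := by
    apply closedBall_subset_ball; rw [hrdef]; linarith
  have hKprop : ∀ z ∈ closedBall z₀ r, ψ₀ z ∈ ball a ε ∧ z ∈ ball (0:ℂ) 1 :=
    fun z hz => hδsub (hKsub' hz)
  have hKsub : closedBall z₀ r ⊆ ball (0:ℂ) 1 := fun z hz => (hKprop z hz).2
  -- uniform convergence on closedBall z₀ r, pick J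
  have hTU : TendstoUniformlyOn ψs ψ₀ atTop (closedBall z₀ r) :=
    (tendstoLocallyUniformlyOn_iff_forall_isCompact isOpen_ball).1 hTLU _ hKsub
      (isCompact_closedBall _ _)
  obtain ⟨J, hJ⟩ := eventually_atTop.1 ((Metric.tendstoUniformlyOn_iff.1 hTU) ε hε)
  -- key membership facts
  have hin : ∀ j, ∀ z ∈ closedBall z₀ r,
      ψs (j + J) z ∈ D ∧ ψs (j + J) z ∈ U' ∧ ψs (j + J) z ∈ V ∧
        1 ≤ ‖fa (ψs (j + J) z)‖ := by
    intro j z hz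
    have hzb : z ∈ ball (0:ℂ) 1 := hKsub hz
    have hwD : ψs (j + J) z ∈ D := hmaps _ hzb
    have hdist : dist (ψ₀ z) (ψs (j + J) z) < ε := hJ (j + J) (Nat.le_add_left _ _) z hz
    have hwO : ψs (j + J) z ∈ U' ∩ V := by
      apply hball2
      rw [mem_ball]
      calc dist (ψs (j + J) z) a ≤ dist (ψs (j + J) z) (ψ₀ z) + dist (ψ₀ z) a :=
            dist_triangle _ _ _
        _ < ε + ε := by
            refine add_lt_add ?_ ?_
            · rw [dist_comm]; exact hdist
            · exact mem_ball.1 (hKprop z hz).1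
        _ = 2 * ε := by ring
    exact ⟨hwD, hwO.1, hwO.2, hV1 _ hwO.2 ⟨hwD, hU'sub hwO.1⟩⟩
  -- the auxiliary functions
  set g : ℕ → ℂ → ℂ := fun j z => (fa (ψs (j + J) z))⁻¹ with hgdef
  have hFdiff : ∀ j, ∀ z ∈ closedBall z₀ r,
      DifferentiableAt ℂ (fun w => fa (ψs (j + J) w)) z := by
    intro j z hz
    have hzb : z ∈ ball (0:ℂ) 1 := hKsub hz
    have h1 : DifferentiableAt ℂ (ψs (j + J)) z :=
      (hhol _).differentiableAt (isOpen_ball.mem_nhds hzb)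
    obtain ⟨hwD, hwU', -, -⟩ := hin j z hz
    have h2 : DifferentiableAt ℂ fa (ψs (j + J) z) :=
      (hfa.mono (inter_subset_inter_right D hU'sub)).differentiableAt
        ((hDopen.inter hU'open).mem_nhds ⟨hwD, hwU'⟩)
    exact h2.comp z h1
  have hFne : ∀ j, ∀ z ∈ closedBall z₀ r, fa (ψs (j + J) z) ≠ 0 := by
    intro j z hz
    obtain ⟨-, -, -, h4⟩ := hin j z hz
    intro h0
    rw [h0] at h4; norm_num at h4
  have hgdiff : ∀ j, DifferentiableOn ℂ (g j) (ball z₀ r) := by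
    intro j z hz
    have hz' : z ∈ closedBall z₀ r := ball_subset_closedBall hz
    exact ((hFdiff j z hz').inv (hFne j z hz')).differentiableWithinAt
  have hgbd : ∀ j, ∀ z ∈ ball z₀ r, ‖g j z‖ ≤ 1 := by
    intro j z hz
    have hz' : z ∈ closedBall z₀ r := ball_subset_closedBall hz
    obtain ⟨-, -, -, h4⟩ := hin j z hz'
    rw [hgdef]
    simp only [norm_inv]
    rw [inv_le_one_iff₀]
    right; exact h4
  -- Montel on g
  obtain ⟨t, ht, h, hTLUh⟩ := montel hr0 hgdiff hgbd
  -- pointwise convergence of the shifted subsequence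
  have htJ : Tendsto (fun j => t j + J) atTop atTop :=
    tendsto_atTop_mono (fun j => le_trans ht.le_apply (Nat.le_add_right _ _)) tendsto_id
  have hptψ : ∀ z ∈ closedBall z₀ r,
      Tendsto (fun j => ψs (t j + J) z) atTop (nhds (ψ₀ z)) := by
    intro z hz
    exact (hTLU.tendsto_at (hKsub hz)).comp htJ
  -- h z₀ = 0
  have hz₀K : z₀ ∈ closedBall z₀ r := mem_closedBall_self hr0.le
  have hAin : ∀ j, ψs (t j + J) z₀ ∈ D ∩ U := by
    intro j
    obtain ⟨h1, h2, -, -⟩ := hin (t j) z₀ hz₀K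
    exact ⟨h1, hU'sub h2⟩
  have hAtend : Tendsto (fun j => ψs (t j + J) z₀) atTop (nhdsWithin a (D ∩ U)) := by
    rw [tendsto_nhdsWithin_iff]
    exact ⟨haz ▸ hptψ z₀ hz₀K, Eventually.of_forall hAin⟩
  have hnorm : Tendsto (fun j => ‖fa (ψs (t j + J) z₀)‖) atTop atTop := hfat.comp hAtend
  have hg0 : Tendsto (fun j => g (t j) z₀) atTop (nhds 0) := by
    rw [tendsto_zero_iff_norm_tendsto_zero]
    have := hnorm.inv_tendsto_atTop
    simpa only [hgdef, norm_inv, Function.comp, Pi.inv_def] using this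
  have hhz₀ : h z₀ = 0 :=
    tendsto_nhds_unique (hTLUh.tendsto_at (mem_ball_self hr0)) hg0
  -- the conclusion
  refine ⟨r, hr0, fun z hz => hKsub (ball_subset_closedBall hz), ?_⟩
  intro z₁ hz₁ hz₁D
  have hz₁K : z₁ ∈ closedBall z₀ r := ball_subset_closedBall hz₁
  set b := ψ₀ z₁ with hbdef
  have hbε : b ∈ ball a ε := (hKprop z₁ hz₁K).1
  have hbO : b ∈ U' ∩ V := hball2 (ball_subset_ball (by linarith) hbε)
  have hfb1 : 1 ≤ ‖fa b‖ := hV1 b hbO.2 ⟨hz₁D, hU'sub hbO.1⟩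
  have hfb0 : fa b ≠ 0 := by intro h0; rw [h0] at hfb1; norm_num at hfb1
  have hcontfa : ContinuousAt fa b :=
    ((hfa.mono (inter_subset_inter_right D hU'sub)).continuousOn).continuousAt
      ((hDopen.inter hU'open).mem_nhds ⟨hz₁D, hbO.1⟩)
  have hgz₁ : Tendsto (fun j => g (t j) z₁) atTop (nhds (fa b)⁻¹) :=
    (hcontfa.tendsto.comp (hptψ z₁ hz₁K)).inv₀ hfb0
  have hhz₁ : h z₁ = (fa b)⁻¹ := tendsto_nhds_unique (hTLUh.tendsto_at hz₁) hgz₁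
  have hhz₁ne : h z₁ ≠ 0 := by rw [hhz₁]; exact inv_ne_zero hfb0
  -- analyticity and dichotomy
  have hhdiff : DifferentiableOn ℂ h (ball z₀ r) :=
    hTLUh.differentiableOn (Eventually.of_forall (fun j => hgdiff (t j))) isOpen_ball
  have hana : AnalyticOnNhd ℂ h (ball z₀ r) := hhdiff.analyticOnNhd isOpen_ball
  rcases (hana z₀ (mem_ball_self hr0)).eventually_eq_zero_or_eventually_ne_zero with
    hcase | hcase
  · have h0 : EqOn h 0 (ball z₀ r) :=
      hana.eqOn_zero_of_preconnected_of_eventuallyEq_zero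
        (convex_ball z₀ r).isPreconnected (mem_ball_self hr0) hcase
    exact hhz₁ne (h0 hz₁)
  · -- Hurwitz-type contradiction via minimum modulus
    obtain ⟨W, hW1, hWopen, hWz₀⟩ := _root_.eventually_nhds_iff.1 (eventually_nhdsWithin_iff.1 hcase)
    obtain ⟨δ₂, hδ₂0, hδ₂sub⟩ := Metric.isOpen_iff.1 hWopen z₀ hWz₀
    set ρ := min (δ₂ / 2) (r / 2) with hρdef
    have hρ0 : 0 < ρ := lt_min (by positivity) (by positivity)
    have hρδ₂ : ρ < δ₂ := lt_of_le_of_lt (min_le_left _ _) (by linarith)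
    have hρr : ρ < r := lt_of_le_of_lt (min_le_right _ _) (by linarith)
    have hsub : sphere z₀ ρ ⊆ ball z₀ r := fun w hw => by
      rw [mem_ball]; rw [mem_sphere] at hw; rw [hw]; exact hρr
    have hsne : ∀ w ∈ sphere z₀ ρ, h w ≠ 0 := by
      intro w hw
      have hwd : dist w z₀ = ρ := mem_sphere.1 hw
      have hwW : w ∈ W := hδ₂sub (by rw [mem_ball, hwd]; exact hρδ₂)
      refine hW1 w hwW ?_
      intro hwz
      rw [mem_singleton_iff] at hwz
      rw [hwz] at hwd
      simp only [dist_self] at hwd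
      exact hρ0.ne' hwd.symm
    have hsnonempty : (sphere z₀ ρ).Nonempty :=
      NormedSpace.sphere_nonempty.2 hρ0.le
    obtain ⟨w₀, hw₀s, hw₀min⟩ := (isCompact_sphere z₀ ρ).exists_isMinOn hsnonempty
      ((hhdiff.continuousOn.mono hsub).norm)
    set ε₀ := ‖h w₀‖ with hε₀def
    have hε₀0 : 0 < ε₀ := norm_pos_iff.2 (hsne w₀ hw₀s)
    -- uniform convergence on the sphere
    have hTUs : TendstoUniformlyOn (fun j => g (t j)) h atTop (sphere z₀ ρ) :=
      (tendstoLocallyUniformlyOn_iff_forall_isCompact isOpen_ball).1 hTLUh _ hsub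
        (isCompact_sphere _ _)
    have hev1 : ∀ᶠ j in atTop, ∀ w ∈ sphere z₀ ρ, dist (h w) (g (t j) w) < ε₀ / 2 :=
      (Metric.tendstoUniformlyOn_iff.1 hTUs) (ε₀ / 2) (by positivity)
    have hev2 : ∀ᶠ j in atTop, ‖g (t j) z₀‖ < ε₀ / 2 := by
      have := hg0.norm
      simp only [norm_zero] at this
      exact this.eventually_lt_const (by positivity)
    obtain ⟨j, hj1, hj2⟩ := (hev1.and hev2).exists
    -- minimum modulus contradiction via maximum principle for fa ∘ ψs
    set F : ℂ → ℂ := fun w => fa (ψs (t j + J) w) with hFdef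
    have hFg : ∀ w, F w = (g (t j) w)⁻¹ := by
      intro w; rw [hFdef, hgdef]; simp
    have hFd : DiffContOnCl ℂ F (ball z₀ ρ) := by
      constructor
      · intro w hw
        exact (hFdiff (t j) w (ball_subset_closedBall
          ((ball_subset_ball hρr.le) hw))).differentiableWithinAt
      · intro w hw
        have hw' : w ∈ closedBall z₀ r := by
          have := closure_ball_subset_closedBall hw
          exact closedBall_subset_closedBall hρr.le this
        exact (hFdiff (t j) w hw').continuousAt.continuousWithinAt
    have hfrontier : ∀ w ∈ frontier (ball z₀ ρ), ‖F w‖ ≤ 2 / ε₀ := by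
      intro w hw
      rw [frontier_ball z₀ hρ0.ne'] at hw
      have hgw : ε₀ / 2 ≤ ‖g (t j) w‖ := by
        have h1 : dist (h w) (g (t j) w) < ε₀ / 2 := hj1 w hw
        have h2 : ε₀ ≤ ‖h w‖ := hw₀min hw
        have h3 : ‖h w‖ - ‖g (t j) w‖ ≤ dist (h w) (g (t j) w) := by
          rw [dist_eq_norm]; exact norm_sub_norm_le _ _
        linarith
      rw [hFg w, norm_inv]
      have hkey : (ε₀ / 2)⁻¹ = 2 / ε₀ := by field_simp
      rw [← hkey]
      exact inv_anti₀ (by positivity) hgw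
    have hmax : ‖F z₀‖ ≤ 2 / ε₀ :=
      Complex.norm_le_of_forall_mem_frontier_norm_le isBounded_ball hFd hfrontier
        (subset_closure (mem_ball_self hρ0))
    -- but ‖F z₀‖ > 2 / ε₀
    have hgz₀pos : 0 < ‖g (t j) z₀‖ := by
      have hne : g (t j) z₀ ≠ 0 := inv_ne_zero (hFne (t j) z₀ hz₀K)
      exact norm_pos_iff.2 hne
    have hFz₀ : ‖F z₀‖ = ‖g (t j) z₀‖⁻¹ := by rw [hFg z₀, norm_inv]
    have : (2 : ℝ) / ε₀ < ‖F z₀‖ := by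
      rw [hFz₀]
      have h2 : ‖g (t j) z₀‖ < ε₀ / 2 := hj2
      calc (2:ℝ) / ε₀ = (ε₀ / 2)⁻¹ := by field_simp
        _ < ‖g (t j) z₀‖⁻¹ := by
            apply inv_strictAnti₀ hgz₀pos h2
    linarith

/-- a bounded domain `D ⊂ ℂⁿ` such that every boundary point `a`
admits a neighborhood `U_a` and a holomorphic function `f_a` on `D ∩ U_a` with
`|f_a(z)| → ∞` as `z → a`, is taut: every sequence of holomorphic maps `𝔻 → D`
has a subsequence which either converges locally uniformly on `𝔻` to a holomorphic
map `𝔻 → D`, or is compactly divergent. -/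
theorem bounded_domain_with_peak_functions_taut {n : ℕ} (D : Set (Fin n → ℂ))
    (hDopen : IsOpen D) (hDconn : IsConnected D) (hDbd : Bornology.IsBounded D)
    (hpeak : ∀ a ∈ frontier D, ∃ U ∈ nhds a, ∃ f : (Fin n → ℂ) → ℂ,
      DifferentiableOn ℂ f (D ∩ U) ∧
      Tendsto (fun z => ‖f z‖) (nhdsWithin a (D ∩ U)) atTop)
    (ψ : ℕ → ℂ → (Fin n → ℂ))
    (hψhol : ∀ j, DifferentiableOn ℂ (ψ j) (ball 0 1))
    (hψmaps : ∀ j, Set.MapsTo (ψ j) (ball 0 1) D) :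
    ∃ s : ℕ → ℕ, StrictMono s ∧
      ((∃ ψ₀ : ℂ → (Fin n → ℂ), DifferentiableOn ℂ ψ₀ (ball 0 1) ∧
          Set.MapsTo ψ₀ (ball 0 1) D ∧
          TendstoLocallyUniformlyOn (fun j => ψ (s j)) ψ₀ atTop (ball 0 1)) ∨
        (∀ K ⊆ ball (0 : ℂ) 1, IsCompact K → ∀ L ⊆ D, IsCompact L →
          ∀ᶠ j in atTop, ∀ x ∈ K, ψ (s j) x ∉ L)) := by
  classical
  obtain ⟨M, hM⟩ := isBounded_iff_forall_norm_le.1 hDbd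
  obtain ⟨s, hsmono, ψ₀, hTLU⟩ :=
    montel one_pos hψhol (fun j z hz => hM _ (hψmaps j hz))
  have hψs_hol : ∀ j, DifferentiableOn ℂ (fun z => ψ (s j) z) (ball 0 1) :=
    fun j => hψhol (s j)
  have hψs_maps : ∀ j, Set.MapsTo (fun z => ψ (s j) z) (ball 0 1) D :=
    fun j => hψmaps (s j)
  have hψ₀diff : DifferentiableOn ℂ ψ₀ (ball 0 1) :=
    hTLU.differentiableOn (Eventually.of_forall hψs_hol) isOpen_ball
  have hψ₀cont : ContinuousOn ψ₀ (ball 0 1) := hψ₀diff.continuousOn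
  have hψ₀cl : ∀ z ∈ ball (0:ℂ) 1, ψ₀ z ∈ closure D := fun z hz =>
    mem_closure_of_tendsto (hTLU.tendsto_at hz)
      (Eventually.of_forall (fun j => hψmaps (s j) hz))
  by_cases hall : ∀ z ∈ ball (0:ℂ) 1, ψ₀ z ∈ D
  · exact ⟨s, hsmono, Or.inl ⟨ψ₀, hψ₀diff, hall, hTLU⟩⟩
  push_neg at hall
  obtain ⟨zb, hzb, hzbD⟩ := hall
  -- the two open pieces
  set A : Set ℂ := ball 0 1 ∩ ψ₀ ⁻¹' D with hAdef
  set B : Set ℂ := {z | z ∈ ball (0:ℂ) 1 ∧ ψ₀ z ∉ D} with hBdef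
  have hAopen : IsOpen A := hψ₀cont.isOpen_inter_preimage isOpen_ball hDopen
  have hBopen : IsOpen B := by
    rw [isOpen_iff_mem_nhds]
    rintro z₀ ⟨hz₀b, hz₀D⟩
    have hfront : ψ₀ z₀ ∈ frontier D := by
      rw [frontier, hDopen.interior_eq]
      exact ⟨hψ₀cl z₀ hz₀b, hz₀D⟩
    obtain ⟨U, hU, fa, hfa, hfat⟩ := hpeak _ hfront
    obtain ⟨r, hr0, hrsub, hrall⟩ :=
      boundary_step hDopen hU hfa hfat hψs_hol hψs_maps hTLU hz₀b rfl
    refine Filter.mem_of_superset (ball_mem_nhds z₀ hr0) ?_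
    intro z hz
    exact ⟨hrsub hz, hrall z hz⟩
  -- connectedness
  have hcover : ball (0:ℂ) 1 ⊆ A ∪ B := by
    intro z hz
    by_cases h : ψ₀ z ∈ D
    · exact Or.inl ⟨hz, h⟩
    · exact Or.inr ⟨hz, h⟩
  have hdisj : ball (0:ℂ) 1 ∩ (A ∩ B) = ∅ := by
    ext z
    simp only [mem_inter_iff, mem_empty_iff_false, iff_false]
    rintro ⟨-, ⟨-, h1⟩, -, h2⟩
    exact h2 h1
  have hpre : IsPreconnected (ball (0:ℂ) 1) := (convex_ball (0:ℂ) 1).isPreconnected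
  rcases (isPreconnected_iff_subset_of_disjoint.1 hpre) A B hAopen hBopen hcover hdisj with
    hsubA | hsubB
  · exact absurd (hsubA hzb).2 hzbD
  -- compactly divergent case
  refine ⟨s, hsmono, Or.inr ?_⟩
  intro K hK hKc L hL hLc
  obtain ⟨ε, hε0, hthick⟩ := hLc.exists_thickening_subset_open hDopen hL
  have hTU : TendstoUniformlyOn (fun j => ψ (s j)) ψ₀ atTop K :=
    (tendstoLocallyUniformlyOn_iff_forall_isCompact isOpen_ball).1 hTLU K hK hKc
  filter_upwards [(Metric.tendstoUniformlyOn_iff.1 hTU) ε hε0] with j hj x hx hmem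
  have h1 : ψ₀ x ∈ thickening ε L :=
    mem_thickening_iff.2 ⟨ψ (s j) x, hmem, hj x hx⟩
  exact (hsubB (hK hx)).2 (hthick h1)
end

section
/- For every n ≥ 1 the symmetrized polydisc 𝔾_n is linearly convex: for every point z ∈ ℂⁿ \ 𝔾_n there exists a complex affine hyperplane H ⊆ ℂⁿ with z ∈ H and H ∩ 𝔾_n = ∅. -/
open Finset

/-- The `k`-th elementary symmetric polynomial of `z ∈ ℂⁿ`. -/
noncomputable def esym (n k : ℕ) (z : Fin n → ℂ) : ℂ :=
  ∑ s ∈ (Finset.univ : Finset (Fin n)).powersetCard k, ∏ j ∈ s, z j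

/-- The symmetrization map `σ = (σ₁, …, σₙ) : ℂⁿ → ℂⁿ`. -/
noncomputable def symMap (n : ℕ) (z : Fin n → ℂ) : Fin n → ℂ :=
  fun k => esym n (k.val + 1) z

/-- The symmetrized polydisc `𝔾ₙ = σ(𝔻ⁿ)`. -/
noncomputable def symPolydisc (n : ℕ) : Set (Fin n → ℂ) :=
  symMap n '' {z | ∀ j, ‖z j‖ < 1}

open Polynomial in
lemma coeff_prod_X_sub_C (n : ℕ) (x : Fin n → ℂ) {k : ℕ} (hk : k ≤ n) :
    (∏ j, (X - C (x j))).coeff k = (-1) ^ (n - k) * esym n (n - k) x := by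
  have hcard : Multiset.card (Multiset.map x Finset.univ.val) = n := by simp
  have h1 : (∏ j, (X - C (x j)))
      = ((Multiset.map x Finset.univ.val).map fun t => X - C t).prod := by
    rw [Multiset.map_map]; rfl
  rw [h1, Multiset.prod_X_sub_C_coeff _ (by rw [hcard]; exact hk), hcard,
    Finset.esymm_map_val]
  rfl

lemma esym_zero (n : ℕ) (x : Fin n → ℂ) : esym n 0 x = 1 := by
  simp [esym]

lemma ofFn_get_cast {α : Type*} (l : List α) {n : ℕ} (h : l.length = n) :
    List.ofFn (fun j : Fin n => l.get (Fin.cast h.symm j)) = l := by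
  subst h
  exact List.ofFn_get l

lemma exists_ofFn_eq {n : ℕ} (s : Multiset ℂ) (h : Multiset.card s = n) :
    ∃ x : Fin n → ℂ, (↑(List.ofFn x) : Multiset ℂ) = s := by
  refine ⟨fun j => s.toList.get (Fin.cast ((Multiset.length_toList s).trans h).symm j), ?_⟩
  rw [ofFn_get_cast s.toList ((Multiset.length_toList s).trans h), Multiset.coe_toList]

open Polynomial in
lemma prod_sub_eq (n : ℕ) (x : Fin n → ℂ) (l : ℂ) :
    ∏ j, (l - x j)
      = l ^ n + ∑ k : Fin n,
          ((-1) ^ (k.val + 1) * esym n (k.val + 1) x) * l ^ (n - (k.val + 1)) := by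
  have hdeg : (∏ j, (X - C (x j))).natDegree < n + 1 := by
    apply Nat.lt_succ_of_le
    refine (Polynomial.natDegree_prod_le _ _).trans ?_
    simp [Polynomial.natDegree_X_sub_C]
  have heval : (∏ j, (X - C (x j))).eval l = ∏ j, (l - x j) := by simp [Polynomial.eval_prod]
  rw [← heval, Polynomial.eval_eq_sum_range' hdeg, Finset.sum_range_succ,
    coeff_prod_X_sub_C n x (le_refl n)]
  simp only [Nat.sub_self, pow_zero, esym_zero, one_mul]
  rw [← Finset.sum_range_reflect, Fin.sum_univ_eq_sum_range
    (fun k => ((-1) ^ (k + 1) * esym n (k + 1) x) * l ^ (n - (k + 1))) n]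
  rw [add_comm]
  congr 1
  apply Finset.sum_congr rfl
  intro i hi
  rw [Finset.mem_range] at hi
  have h1 : n - 1 - i = n - (i + 1) := by omega
  have h2 : n - (n - (i + 1)) = i + 1 := by omega
  rw [h1, coeff_prod_X_sub_C n x (by omega), h2]

open Polynomial in
/-- for every `n ≥ 1` the symmetrized polydisc `𝔾ₙ` is linearly convex:
every point `z ∉ 𝔾ₙ` lies on a complex affine hyperplane
(here `{w | φ w = φ z}` for a nonzero `ℂ`-linear functional `φ`) disjoint from `𝔾ₙ`. -/
theorem symmetrizedPolydisc_linearlyConvex (n : ℕ) (hn : 1 ≤ n)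
    (z : Fin n → ℂ) (hz : z ∉ symPolydisc n) :
    ∃ φ : (Fin n → ℂ) →ₗ[ℂ] ℂ, φ ≠ 0 ∧ ∀ w ∈ symPolydisc n, φ w ≠ φ z := by
  classical
  -- the "polynomial" with coefficients from w evaluated at l
  set P : (Fin n → ℂ) → ℂ → ℂ := fun w l =>
    l ^ n + ∑ k : Fin n, ((-1) ^ (k.val + 1) * w k) * l ^ (n - (k.val + 1)) with hP
  -- Step 1: there is a root of P z of norm ≥ 1
  have hroot : ∃ l : ℂ, 1 ≤ ‖l‖ ∧ P z l = 0 := by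
    by_contra hcon
    push_neg at hcon
    -- build the polynomial q
    set q : ℂ[X] := X ^ n + ∑ k : Fin n,
        C ((-1) ^ (k.val + 1) * z k) * X ^ (n - (k.val + 1)) with hq
    have hqeval : ∀ l : ℂ, q.eval l = P z l := by
      intro l; simp [hq, hP, Polynomial.eval_finset_sum]
    have hsumdeg : (∑ k : Fin n,
        C ((-1) ^ (k.val + 1) * z k) * X ^ (n - (k.val + 1))).degree < (n : WithBot ℕ) := by
      refine lt_of_le_of_lt (Polynomial.degree_sum_le _ _) ?_
      rw [Finset.sup_lt_iff (by exact_mod_cast WithBot.bot_lt_coe n)]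
      intro k _
      refine lt_of_le_of_lt (Polynomial.degree_C_mul_X_pow_le _ _) ?_
      exact_mod_cast (by omega : n - (k.val + 1) < n)
    have hqm : q.Monic := Polynomial.monic_X_pow_add hsumdeg
    have hqdeg : q.natDegree = n := by
      have : q.degree = (n : ℕ) := by
        rw [hq, Polynomial.degree_add_eq_left_of_degree_lt
          (by rwa [Polynomial.degree_X_pow]), Polynomial.degree_X_pow]
      exact Polynomial.natDegree_eq_of_degree_eq_some this
    have hq0 : q ≠ 0 := hqm.ne_zero
    have hsplits : q.Splits := IsAlgClosed.splits q
    have hcard : Multiset.card q.roots = n := by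
      rw [Polynomial.splits_iff_card_roots.mp hsplits, hqdeg]
    -- extract roots as a function
    obtain ⟨x, hofn⟩ := exists_ofFn_eq q.roots hcard
    have hqroots : q.roots = ↑(List.ofFn x) := hofn.symm
    have hqprod : q = ∏ j, (X - C (x j)) := by
      rw [hsplits.eq_prod_roots_of_monic hqm, hqroots]
      rw [Multiset.map_coe, Multiset.prod_coe, List.map_ofFn, List.prod_ofFn]
      rfl
    -- all roots have norm < 1
    have hnorm : ∀ j, ‖x j‖ < 1 := by
      intro j
      by_contra hge
      push_neg at hge
      have hmem : x j ∈ q.roots := by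
        rw [hqroots]
        exact Multiset.mem_coe.mpr (List.mem_ofFn.mpr ⟨j, rfl⟩)
      have := Polynomial.isRoot_of_mem_roots hmem
      exact hcon (x j) hge (by rw [← hqeval]; exact this)
    -- the coefficients give z = symMap x
    have hcoeff : ∀ k : Fin n, z k = esym n (k.val + 1) x := by
      intro k
      have hk1 : k.val + 1 ≤ n := k.isLt
      have e1 : q.coeff (n - (k.val + 1)) = (-1) ^ (k.val + 1) * z k := by
        rw [hq]
        rw [Polynomial.coeff_add, Polynomial.coeff_X_pow,
          if_neg (by omega), zero_add, Polynomial.finset_sum_coeff]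
        rw [Finset.sum_eq_single k]
        · rw [Polynomial.coeff_C_mul_X_pow, if_pos rfl]
        · intro b _ hb
          rw [Polynomial.coeff_C_mul_X_pow,
            if_neg (by have := b.isLt; have hbk : b.val ≠ k.val := fun h => hb (Fin.ext h); omega)]
        · intro h; exact absurd (Finset.mem_univ k) h
      have e2 : q.coeff (n - (k.val + 1))
          = (-1) ^ (k.val + 1) * esym n (k.val + 1) x := by
        rw [hqprod, coeff_prod_X_sub_C n x (by omega)]
        have : n - (n - (k.val + 1)) = k.val + 1 := by omega
        rw [this]
      have hne : ((-1 : ℂ)) ^ (k.val + 1) ≠ 0 := by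
        apply pow_ne_zero; norm_num
      exact mul_left_cancel₀ hne (e1.symm.trans e2)
    exact hz ⟨x, hnorm, funext fun k => (hcoeff k).symm⟩
  obtain ⟨l, hl1, hl0⟩ := hroot
  -- the linear functional
  refine ⟨∑ k : Fin n, ((-1) ^ (k.val + 1) * l ^ (n - (k.val + 1))) • LinearMap.proj k,
    ?_, ?_⟩
  · -- nonzero : evaluate at the basis vector for k₀ = n-1
    intro h0
    have hk0 : n - 1 < n := by omega
    set k0 : Fin n := ⟨n - 1, hk0⟩ with hk0d
    have := congrArg (fun f : (Fin n → ℂ) →ₗ[ℂ] ℂ => f (Pi.single k0 1)) h0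
    simp only [LinearMap.sum_apply, LinearMap.smul_apply, LinearMap.proj_apply,
      LinearMap.zero_apply, smul_eq_mul] at this
    rw [Finset.sum_eq_single k0] at this
    · rw [Pi.single_eq_same] at this
      have hv : k0.val + 1 = n := by simp [hk0d]; omega
      rw [hv, Nat.sub_self, pow_zero] at this
      simp at this
    · intro b _ hb
      rw [Pi.single_eq_of_ne hb, mul_zero]
    · intro h; exact absurd (Finset.mem_univ k0) h
  · -- disjointness
    rintro w ⟨x, hxlt, rfl⟩ heq
    simp only [LinearMap.sum_apply, LinearMap.smul_apply, LinearMap.proj_apply,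
      smul_eq_mul] at heq
    -- φ z = -l^n
    have hphiz : ∑ k : Fin n, ((-1) ^ (k.val + 1) * l ^ (n - (k.val + 1))) * z k
        = -l ^ n := by
      have : P z l = 0 := hl0
      rw [hP] at this
      have h2 : ∑ k : Fin n, ((-1) ^ (k.val + 1) * z k) * l ^ (n - (k.val + 1))
          = -l ^ n := by linear_combination this
      rw [← h2]
      apply Finset.sum_congr rfl
      intro k _; ring
    -- φ (symMap x) = ∏ (l - x j) - l^n
    have hphiw : ∑ k : Fin n, ((-1) ^ (k.val + 1) * l ^ (n - (k.val + 1))) * symMap n x k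
        = (∏ j, (l - x j)) - l ^ n := by
      have := prod_sub_eq n x l
      rw [eq_sub_iff_add_eq, add_comm, this]
      congr 1
      apply Finset.sum_congr rfl
      intro k _
      simp only [symMap]
      ring
    rw [hphiz, hphiw] at heq
    have hprod : (∏ j, (l - x j)) = 0 := by linear_combination heq
    obtain ⟨j, -, hj⟩ := Finset.prod_eq_zero_iff.mp hprod
    have hlx : l = x j := sub_eq_zero.mp hj
    have : (1 : ℝ) ≤ ‖x j‖ := hlx ▸ hl1
    exact absurd (hxlt j) (not_lt.mpr this)
end

section
/- For every integer n ≥ 3 the symmetrized polydisc 𝔾_n is not ℂ-convex; more precisely, for every t with 1/√2 ≤ t < 1 the intersection of 𝔾_n with the complex affine line L_t = {(3t(1−2λ), 3t², t³(1−2λ), 0, …, 0) : λ ∈ ℂ} is nonempty and not connected. -/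
open Finset

/-- The complex affine line through `a` with direction `b`. -/
def cxLine {n : ℕ} (a b : Fin n → ℂ) : Set (Fin n → ℂ) :=
  {z | ∃ ζ : ℂ, z = a + ζ • b}

/-- `ℂ`-convexity: every nonempty intersection with a complex affine line is
connected and simply connected. -/
def CConvex {n : ℕ} (D : Set (Fin n → ℂ)) : Prop :=
  ∀ a b : Fin n → ℂ, b ≠ 0 → (D ∩ cxLine a b).Nonempty →
    IsConnected (D ∩ cxLine a b) ∧ SimplyConnectedSpace ↥(D ∩ cxLine a b)

/-- The line `L_t = {(3t(1-2λ), 3t², t³(1-2λ), 0, …, 0) : λ ∈ ℂ}` in `ℂⁿ`. -/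
def Lt (n : ℕ) (t : ℝ) : Set (Fin n → ℂ) :=
  {z | ∃ lam : ℂ, z = fun j : Fin n =>
    if (j : ℕ) = 0 then 3 * (t : ℂ) * (1 - 2 * lam)
    else if (j : ℕ) = 1 then 3 * (t : ℂ) ^ 2
    else if (j : ℕ) = 2 then (t : ℂ) ^ 3 * (1 - 2 * lam)
    else 0}

/- ### Auxiliary lemmas -/

lemma sum_pcard_one {ι : Type*} (s : Finset ι) (f : ι → ℂ) :
    ∑ p ∈ s.powersetCard 1, ∏ j ∈ p, f j = ∑ i ∈ s, f i := by
  rw [Finset.powersetCard_one, Finset.sum_map]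
  simp

lemma sq_sum_eq {ι : Type*} [DecidableEq ι] (s : Finset ι) (f : ι → ℂ) :
    (∑ i ∈ s, f i) ^ 2 = ∑ i ∈ s, f i ^ 2 + 2 * ∑ p ∈ s.powersetCard 2, ∏ j ∈ p, f j := by
  induction s using Finset.induction_on with
  | empty =>
    rw [show ((∅ : Finset ι).powersetCard 2) = ∅ from by simp]
    simp
  | @insert a s ha ih =>
    rw [Finset.sum_insert ha, Finset.sum_insert ha,
      show (2 : ℕ) = Nat.succ 1 from rfl, Finset.powersetCard_succ_insert ha,
      Finset.sum_union, Finset.sum_image, Finset.powersetCard_one, Finset.sum_map]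
    · simp only [Function.Embedding.coeFn_mk, Finset.prod_singleton]
      have hins : ∀ i ∈ s, ∏ j ∈ insert a {i}, f j = f a * f i := by
        intro i hi
        rw [Finset.prod_insert (by simp; rintro rfl; exact ha hi), Finset.prod_singleton]
      rw [Finset.sum_congr rfl hins, ← Finset.mul_sum]
      ring_nf
      rw [ih]
      ring
    · intro p hp q hq hpq
      have hap : a ∉ p := fun h => ha ((Finset.mem_powersetCard.1 hp).1 h)
      have haq : a ∉ q := fun h => ha ((Finset.mem_powersetCard.1 hq).1 h)
      have := congrArg (Finset.erase · a) hpq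
      simpa [Finset.erase_insert hap, Finset.erase_insert haq] using this
    · rw [Finset.disjoint_right]
      intro p hp hp2
      rcases Finset.mem_image.1 hp with ⟨q, hq, rfl⟩
      exact ha ((Finset.mem_powersetCard.1 hp2).1 (Finset.mem_insert_self a q))

lemma esym_one (n : ℕ) (z : Fin n → ℂ) : esym n 1 z = ∑ j, z j :=
  sum_pcard_one _ _

lemma newton2 (n : ℕ) (z : Fin n → ℂ) :
    ∑ j, (z j) ^ 2 = (esym n 1 z) ^ 2 - 2 * esym n 2 z := by
  have h1 : esym n 1 z = ∑ j, z j := esym_one n z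
  have h2 := sq_sum_eq (Finset.univ : Finset (Fin n)) z
  unfold esym at *
  rw [h1]
  linear_combination -h2

lemma esym_support (n : ℕ) (z : Fin n → ℂ) (S : Finset (Fin n))
    (hmem : ∀ j, j ∈ S ↔ z j ≠ 0) :
    esym n S.card z = ∏ j ∈ S, z j := by
  unfold esym
  apply Finset.sum_eq_single_of_mem S
    (Finset.mem_powersetCard.2 ⟨Finset.subset_univ _, rfl⟩)
  intro p hp hpne
  obtain ⟨-, hcard⟩ := Finset.mem_powersetCard.1 hp
  have hnsub : ¬ p ⊆ S := fun h =>
    hpne (Finset.eq_of_subset_of_card_le h (by rw [hcard]))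
  obtain ⟨j, hj, hjS⟩ := Finset.not_subset.1 hnsub
  refine Finset.prod_eq_zero hj ?_
  by_contra hzj
  exact hjS ((hmem j).2 hzj)

lemma key_bound (n : ℕ) (z : Fin n → ℂ) (hz : ∀ j, ‖z j‖ < 1)
    (h0 : ∀ k, 4 ≤ k → k ≤ n → esym n k z = 0) :
    ‖∑ j, (z j) ^ 2‖ < 3 := by
  classical
  set S : Finset (Fin n) := Finset.univ.filter (fun j => z j ≠ 0) with hSdef
  have hmem : ∀ j, j ∈ S ↔ z j ≠ 0 := by
    intro j; simp [hSdef]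
  have hScard : S.card ≤ 3 := by
    by_contra h
    push_neg at h
    have hle : S.card ≤ n := le_trans (Finset.card_le_univ S) (by simp)
    have h4 : 4 ≤ S.card := h
    have hzero := h0 S.card h4 hle
    rw [esym_support n z S hmem] at hzero
    exact (Finset.prod_ne_zero_iff.2 (fun j hj => (hmem j).1 hj)) hzero
  have hsum : ∑ j, (z j) ^ 2 = ∑ j ∈ S, (z j) ^ 2 := by
    symm
    apply Finset.sum_subset (Finset.subset_univ S)
    intro x _ hx
    have hx0 : z x = 0 := by
      by_contra h; exact hx ((hmem x).2 h)
    simp [hx0]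
  rw [hsum]
  rcases S.eq_empty_or_nonempty with hSe | hSne
  · rw [hSe]; simp
  · have hlt : ∀ j ∈ S, ‖(z j) ^ 2‖ < 1 := by
      intro j _
      rw [norm_pow]
      have hj := hz j
      exact pow_lt_one₀ (norm_nonneg _) hj two_ne_zero
    calc ‖∑ j ∈ S, (z j) ^ 2‖ ≤ ∑ j ∈ S, ‖(z j) ^ 2‖ :=
          norm_sum_le _ _
      _ < ∑ _j ∈ S, (1 : ℝ) := Finset.sum_lt_sum_of_nonempty hSne hlt
      _ = (S.card : ℝ) := by simp
      _ ≤ 3 := by exact_mod_cast hScard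

lemma esym_ind (n : ℕ) (hn : 3 ≤ n) (c : ℂ) (k : ℕ) :
    esym n k (fun j => if (j : ℕ) < 3 then c else 0)
      = (Nat.choose 3 k : ℂ) * c ^ k := by
  classical
  set T : Finset (Fin n) := Finset.univ.filter (fun j => (j : ℕ) < 3) with hTdef
  have hTmem : ∀ j : Fin n, j ∈ T ↔ (j : ℕ) < 3 := by
    intro j; simp [hTdef]
  have hTcard : T.card = 3 := by
    have hT3 : T = {(⟨0, by omega⟩ : Fin n), ⟨1, by omega⟩, ⟨2, by omega⟩} := by
      ext j
      rw [hTmem]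
      simp only [Finset.mem_insert, Finset.mem_singleton, Fin.ext_iff]
      omega
    rw [hT3, Finset.card_insert_of_notMem (by simp [Fin.ext_iff]),
      Finset.card_insert_of_notMem (by simp [Fin.ext_iff]), Finset.card_singleton]
  unfold esym
  have hprod : ∀ p ∈ (Finset.univ : Finset (Fin n)).powersetCard k,
      (∏ j ∈ p, if (j : ℕ) < 3 then c else 0) = if p ⊆ T then c ^ k else 0 := by
    intro p hp
    obtain ⟨-, hcard⟩ := Finset.mem_powersetCard.1 hp
    by_cases hsub : p ⊆ T
    · rw [if_pos hsub, ← hcard,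
        Finset.prod_congr rfl (fun j hj => if_pos ((hTmem j).1 (hsub hj))),
        Finset.prod_const]
    · rw [if_neg hsub]
      obtain ⟨j, hj, hjT⟩ := Finset.not_subset.1 hsub
      exact Finset.prod_eq_zero hj (if_neg (fun h => hjT ((hTmem j).2 h)))
  rw [Finset.sum_congr rfl hprod, Finset.sum_ite, Finset.sum_const_zero, add_zero,
    Finset.sum_const]
  have hfilter : ((Finset.univ : Finset (Fin n)).powersetCard k).filter (fun p => p ⊆ T)
      = T.powersetCard k := by
    ext p
    simp only [Finset.mem_filter, Finset.mem_powersetCard]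
    constructor
    · rintro ⟨⟨-, hc⟩, hs⟩; exact ⟨hs, hc⟩
    · rintro ⟨hs, hc⟩; exact ⟨⟨Finset.subset_univ _, hc⟩, hs⟩
  rw [hfilter, Finset.card_powersetCard, hTcard, nsmul_eq_mul]

lemma symMap_ind (n : ℕ) (hn : 3 ≤ n) (c : ℂ) :
    symMap n (fun j => if (j : ℕ) < 3 then c else 0)
      = fun j : Fin n => if (j : ℕ) = 0 then 3 * c
          else if (j : ℕ) = 1 then 3 * c ^ 2
          else if (j : ℕ) = 2 then c ^ 3 else 0 := by
  funext j
  rw [symMap, esym_ind n hn c (j.val + 1)]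
  by_cases h0 : (j : ℕ) = 0
  · rw [if_pos h0, h0]; norm_num
  · rw [if_neg h0]
    by_cases h1 : (j : ℕ) = 1
    · rw [if_pos h1, h1]; norm_num [Nat.choose]
    · rw [if_neg h1]
      by_cases h2 : (j : ℕ) = 2
      · rw [if_pos h2, h2]; norm_num [Nat.choose]
      · rw [if_neg h2, Nat.choose_eq_zero_of_lt (by omega)]
        norm_num

lemma pt_mem_G (n : ℕ) (hn : 3 ≤ n) (c : ℂ) (hc : ‖c‖ < 1) :
    (fun j : Fin n => if (j : ℕ) = 0 then 3 * c
        else if (j : ℕ) = 1 then 3 * c ^ 2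
        else if (j : ℕ) = 2 then c ^ 3 else 0) ∈ symPolydisc n := by
  refine ⟨fun j => if (j : ℕ) < 3 then c else 0, ?_, symMap_ind n hn c⟩
  intro j
  dsimp only
  split
  · exact hc
  · simp

/-- for every `n ≥ 3`, `𝔾ₙ` is not `ℂ`-convex; more precisely, for every
`1/√2 ≤ t < 1` the intersection `𝔾ₙ ∩ L_t` is nonempty and not connected. -/
theorem symmetrizedPolydisc_not_cConvex (n : ℕ) (hn : 3 ≤ n) :
    ¬ CConvex (symPolydisc n) ∧
    ∀ t : ℝ, 1 / Real.sqrt 2 ≤ t → t < 1 →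
      (symPolydisc n ∩ Lt n t).Nonempty ∧
      ¬ IsPreconnected (symPolydisc n ∩ Lt n t) := by
  have hs2 : (0 : ℝ) < Real.sqrt 2 := by positivity
  have hmain : ∀ t : ℝ, 1 / Real.sqrt 2 ≤ t → t < 1 →
      (symPolydisc n ∩ Lt n t).Nonempty ∧
      ¬ IsPreconnected (symPolydisc n ∩ Lt n t) := by
    intro t ht ht1
    have ht0 : 0 < t := lt_of_lt_of_le (by positivity) ht
    have ht2 : 1 / 2 ≤ t ^ 2 := by
      have hsq : (1 / Real.sqrt 2) ^ 2 = 1 / 2 := by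
        rw [div_pow, one_pow, Real.sq_sqrt (by norm_num : (0:ℝ) ≤ 2)]
      calc (1 : ℝ) / 2 = (1 / Real.sqrt 2) ^ 2 := hsq.symm
        _ ≤ t ^ 2 := pow_le_pow_left₀ (by positivity) ht 2
    set j0 : Fin n := ⟨0, by omega⟩ with hj0def
    set j1 : Fin n := ⟨1, by omega⟩ with hj1def
    -- the two witness points (λ = 0 and λ = 1)
    set ptA : Fin n → ℂ := fun j : Fin n =>
      if (j : ℕ) = 0 then 3 * (t : ℂ) * (1 - 2 * (0 : ℂ))
      else if (j : ℕ) = 1 then 3 * (t : ℂ) ^ 2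
      else if (j : ℕ) = 2 then (t : ℂ) ^ 3 * (1 - 2 * (0 : ℂ))
      else 0 with hptA
    set ptB : Fin n → ℂ := fun j : Fin n =>
      if (j : ℕ) = 0 then 3 * (t : ℂ) * (1 - 2 * (1 : ℂ))
      else if (j : ℕ) = 1 then 3 * (t : ℂ) ^ 2
      else if (j : ℕ) = 2 then (t : ℂ) ^ 3 * (1 - 2 * (1 : ℂ))
      else 0 with hptB
    have hnormt : ‖(t : ℂ)‖ < 1 := by
      rw [Complex.norm_real, Real.norm_eq_abs, abs_of_pos ht0]; exact ht1
    have hnormt' : ‖(-(t : ℂ))‖ < 1 := by rwa [norm_neg]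
    have hAmem : ptA ∈ symPolydisc n ∩ Lt n t := by
      constructor
      · have := pt_mem_G n hn (t : ℂ) hnormt
        have heq : ptA = (fun j : Fin n => if (j : ℕ) = 0 then 3 * (t : ℂ)
            else if (j : ℕ) = 1 then 3 * (t : ℂ) ^ 2
            else if (j : ℕ) = 2 then (t : ℂ) ^ 3 else 0) := by
          funext j; rw [hptA]; dsimp only; split_ifs <;> ring
        rw [heq]; exact this
      · exact ⟨0, hptA⟩
    have hBmem : ptB ∈ symPolydisc n ∩ Lt n t := by
      constructor
      · have := pt_mem_G n hn (-(t : ℂ)) hnormt'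
        have heq : ptB = (fun j : Fin n => if (j : ℕ) = 0 then 3 * (-(t : ℂ))
            else if (j : ℕ) = 1 then 3 * (-(t : ℂ)) ^ 2
            else if (j : ℕ) = 2 then (-(t : ℂ)) ^ 3 else 0) := by
          funext j; rw [hptB]; dsimp only; split_ifs <;> ring
        rw [heq]; exact this
      · exact ⟨1, hptB⟩
    -- key: every point of the intersection has (p j0).re ≠ 0
    have hkey : ∀ p ∈ symPolydisc n ∩ Lt n t, (p j0).re ≠ 0 := by
      rintro p ⟨⟨z, hz, hzp⟩, lam, hplam⟩
      have hz1 : esym n 1 z = p j0 := congrFun hzp j0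
      have hz2 : esym n 2 z = p j1 := congrFun hzp j1
      have h0 : ∀ k, 4 ≤ k → k ≤ n → esym n k z = 0 := by
        intro k h4 hkn
        have e1 : esym n k z = symMap n z ⟨k - 1, by omega⟩ := by
          rw [symMap]; simp only [Fin.val_mk]; congr 1; omega
        rw [e1, hzp, hplam]
        dsimp only
        rw [if_neg (by omega), if_neg (by omega), if_neg (by omega)]
      have hp1 : p j1 = 3 * (t : ℂ) ^ 2 := by
        rw [hplam]; dsimp only [hj1def]
        norm_num
      have hb := key_bound n z hz h0
      have hsum := newton2 n z
      have habs : ‖(p j0) ^ 2 - ((6 * t ^ 2 : ℝ) : ℂ)‖ < 3 := by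
        have heq : (p j0) ^ 2 - ((6 * t ^ 2 : ℝ) : ℂ) = ∑ j, (z j) ^ 2 := by
          rw [hsum, hz1, hz2, hp1]; push_cast; ring
        rw [heq]; exact hb
      have hre2 : 0 < ((p j0) ^ 2).re := by
        have h1 : |((p j0) ^ 2 - ((6 * t ^ 2 : ℝ) : ℂ)).re|
            ≤ ‖(p j0) ^ 2 - ((6 * t ^ 2 : ℝ) : ℂ)‖ :=
          Complex.abs_re_le_norm _
        have h2 : ((p j0) ^ 2 - ((6 * t ^ 2 : ℝ) : ℂ)).re
            = ((p j0) ^ 2).re - 6 * t ^ 2 := by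
          rw [Complex.sub_re, Complex.ofReal_re]
        rw [h2] at h1
        have hlt := abs_lt.1 (lt_of_le_of_lt h1 habs)
        linarith [ht2, hlt.1]
      intro hre0
      have hmul : ((p j0) ^ 2).re = (p j0).re * (p j0).re - (p j0).im * (p j0).im := by
        rw [sq, Complex.mul_re]
      rw [hmul, hre0] at hre2
      nlinarith [sq_nonneg ((p j0).im)]
    refine ⟨⟨ptA, hAmem⟩, ?_⟩
    intro hpre
    have hcont : Continuous fun q : Fin n → ℂ => (q j0).re :=
      Complex.continuous_re.comp (continuous_apply j0)
    have hU : IsOpen {q : Fin n → ℂ | 0 < (q j0).re} :=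
      isOpen_lt continuous_const hcont
    have hV : IsOpen {q : Fin n → ℂ | (q j0).re < 0} :=
      isOpen_lt hcont continuous_const
    have hsub : symPolydisc n ∩ Lt n t ⊆
        {q : Fin n → ℂ | 0 < (q j0).re} ∪ {q : Fin n → ℂ | (q j0).re < 0} := by
      intro p hp
      rcases lt_or_gt_of_ne (hkey p hp) with h | h
      · exact Or.inr h
      · exact Or.inl h
    have hAre : (ptA j0).re = 3 * t := by
      rw [hptA]; dsimp only [hj0def]
      norm_num
    have hBre : (ptB j0).re = -(3 * t) := by
      rw [hptB]; dsimp only [hj0def]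
      norm_num
    have hUne : ((symPolydisc n ∩ Lt n t) ∩ {q : Fin n → ℂ | 0 < (q j0).re}).Nonempty :=
      ⟨ptA, hAmem, by simp only [Set.mem_setOf_eq, hAre]; positivity⟩
    have hVne : ((symPolydisc n ∩ Lt n t) ∩ {q : Fin n → ℂ | (q j0).re < 0}).Nonempty :=
      ⟨ptB, hBmem, by simp only [Set.mem_setOf_eq, hBre]; nlinarith⟩
    obtain ⟨x, -, hxU, hxV⟩ := hpre _ _ hU hV hsub hUne hVne
    simp only [Set.mem_setOf_eq] at hxU hxV
    linarith
  refine ⟨?_, hmain⟩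
  intro hC
  set t : ℝ := 3 / 4 with htdef
  have ht : 1 / Real.sqrt 2 ≤ t := by
    rw [htdef, div_le_iff₀ hs2]
    have h2 : Real.sqrt 2 * Real.sqrt 2 = 2 := Real.mul_self_sqrt (by norm_num)
    nlinarith [hs2, h2]
  have hres := hmain t ht (by norm_num)
  set a : Fin n → ℂ := fun j : Fin n =>
    if (j : ℕ) = 0 then 3 * (t : ℂ)
    else if (j : ℕ) = 1 then 3 * (t : ℂ) ^ 2
    else if (j : ℕ) = 2 then (t : ℂ) ^ 3 else 0 with hadef
  set b : Fin n → ℂ := fun j : Fin n =>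
    if (j : ℕ) = 0 then -6 * (t : ℂ)
    else if (j : ℕ) = 2 then -2 * (t : ℂ) ^ 3 else 0 with hbdef
  have hb : b ≠ 0 := by
    intro h
    have h0 := congrFun h ⟨0, by omega⟩
    rw [hbdef] at h0
    dsimp only at h0
    rw [if_pos rfl] at h0
    rw [htdef] at h0
    norm_num at h0
  have hline : cxLine a b = Lt n t := by
    ext q
    constructor
    · rintro ⟨ζ, rfl⟩
      refine ⟨ζ, ?_⟩
      funext j
      simp only [Pi.add_apply, Pi.smul_apply, smul_eq_mul, hadef, hbdef]
      split_ifs <;> first | (exfalso; omega) | ring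
    · rintro ⟨lam, rfl⟩
      refine ⟨lam, ?_⟩
      funext j
      simp only [Pi.add_apply, Pi.smul_apply, smul_eq_mul, hadef, hbdef]
      split_ifs <;> first | (exfalso; omega) | ring
  obtain ⟨hconn, -⟩ := hC a b hb (by rw [hline]; exact hres.1)
  rw [hline] at hconn
  exact hres.2 hconn.isPreconnected
end

section
/- Let A, B ∈ Ω_n be matrices in the spectral ball. Then the following are equivalent: (a) A and B have the same characteristic polynomial (equal spectra with multiplicities); (b) there exists an entire holomorphic map φ : ℂ → M_n(ℂ) with φ(ζ) ∈ Ω_n for all ζ ∈ ℂ, φ(0) = A and φ(1) = B. -/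
open Polynomial Matrix

namespace SpecBallAux


abbrev Mat (n : ℕ) := Matrix (Fin n) (Fin n) ℂ

/-- Entrywise differentiability of a matrix-valued map. -/
def EDiff {n : ℕ} (f : ℂ → Mat n) : Prop := ∀ i j, Differentiable ℂ fun ζ => f ζ i j

variable {n : ℕ}

lemma EDiff.const (M : Mat n) : EDiff fun _ => M := fun _ _ => differentiable_const _

lemma EDiff.mul {f g : ℂ → Mat n} (hf : EDiff f) (hg : EDiff g) :
    EDiff fun ζ => f ζ * g ζ := by
  intro i j
  simp only [Matrix.mul_apply]
  exact Differentiable.fun_sum fun k _ => (hf i k).mul (hg k j)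

lemma EDiff.listProd {α : Type*} (L : List α) (F : α → ℂ → Mat n)
    (hF : ∀ t ∈ L, EDiff (F t)) : EDiff fun ζ => (L.map (fun t => F t ζ)).prod := by
  induction L with
  | nil => simpa using EDiff.const 1
  | cons a L ih =>
      simp only [List.map_cons, List.prod_cons]
      exact (hF a (by simp)).mul (ih fun t ht => hF t (by simp [ht]))

lemma EDiff.transvection {i j : Fin n} (c : ℂ) :
    EDiff fun ζ => Matrix.transvection i j (ζ * c) := by
  intro a b
  simp only [Matrix.transvection, Matrix.add_apply, Matrix.single, Matrix.of_apply]
  by_cases h : i = a ∧ j = b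
  · simp only [h, and_self, if_true]
    exact (differentiable_const _).add (differentiable_id.mul (differentiable_const _))
  · rw [show (fun ζ : ℂ => (1 : Mat n) a b + (if i = a ∧ j = b then ζ * c else 0))
        = fun _ : ℂ => (1 : Mat n) a b from funext fun ζ => by simp [h]]
    exact differentiable_const _

lemma EDiff.diagonal (w : Fin n → ℂ) :
    EDiff fun ζ => Matrix.diagonal (fun i => Complex.exp (ζ * w i)) := by
  intro a b
  by_cases h : a = b
  · subst h
    simp only [Matrix.diagonal_apply_eq]
    exact (differentiable_id.mul (differentiable_const _)).cexp
  · simp only [Matrix.diagonal_apply_ne _ h]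
    exact differentiable_const _

/-- products of pointwise-inverse lists -/
lemma prod_mul_reverse_prod {α : Type*} (L : List α) (f g : α → Mat n)
    (h : ∀ t, f t * g t = 1) : (L.map f).prod * (L.reverse.map g).prod = 1 := by
  induction L with
  | nil => simp
  | cons a L ih =>
      simp only [List.map_cons, List.prod_cons, List.reverse_cons, List.map_append,
        List.prod_append, List.map_cons, List.prod_cons, List.prod_nil, mul_one]
      calc f a * (L.map f).prod * ((L.reverse.map g).prod * (g a * (List.map g []).prod))
          = f a * ((L.map f).prod * (L.reverse.map g).prod) * g a := by
            simp only [List.map_nil, List.prod_nil, mul_one, Matrix.mul_assoc]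
        _ = 1 := by rw [ih, Matrix.mul_one, h]




/-- Entire path in GLₙ(ℂ) from 1 to a given invertible matrix, together with an entire inverse. -/
lemma exists_glPath (P Q : Mat n) (hPQ : P * Q = 1) :
    ∃ R S : ℂ → Mat n, EDiff R ∧ EDiff S ∧ R 0 = 1 ∧ R 1 = P ∧
      (∀ ζ, R ζ * S ζ = 1) ∧ (∀ ζ, S ζ * R ζ = 1) := by
  obtain ⟨L, L', D, hdec⟩ := Matrix.Pivot.exists_list_transvec_mul_diagonal_mul_list_transvec P
  have hdetP : P.det ≠ 0 := by
    intro h0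
    have := congrArg Matrix.det hPQ
    rw [Matrix.det_mul, h0, zero_mul, Matrix.det_one] at this
    exact zero_ne_one this
  have hD : ∀ i, D i ≠ 0 := by
    intro i hi
    apply hdetP
    rw [hdec, Matrix.det_mul, Matrix.det_mul, Matrix.TransvectionStruct.det_toMatrix_prod,
      Matrix.TransvectionStruct.det_toMatrix_prod, Matrix.det_diagonal]
    rw [Finset.prod_eq_zero (Finset.mem_univ i) hi]
    ring
  set w : Fin n → ℂ := fun i => Complex.log (D i) with hw
  have hexp : ∀ i, Complex.exp (w i) = D i := fun i => Complex.exp_log (hD i)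
  set F : Matrix.TransvectionStruct (Fin n) ℂ → ℂ → Mat n :=
    fun t ζ => Matrix.transvection t.i t.j (ζ * t.c) with hF
  set G : Matrix.TransvectionStruct (Fin n) ℂ → ℂ → Mat n :=
    fun t ζ => Matrix.transvection t.i t.j (-(ζ * t.c)) with hG
  have hFG : ∀ t ζ, F t ζ * G t ζ = 1 := by
    intro t ζ
    rw [hF, hG]
    simp only
    rw [Matrix.transvection_mul_transvection_same _ _ t.hij, add_neg_cancel,
      Matrix.transvection_zero]
  have hGF : ∀ t ζ, G t ζ * F t ζ = 1 := by
    intro t ζ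
    rw [hF, hG]
    simp only
    rw [Matrix.transvection_mul_transvection_same _ _ t.hij, neg_add_cancel,
      Matrix.transvection_zero]
  refine ⟨fun ζ => (L.map (fun t => F t ζ)).prod *
      Matrix.diagonal (fun i => Complex.exp (ζ * w i)) * (L'.map (fun t => F t ζ)).prod,
    fun ζ => (L'.reverse.map (fun t => G t ζ)).prod *
      Matrix.diagonal (fun i => Complex.exp (-(ζ * w i))) * (L.reverse.map (fun t => G t ζ)).prod,
    ?_, ?_, ?_, ?_, ?_, ?_⟩
  · exact ((EDiff.listProd L F (fun t _ => EDiff.transvection t.c)).mul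
      (EDiff.diagonal w)).mul (EDiff.listProd L' F (fun t _ => EDiff.transvection t.c))
  · have h1 : ∀ t : Matrix.TransvectionStruct (Fin n) ℂ, EDiff (G t) := by
      intro t
      have := EDiff.transvection (i := t.i) (j := t.j) (-t.c)
      simpa [hG, mul_neg, neg_mul] using this
    have h2 : EDiff fun ζ => Matrix.diagonal (fun i => Complex.exp (-(ζ * w i))) := by
      have := EDiff.diagonal (fun i => -w i)
      simpa [mul_neg] using this
    exact ((EDiff.listProd L'.reverse G (fun t _ => h1 t)).mul h2).mul
      (EDiff.listProd L.reverse G (fun t _ => h1 t))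
  · have hz : ∀ t : Matrix.TransvectionStruct (Fin n) ℂ, F t 0 = 1 := by
      intro t; simp [hF]
    simp only [hz]
    rw [List.prod_eq_one, List.prod_eq_one]
    · simp
    · intro x hx; rcases List.mem_map.1 hx with ⟨t, _, rfl⟩; rfl
    · intro x hx; rcases List.mem_map.1 hx with ⟨t, _, rfl⟩; rfl
  · have hone : ∀ t : Matrix.TransvectionStruct (Fin n) ℂ, F t 1 = t.toMatrix := by
      intro t; simp [hF, Matrix.TransvectionStruct.toMatrix]
    simp only [hone, one_mul, hexp]
    exact hdec.symm
  · intro ζ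
    have e1 : (L'.map (fun t => F t ζ)).prod * (L'.reverse.map (fun t => G t ζ)).prod = 1 :=
      prod_mul_reverse_prod L' _ _ (fun t => hFG t ζ)
    have e2 : (L.map (fun t => F t ζ)).prod * (L.reverse.map (fun t => G t ζ)).prod = 1 :=
      prod_mul_reverse_prod L _ _ (fun t => hFG t ζ)
    have e3 : Matrix.diagonal (fun i => Complex.exp (ζ * w i)) *
        Matrix.diagonal (fun i => Complex.exp (-(ζ * w i))) = 1 := by
      rw [Matrix.diagonal_mul_diagonal]
      have : (fun i => Complex.exp (ζ * w i) * Complex.exp (-(ζ * w i))) = fun _ => (1 : ℂ) := by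
        funext i; rw [← Complex.exp_add]; simp
      rw [this, Matrix.diagonal_one]
    calc (L.map (fun t => F t ζ)).prod * Matrix.diagonal (fun i => Complex.exp (ζ * w i)) *
          (L'.map (fun t => F t ζ)).prod *
          ((L'.reverse.map (fun t => G t ζ)).prod *
            Matrix.diagonal (fun i => Complex.exp (-(ζ * w i))) *
            (L.reverse.map (fun t => G t ζ)).prod)
        = (L.map (fun t => F t ζ)).prod * (Matrix.diagonal (fun i => Complex.exp (ζ * w i)) *
            (((L'.map (fun t => F t ζ)).prod * (L'.reverse.map (fun t => G t ζ)).prod) *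
            (Matrix.diagonal (fun i => Complex.exp (-(ζ * w i))) *
            (L.reverse.map (fun t => G t ζ)).prod))) := by
          simp only [Matrix.mul_assoc]
      _ = 1 := by
            rw [e1, Matrix.one_mul,
              ← Matrix.mul_assoc (Matrix.diagonal _) (Matrix.diagonal _), e3, Matrix.one_mul, e2]
  · intro ζ
    have e1 : (L'.reverse.map (fun t => G t ζ)).prod * (L'.map (fun t => F t ζ)).prod = 1 := by
      have := prod_mul_reverse_prod L'.reverse (fun t => G t ζ) (fun t => F t ζ)
        (fun t => hGF t ζ)
      simpa using this
    have e2 : (L.reverse.map (fun t => G t ζ)).prod * (L.map (fun t => F t ζ)).prod = 1 := by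
      have := prod_mul_reverse_prod L.reverse (fun t => G t ζ) (fun t => F t ζ)
        (fun t => hGF t ζ)
      simpa using this
    have e3 : Matrix.diagonal (fun i => Complex.exp (-(ζ * w i))) *
        Matrix.diagonal (fun i => Complex.exp (ζ * w i)) = 1 := by
      rw [Matrix.diagonal_mul_diagonal]
      have : (fun i => Complex.exp (-(ζ * w i)) * Complex.exp (ζ * w i)) = fun _ => (1 : ℂ) := by
        funext i; rw [← Complex.exp_add]; simp
      rw [this, Matrix.diagonal_one]
    calc (L'.reverse.map (fun t => G t ζ)).prod *
          Matrix.diagonal (fun i => Complex.exp (-(ζ * w i))) *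
          (L.reverse.map (fun t => G t ζ)).prod *
          ((L.map (fun t => F t ζ)).prod * Matrix.diagonal (fun i => Complex.exp (ζ * w i)) *
            (L'.map (fun t => F t ζ)).prod)
        = (L'.reverse.map (fun t => G t ζ)).prod *
            (Matrix.diagonal (fun i => Complex.exp (-(ζ * w i))) *
            (((L.reverse.map (fun t => G t ζ)).prod * (L.map (fun t => F t ζ)).prod) *
            (Matrix.diagonal (fun i => Complex.exp (ζ * w i)) *
            (L'.map (fun t => F t ζ)).prod))) := by
          simp only [Matrix.mul_assoc]
      _ = 1 := by
            rw [e2, Matrix.one_mul,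
              ← Matrix.mul_assoc (Matrix.diagonal _) (Matrix.diagonal _), e3, Matrix.one_mul, e1]


lemma charpoly_conj (P Q M : Mat n) (hPQ : P * Q = 1) :
    (P * M * Q).charpoly = M.charpoly := by
  have hmap : ∀ (X Y : Mat n), (C : ℂ →+* ℂ[X]).mapMatrix (X * Y)
      = (C : ℂ →+* ℂ[X]).mapMatrix X * (C : ℂ →+* ℂ[X]).mapMatrix Y :=
    fun X Y => map_mul _ X Y
  set Pc := (C : ℂ →+* ℂ[X]).mapMatrix P with hPc
  set Qc := (C : ℂ →+* ℂ[X]).mapMatrix Q with hQc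
  have hPcQc : Pc * Qc = 1 := by
    rw [hPc, hQc, ← hmap, hPQ]
    exact RingHom.map_one (C : ℂ →+* ℂ[X]).mapMatrix
  have hc : charmatrix (P * M * Q) = Pc * charmatrix M * Qc := by
    rw [charmatrix, charmatrix, Matrix.mul_sub, Matrix.sub_mul]
    congr 1
    · -- Pc * scalar X * Qc = scalar X
      have hcomm : Matrix.scalar (Fin n) (X : ℂ[X]) * Qc = Qc * Matrix.scalar (Fin n) (X : ℂ[X]) :=
        (Matrix.scalar_commute (X : ℂ[X]) (fun r => Commute.all _ r) Qc)
      rw [Matrix.mul_assoc, hcomm, ← Matrix.mul_assoc, hPcQc, Matrix.one_mul]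
    · rw [hmap, hmap]
  rw [Matrix.charpoly, Matrix.charpoly, hc, Matrix.det_mul, Matrix.det_mul]
  have : Pc.det * (charmatrix M).det * Qc.det = (charmatrix M).det * (Pc.det * Qc.det) := by ring
  rw [this, ← Matrix.det_mul, hPcQc, Matrix.det_one, mul_one]

lemma eval_charpoly (M : Mat n) (x : ℂ) :
    M.charpoly.eval x = (Matrix.scalar (Fin n) x - M).det := by
  rw [Matrix.charpoly, eval_det, Matrix.matPolyEquiv_charmatrix]
  simp

/-- The sum-decomposition equivalence `Fin 1 ⊕ Fin n ≃ Fin (n+1)`. -/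
def finE (n : ℕ) : Fin 1 ⊕ Fin n ≃ Fin (n + 1) where
  toFun := Sum.elim (fun _ => 0) Fin.succ
  invFun := Fin.cases (Sum.inl 0) Sum.inr
  left_inv := by
    rintro (a | j)
    · simp [Subsingleton.elim a 0]
    · simp
  right_inv := by
    intro i
    induction i using Fin.cases <;> simp

@[simp] lemma finE_symm_zero : (finE n).symm 0 = Sum.inl 0 := by simp [finE]
@[simp] lemma finE_symm_succ (j : Fin n) : (finE n).symm j.succ = Sum.inr j := by simp [finE]

lemma triangularize : ∀ (n : ℕ) (M : Mat n) (d : Fin n → ℂ),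
    M.charpoly = ∏ i, (X - C (d i)) →
    ∃ P Q T : Mat n, P * Q = 1 ∧ M = P * T * Q ∧ T.BlockTriangular id ∧ ∀ i, T i i = d i := by
  intro n
  induction n with
  | zero =>
      intro M d _
      refine ⟨1, 1, M, by simp, by simp, fun i j h => i.elim0, fun i => i.elim0⟩
  | succ n IH =>
      intro M d h
      -- find an eigenvector for d 0
      have heval : M.charpoly.eval (d 0) = 0 := by
        rw [h, eval_prod]
        refine Finset.prod_eq_zero (Finset.mem_univ 0) ?_
        simp
      have hdet : (Matrix.scalar (Fin (n+1)) (d 0) - M).det = 0 := by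
        rw [← eval_charpoly]; exact heval
      obtain ⟨v, hv0, hv⟩ := (Matrix.exists_mulVec_eq_zero_iff).2 hdet
      have hMv : M.mulVec v = d 0 • v := by
        have := hv
        rw [Matrix.sub_mulVec] at this
        have hscal : (Matrix.scalar (Fin (n+1)) (d 0)).mulVec v = d 0 • v := by
          rw [show Matrix.scalar (Fin (n+1)) (d 0) = (d 0) • (1 : Mat (n+1)) by
            simp [Matrix.smul_one_eq_diagonal, Matrix.scalar]
          , Matrix.smul_mulVec, Matrix.one_mulVec]
        rw [hscal] at this
        exact (sub_eq_zero.mp this).symm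
      obtain ⟨k, hk⟩ : ∃ k, v k ≠ 0 := by
        by_contra hc
        push_neg at hc
        exact hv0 (funext fun i => hc i)
      set τ : Equiv.Perm (Fin (n+1)) := Equiv.swap 0 k with hτ
      set P₁ : Mat (n+1) := (1 : Mat (n+1)).updateCol 0 (fun i => v (τ i)) with hP₁
      have hdetP₁ : P₁.det = v k := by
        have := congr_fun (congr_fun (congrArg (DFunLike.coe) (Matrix.cramer_one
          (n := Fin (n+1)) (α := ℂ))) (fun i => v (τ i))) 0
        rw [Matrix.cramer_apply] at this
        rw [hP₁, this, hτ]
        exact congrArg v (Equiv.swap_apply_left 0 k)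
      set P₀ : Mat (n+1) := P₁.submatrix τ id with hP₀def
      have hdetP₀ : IsUnit P₀.det := by
        rw [hP₀def, Matrix.det_permute, hdetP₁]
        apply IsUnit.mul _ (Ne.isUnit hk)
        rcases Int.units_eq_one_or (Equiv.Perm.sign τ) with hs | hs <;>
          · rw [hs]; simp
      have hP₀col : ∀ i, P₀ i 0 = v i := by
        intro i
        rw [hP₀def, Matrix.submatrix_apply, hP₁, id]
        rw [Matrix.updateCol_self, hτ]
        exact congrArg v (Equiv.swap_apply_self 0 k i)
      set Q₀ : Mat (n+1) := P₀⁻¹ with hQ₀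
      have hQP : Q₀ * P₀ = 1 := Matrix.nonsing_inv_mul _ hdetP₀
      have hPQ : P₀ * Q₀ = 1 := Matrix.mul_nonsing_inv _ hdetP₀
      set M' : Mat (n+1) := Q₀ * M * P₀ with hM'def
      have hMP₀ : ∀ i, (M * P₀) i 0 = d 0 * v i := by
        intro i
        rw [Matrix.mul_apply]
        have : ∑ j, M i j * P₀ j 0 = ∑ j, M i j * v j := by
          refine Finset.sum_congr rfl fun j _ => by rw [hP₀col]
        rw [this]
        have : M.mulVec v i = d 0 • v i := by rw [hMv]; rfl
        rw [Matrix.mulVec, dotProduct] at this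
        rw [this]; rfl
      have hcol : ∀ i, M' i 0 = if i = 0 then d 0 else 0 := by
        intro i
        rw [hM'def, Matrix.mul_assoc, Matrix.mul_apply]
        have : ∑ j, Q₀ i j * (M * P₀) j 0 = d 0 * ∑ j, Q₀ i j * v j := by
          rw [Finset.mul_sum]
          refine Finset.sum_congr rfl fun j _ => by rw [hMP₀]; ring
        rw [this]
        have hQv : ∑ j, Q₀ i j * v j = (1 : Mat (n+1)) i 0 := by
          have : ∑ j, Q₀ i j * v j = ∑ j, Q₀ i j * P₀ j 0 := by
            refine Finset.sum_congr rfl fun j _ => by rw [hP₀col]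
          rw [this, ← Matrix.mul_apply, hQP]
        rw [hQv]
        by_cases hi : i = 0
        · subst hi; simp
        · simp [Matrix.one_apply, hi]
      set M'' : Mat n := Matrix.of (fun i j => M' i.succ j.succ) with hM''
      set rr : Matrix (Fin 1) (Fin n) ℂ := Matrix.of (fun _ j => M' 0 j.succ) with hrr
      set Db : Matrix (Fin 1) (Fin 1) ℂ := Matrix.of (fun _ _ => d 0) with hDb
      have hM'blocks : M' = (Matrix.reindex (finE n) (finE n)) (Matrix.fromBlocks Db rr 0 M'') := by
        ext i j
        rw [Matrix.reindex_apply, Matrix.submatrix_apply]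
        refine Fin.cases ?_ (fun a => ?_) i <;> refine Fin.cases ?_ (fun b => ?_) j
        · rw [finE_symm_zero, Matrix.fromBlocks_apply₁₁, hcol]; simp [hDb]
        · rw [finE_symm_zero, finE_symm_succ, Matrix.fromBlocks_apply₁₂]; simp [hrr]
        · rw [finE_symm_zero, finE_symm_succ, Matrix.fromBlocks_apply₂₁, hcol]
          simp [Fin.succ_ne_zero]
        · rw [finE_symm_succ, finE_symm_succ, Matrix.fromBlocks_apply₂₂]; simp [hM'']
      have hcharM' : M'.charpoly = M.charpoly := charpoly_conj Q₀ P₀ M hQP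
      have hDbtri : Db.BlockTriangular id := by
        intro i j hij
        exact absurd (Subsingleton.elim i j) (by intro hh; rw [hh] at hij; exact lt_irrefl _ hij)
      have hDbchar : Db.charpoly = X - C (d 0) := by
        rw [Matrix.charpoly_of_upperTriangular Db hDbtri]
        rw [show (Finset.univ : Finset (Fin 1)) = {0} by rfl]
        simp [hDb]
      have hsplit : M.charpoly = (X - C (d 0)) * M''.charpoly := by
        rw [← hcharM', hM'blocks, Matrix.charpoly_reindex, Matrix.charpoly_fromBlocks_zero₂₁,
          hDbchar]
      have hprod : (X - C (d 0)) * ∏ i : Fin n, (X - C (d i.succ)) = ∏ i : Fin (n+1), (X - C (d i)) := by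
        rw [Fin.prod_univ_succ]
      have hM''char : M''.charpoly = ∏ i : Fin n, (X - C (d i.succ)) := by
        have h1 : (X - C (d 0)) * M''.charpoly = (X - C (d 0)) * ∏ i : Fin n, (X - C (d i.succ)) := by
          rw [← hsplit, h, ← hprod]
        exact mul_left_cancel₀ (Polynomial.X_sub_C_ne_zero (d 0)) h1
      obtain ⟨P', Q', T', hP'Q', hM''dec, htri', hdiag'⟩ := IH M'' (fun i => d i.succ) hM''char
      set Rb : Matrix (Fin 1 ⊕ Fin n) (Fin 1 ⊕ Fin n) ℂ := Matrix.fromBlocks 1 0 0 P' with hRb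
      set Sb : Matrix (Fin 1 ⊕ Fin n) (Fin 1 ⊕ Fin n) ℂ := Matrix.fromBlocks 1 0 0 Q' with hSb
      set Tb : Matrix (Fin 1 ⊕ Fin n) (Fin 1 ⊕ Fin n) ℂ := Matrix.fromBlocks Db (rr * P') 0 T' with hTb
      have hRbSb : Rb * Sb = 1 := by
        rw [hRb, hSb, Matrix.fromBlocks_multiply]
        simp [hP'Q', Matrix.fromBlocks_one]
      have hblockdec : Matrix.fromBlocks Db rr 0 M'' = Rb * Tb * Sb := by
        rw [hRb, hTb, hSb, Matrix.fromBlocks_multiply, Matrix.fromBlocks_multiply]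
        simp only [Matrix.mul_one, Matrix.one_mul, Matrix.mul_zero, Matrix.zero_mul,
          add_zero, zero_add]
        rw [Matrix.mul_assoc rr, hP'Q', Matrix.mul_one, ← hM''dec]
      have hremul : ∀ N N' : Matrix (Fin 1 ⊕ Fin n) (Fin 1 ⊕ Fin n) ℂ,
          (Matrix.reindex (finE n) (finE n)) (N * N')
            = (Matrix.reindex (finE n) (finE n)) N * (Matrix.reindex (finE n) (finE n)) N' := by
        intro N N'
        simp only [Matrix.reindex_apply]
        rw [Matrix.submatrix_mul_equiv]
      refine ⟨P₀ * (Matrix.reindex (finE n) (finE n)) Rb,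
        (Matrix.reindex (finE n) (finE n)) Sb * Q₀,
        (Matrix.reindex (finE n) (finE n)) Tb, ?_, ?_, ?_, ?_⟩
      · rw [Matrix.mul_assoc, ← Matrix.mul_assoc ((Matrix.reindex (finE n) (finE n)) Rb),
          ← hremul, hRbSb]
        have hone : (Matrix.reindex (finE n) (finE n)) (1 : Matrix (Fin 1 ⊕ Fin n) (Fin 1 ⊕ Fin n) ℂ) = 1 := by
          simp only [Matrix.reindex_apply]; exact Matrix.submatrix_one_equiv _
        rw [hone, Matrix.one_mul, hPQ]
      · have hM : M = P₀ * M' * Q₀ := by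
          rw [hM'def]
          rw [← Matrix.mul_assoc, ← Matrix.mul_assoc, hPQ, Matrix.one_mul, Matrix.mul_assoc, hPQ,
            Matrix.mul_one]
        rw [hM, hM'blocks, hblockdec, hremul, hremul]
        simp only [Matrix.mul_assoc]
      · intro i j hij
        simp only [Matrix.reindex_apply, Matrix.submatrix_apply]
        induction i using Fin.cases with
        | zero => exact absurd hij (by simp)
        | succ a =>
          induction j using Fin.cases with
          | zero =>
            rw [finE_symm_zero, finE_symm_succ, hTb, Matrix.fromBlocks_apply₂₁]
            rfl
          | succ b =>
            rw [finE_symm_succ, finE_symm_succ, hTb, Matrix.fromBlocks_apply₂₂]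
            refine htri' ?_
            have : (b.succ : Fin (n+1)) < a.succ := hij
            exact Fin.succ_lt_succ_iff.mp this
      · intro i
        induction i using Fin.cases with
        | zero =>
          simp only [Matrix.reindex_apply, Matrix.submatrix_apply, finE_symm_zero]
          rw [hTb, Matrix.fromBlocks_apply₁₁]
          simp [hDb]
        | succ a =>
          simp only [Matrix.reindex_apply, Matrix.submatrix_apply, finE_symm_succ]
          rw [hTb, Matrix.fromBlocks_apply₂₂]
          exact hdiag' a




/-- enumerate a multiset of known cardinality by a tuple -/
lemma exists_enum : ∀ (n : ℕ) (s : Multiset ℂ), Multiset.card s = n →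
    ∃ d : Fin n → ℂ, ((List.ofFn d : List ℂ) : Multiset ℂ) = s := by
  intro n
  induction n with
  | zero =>
      intro s hs
      exact ⟨fun i => i.elim0, by simpa using (Multiset.card_eq_zero.mp hs).symm⟩
  | succ n IH =>
      intro s hs
      have hpos : 0 < Multiset.card s := by omega
      obtain ⟨a, ha⟩ := Multiset.card_pos_iff_exists_mem.mp hpos
      have herase : Multiset.card (s.erase a) = n := by
        have := Multiset.card_erase_of_mem ha
        rw [this, hs]
        rfl
      obtain ⟨d', hd'⟩ := IH (s.erase a) herase
      refine ⟨Fin.cons a d', ?_⟩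
      rw [List.ofFn_succ]
      simp only [Fin.cons_zero, Fin.cons_succ]
      have : ((a :: List.ofFn d' : List ℂ) : Multiset ℂ) = a ::ₘ (List.ofFn d' : List ℂ) := rfl
      rw [this, hd', Multiset.cons_erase ha]

/-- entrywise differentiable matrix families have differentiable determinant -/
lemma diff_det (f : ℂ → Matrix (Fin n) (Fin n) ℂ)
    (hf : ∀ i j, Differentiable ℂ fun ζ => f ζ i j) :
    Differentiable ℂ fun ζ => (f ζ).det := by
  have : (fun ζ => (f ζ).det) = fun ζ =>
      ∑ σ : Equiv.Perm (Fin n), (Equiv.Perm.sign σ : ℂ) * ∏ i, f ζ (σ i) i := by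
    funext ζ
    rw [Matrix.det_apply]
    refine Finset.sum_congr rfl fun σ _ => ?_
    rw [Units.smul_def, zsmul_eq_mul]
  rw [this]
  refine Differentiable.fun_sum fun σ _ => ?_
  exact (differentiable_const _).mul (Differentiable.fun_finsetProd fun i _ => hf (σ i) i)

lemma norm_multiset_prod_le (s : Multiset ℂ) (c : ℝ) (hc : 0 ≤ c)
    (h : ∀ a ∈ s, ‖a‖ ≤ c) : ‖s.prod‖ ≤ c ^ (Multiset.card s) := by
  induction s using Multiset.induction_on with
  | empty => simp
  | cons a s IH =>
      rw [Multiset.prod_cons, Multiset.card_cons]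
      calc ‖a * s.prod‖ = ‖a‖ * ‖s.prod‖ := norm_mul _ _
        _ ≤ c * c ^ (Multiset.card s) := by
            apply mul_le_mul (h a (Multiset.mem_cons_self a s))
              (IH fun b hb => h b (Multiset.mem_cons_of_mem hb)) (norm_nonneg _)
              hc
        _ = c ^ (Multiset.card s + 1) := (pow_succ' c _).symm



end SpecBallAux

/-- The spectral ball `Ωₙ`: `n × n` complex matrices all of whose eigenvalues lie
in the open unit disc. -/
def specBall (n : ℕ) : Set (Fin n → Fin n → ℂ) :=
  {A | ∀ μ ∈ (Matrix.of A).charpoly.roots, ‖μ‖ < 1}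

open SpecBallAux in
/-- for `A, B ∈ Ωₙ` the following are equivalent:
(a) `A` and `B` have the same characteristic polynomial (equal spectra with
multiplicities); (b) there is an entire holomorphic map `φ : ℂ → Mₙ(ℂ)` with values
in `Ωₙ` such that `φ(0) = A` and `φ(1) = B`. -/
theorem same_spectrum_iff_entire_curve (n : ℕ) (A B : Fin n → Fin n → ℂ)
    (hA : A ∈ specBall n) (hB : B ∈ specBall n) :
    (Matrix.of A).charpoly = (Matrix.of B).charpoly ↔
      ∃ φ : ℂ → (Fin n → Fin n → ℂ), Differentiable ℂ φ ∧
        (∀ ζ : ℂ, φ ζ ∈ specBall n) ∧ φ 0 = A ∧ φ 1 = B := by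
  constructor
  · -- (a) → (b) : construct the entire curve
    intro hchar
    have hmon : (Matrix.of A).charpoly.Monic := Matrix.charpoly_monic _
    have hsplits : ((Matrix.of A).charpoly).Splits :=
      IsAlgClosed.splits _
    have hdeg : (Matrix.of A).charpoly.natDegree = n := by
      rw [Matrix.charpoly_natDegree_eq_dim]; exact Fintype.card_fin n
    have hcard : Multiset.card ((Matrix.of A).charpoly.roots) = n := by
      rw [(Polynomial.splits_iff_card_roots).mp hsplits, hdeg]
    obtain ⟨d, hd⟩ := exists_enum n ((Matrix.of A).charpoly.roots) hcard
    have hdmem : ∀ i, d i ∈ (Matrix.of A).charpoly.roots := by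
      intro i
      rw [← hd]
      exact Multiset.mem_coe.mpr ((List.mem_ofFn (f := d) (a := d i)).mpr ⟨i, rfl⟩)
    have hdnorm : ∀ i, ‖d i‖ < 1 := fun i => hA _ (hdmem i)
    have hofn : (((List.ofFn d : List ℂ) : Multiset ℂ).map (fun a => X - C a)).prod
        = ∏ i, (X - C (d i)) := by
      rw [Multiset.map_coe, Multiset.prod_coe, List.map_ofFn, List.prod_ofFn]
      rfl
    have hprodA : (Matrix.of A).charpoly = ∏ i, (X - C (d i)) := by
      have h1 := hsplits.eq_prod_roots_of_monic hmon
      rw [h1, ← hd, hofn]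
    have hprodB : (Matrix.of B).charpoly = ∏ i, (X - C (d i)) := by
      rw [← hchar]; exact hprodA
    obtain ⟨P₁, Q₁, T₁, hPQ₁, hdec₁, htri₁, hdiag₁⟩ := triangularize n (Matrix.of A) d hprodA
    obtain ⟨P₂, Q₂, T₂, hPQ₂, hdec₂, htri₂, hdiag₂⟩ := triangularize n (Matrix.of B) d hprodB
    obtain ⟨R₁, S₁, hR₁d, hS₁d, hR₁0, hR₁1, hRS₁, hSR₁⟩ := exists_glPath P₁ Q₁ hPQ₁
    obtain ⟨R₂, S₂, hR₂d, hS₂d, hR₂0, hR₂1, hRS₂, hSR₂⟩ := exists_glPath P₂ Q₂ hPQ₂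
    set Mid : ℂ → Mat n := fun ζ => (1-ζ) • T₁ + ζ • T₂ with hMid
    set G : ℂ → Mat n := fun ζ => R₁ (1-ζ) * R₂ ζ with hG
    set H : ℂ → Mat n := fun ζ => S₂ ζ * S₁ (1-ζ) with hH
    have hGH : ∀ ζ, G ζ * H ζ = 1 := by
      intro ζ
      rw [hG, hH]
      calc R₁ (1-ζ) * R₂ ζ * (S₂ ζ * S₁ (1-ζ))
          = R₁ (1-ζ) * ((R₂ ζ * S₂ ζ) * S₁ (1-ζ)) := by simp only [Matrix.mul_assoc]
        _ = 1 := by rw [hRS₂, Matrix.one_mul, hRS₁]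
    have hGd : EDiff G := by
      have h1 : EDiff fun ζ => R₁ (1-ζ) := by
        intro i j
        exact (hR₁d i j).comp ((differentiable_const (1:ℂ)).sub differentiable_id)
      exact h1.mul hR₂d
    have hHd : EDiff H := by
      have h1 : EDiff fun ζ => S₁ (1-ζ) := by
        intro i j
        exact (hS₁d i j).comp ((differentiable_const (1:ℂ)).sub differentiable_id)
      exact hS₂d.mul h1
    have hMidd : EDiff Mid := by
      intro i j
      simp only [hMid, Matrix.add_apply, Matrix.smul_apply, smul_eq_mul]
      exact (((differentiable_const (1:ℂ)).sub differentiable_id).mul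
        (differentiable_const _)).add (differentiable_id.mul (differentiable_const _))
    have hMidtri : ∀ ζ, (Mid ζ).BlockTriangular id := by
      intro ζ i j hij
      simp only [hMid, Matrix.add_apply, Matrix.smul_apply, smul_eq_mul,
        htri₁ hij, htri₂ hij, mul_zero, add_zero]
    have hMiddiag : ∀ ζ i, Mid ζ i i = d i := by
      intro ζ i
      simp only [hMid, Matrix.add_apply, Matrix.smul_apply, smul_eq_mul, hdiag₁ i, hdiag₂ i]
      ring
    have hφd : EDiff fun ζ => G ζ * Mid ζ * H ζ := (hGd.mul hMidd).mul hHd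
    refine ⟨fun ζ => G ζ * Mid ζ * H ζ, ?_, ?_, ?_, ?_⟩
    · exact differentiable_pi.mpr fun i => differentiable_pi.mpr fun j => hφd i j
    · intro ζ μ hμ
      have hcp : (Matrix.of (G ζ * Mid ζ * H ζ)).charpoly = ∏ i, (X - C (d i)) := by
        have h1 : Matrix.of (G ζ * Mid ζ * H ζ) = G ζ * Mid ζ * H ζ := rfl
        rw [h1, charpoly_conj _ _ _ (hGH ζ),
          Matrix.charpoly_of_upperTriangular _ (hMidtri ζ)]
        exact Finset.prod_congr rfl fun i _ => by rw [hMiddiag ζ i]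
      rw [hcp, ← hofn, Polynomial.roots_multiset_prod_X_sub_C] at hμ
      obtain ⟨i, hi⟩ := (List.mem_ofFn (f := d) (a := μ)).mp (Multiset.mem_coe.mp hμ)
      rw [← hi]
      exact hdnorm i
    · have hS₂0 : S₂ 0 = 1 := by
        have := hRS₂ 0
        rwa [hR₂0, Matrix.one_mul] at this
      have hS₁1 : S₁ 1 = Q₁ := by
        have h1 : P₁ * S₁ 1 = 1 := by rw [← hR₁1]; exact hRS₁ 1
        have hQP₁ : Q₁ * P₁ = 1 := mul_eq_one_comm.mp hPQ₁
        calc S₁ 1 = (Q₁ * P₁) * S₁ 1 := by rw [hQP₁, Matrix.one_mul]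
          _ = Q₁ * (P₁ * S₁ 1) := by rw [Matrix.mul_assoc]
          _ = Q₁ := by rw [h1, Matrix.mul_one]
      have hG0 : G 0 = P₁ := by
        rw [hG]
        simp only
        rw [show (1:ℂ) - 0 = 1 by ring, hR₁1, hR₂0, Matrix.mul_one]
      have hH0 : H 0 = Q₁ := by
        rw [hH]
        simp only
        rw [show (1:ℂ) - 0 = 1 by ring, hS₂0, hS₁1, Matrix.one_mul]
      have hMid0 : Mid 0 = T₁ := by
        rw [hMid]
        simp only
        rw [show (1:ℂ) - 0 = 1 by ring, one_smul, zero_smul, add_zero]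
      show G 0 * Mid 0 * H 0 = A
      rw [hG0, hH0, hMid0, ← hdec₁]
      rfl
    · have hS₁0 : S₁ 0 = 1 := by
        have := hRS₁ 0
        rwa [hR₁0, Matrix.one_mul] at this
      have hS₂1 : S₂ 1 = Q₂ := by
        have h1 : P₂ * S₂ 1 = 1 := by rw [← hR₂1]; exact hRS₂ 1
        have hQP₂ : Q₂ * P₂ = 1 := mul_eq_one_comm.mp hPQ₂
        calc S₂ 1 = (Q₂ * P₂) * S₂ 1 := by rw [hQP₂, Matrix.one_mul]
          _ = Q₂ * (P₂ * S₂ 1) := by rw [Matrix.mul_assoc]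
          _ = Q₂ := by rw [h1, Matrix.mul_one]
      have hG1 : G 1 = P₂ := by
        rw [hG]
        simp only
        rw [show (1:ℂ) - 1 = 0 by ring, hR₁0, hR₂1, Matrix.one_mul]
      have hH1 : H 1 = Q₂ := by
        rw [hH]
        simp only
        rw [show (1:ℂ) - 1 = 0 by ring, hS₁0, hS₂1, Matrix.mul_one]
      have hMid1 : Mid 1 = T₂ := by
        rw [hMid]
        simp only
        rw [show (1:ℂ) - 1 = 0 by ring, one_smul, zero_smul, zero_add]
      show G 1 * Mid 1 * H 1 = B
      rw [hG1, hH1, hMid1, ← hdec₂]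
      rfl
  · -- (b) → (a) : Liouville
    rintro ⟨φ, hdiff, hball, h0, h1⟩
    have hent : ∀ i j, Differentiable ℂ fun ζ => φ ζ i j := fun i j =>
      differentiable_pi.mp (differentiable_pi.mp hdiff i) j
    apply Polynomial.funext
    intro z
    set g : ℂ → ℂ := fun ζ => (Matrix.scalar (Fin n) z - Matrix.of (φ ζ)).det with hg
    have hgeval : ∀ ζ, g ζ = ((Matrix.of (φ ζ)).charpoly).eval z := fun ζ =>
      (SpecBallAux.eval_charpoly _ _).symm
    have hgd : Differentiable ℂ g := by
      apply diff_det
      intro i j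
      have : (fun ζ => (Matrix.scalar (Fin n) z - Matrix.of (φ ζ)) i j)
          = fun ζ => (Matrix.scalar (Fin n) z) i j - φ ζ i j := by
        funext ζ
        rw [Matrix.sub_apply]
        rfl
      rw [this]
      exact (differentiable_const _).sub (hent i j)
    have hbound : ∀ ζ, ‖g ζ‖ ≤ (‖z‖ + 1) ^ n := by
      intro ζ
      have hmon : (Matrix.of (φ ζ)).charpoly.Monic := Matrix.charpoly_monic _
      have hsplits : ((Matrix.of (φ ζ)).charpoly).Splits :=
        IsAlgClosed.splits _
      have hcard : Multiset.card ((Matrix.of (φ ζ)).charpoly.roots) = n := by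
        rw [(Polynomial.splits_iff_card_roots).mp hsplits,
          Matrix.charpoly_natDegree_eq_dim]
        exact Fintype.card_fin n
      rw [hgeval ζ, hsplits.eq_prod_roots_of_monic hmon,
        Polynomial.eval_multiset_prod, Multiset.map_map]
      have hle := norm_multiset_prod_le
        (((Matrix.of (φ ζ)).charpoly.roots).map (Polynomial.eval z ∘ fun a => X - C a))
        (‖z‖ + 1) (by positivity) ?_
      · rwa [Multiset.card_map, hcard] at hle
      · intro b hb
        obtain ⟨a, ha, rfl⟩ := Multiset.mem_map.mp hb
        have : (Polynomial.eval z ∘ fun a => X - C a) a = z - a := by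
          simp
        rw [this]
        calc ‖z - a‖ ≤ ‖z‖ + ‖a‖ := norm_sub_le _ _
          _ ≤ ‖z‖ + 1 := by
              have := le_of_lt (hball ζ a ha)
              linarith
    have hrange : Bornology.IsBounded (Set.range g) := by
      apply Bornology.IsBounded.subset (Metric.isBounded_closedBall
        (x := (0:ℂ)) (r := (‖z‖ + 1) ^ n))
      rintro _ ⟨ζ, rfl⟩
      rw [Metric.mem_closedBall, dist_zero_right]
      exact hbound ζ
    have hkey := hgd.apply_eq_apply_of_bounded hrange 0 1
    rw [hgeval 0, hgeval 1, h0, h1] at hkey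
    exact hkey
end

section
/- The convex hull of the spectral ball Ω_n is exactly the set of n×n complex matrices A with |trace(A)| < n; that is, convexHull(Ω_n) = {A ∈ M_n(ℂ) : |tr A|/n < 1}. -/
open Matrix Polynomial Finset

namespace SpecBallAux


variable {n : ℕ}

lemma charpoly_conj_s16 (F G M : Matrix (Fin n) (Fin n) ℂ) (h : F * G = 1) :
    (F * M * G).charpoly = M.charpoly := by
  classical
  let φ : Matrix (Fin n) (Fin n) ℂ →+* Matrix (Fin n) (Fin n) ℂ[X] :=
    (Polynomial.C : ℂ →+* ℂ[X]).mapMatrix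
  have hFG : φ F * φ G = 1 := by rw [← _root_.map_mul, h, _root_.map_one]
  calc (F * M * G).charpoly
      = det (scalar (Fin n) X - φ (F * M * G)) := rfl
    _ = det (scalar (Fin n) X * φ F * φ G - φ F * φ M * φ G) := by
        rw [Matrix.mul_assoc (scalar (Fin n) X), hFG, Matrix.mul_one, _root_.map_mul, _root_.map_mul]
    _ = det (φ F * scalar (Fin n) X * φ G - φ F * φ M * φ G) := by
        rw [scalar_commute _ commute_X]
    _ = det (φ F * (scalar (Fin n) X - φ M) * φ G) := by
        rw [Matrix.mul_sub, Matrix.sub_mul]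
    _ = det (φ F) * det (scalar (Fin n) X - φ M) * det (φ G) := by rw [det_mul, det_mul]
    _ = det (φ F) * det (φ G) * det (scalar (Fin n) X - φ M) := by ring
    _ = M.charpoly := by rw [← det_mul, hFG, det_one, one_mul]; rfl

lemma charpoly_transpose (M : Matrix (Fin n) (Fin n) ℂ) : Mᵀ.charpoly = M.charpoly := by
  rw [Matrix.charpoly, Matrix.charpoly, ← Matrix.det_transpose (charmatrix M)]
  congr 1
  ext i j
  by_cases h : i = j
  · subst h; simp
  · simp [charmatrix_apply, Matrix.transpose_apply, Matrix.diagonal_apply, h, Ne.symm h]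

lemma charpoly_upper {M : Matrix (Fin n) (Fin n) ℂ} (h : M.BlockTriangular id) {c : ℂ}
    (hd : ∀ i, M i i = c) : M.charpoly = (X - C c) ^ n := by
  rw [Matrix.charpoly_of_upperTriangular M h]
  simp only [hd]
  rw [Finset.prod_const, Finset.card_univ, Fintype.card_fin]

lemma roots_pow_sub (hn : 0 < n) {c μ : ℂ} (hμ : μ ∈ ((X - C c) ^ n : ℂ[X]).roots) : μ = c := by
  rw [Polynomial.roots_pow, Polynomial.roots_X_sub_C, Multiset.mem_nsmul] at hμ
  simpa using hμ.2

lemma sum_zeta (hn : 0 < n) {ζ : ℂ} (hζ : IsPrimitiveRoot ζ n) (a b : Fin n) :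
    ∑ j : Fin n, ζ ^ ((a : ℕ) * j) * (ζ⁻¹) ^ ((j : ℕ) * b) = if a = b then (n : ℂ) else 0 := by
  have hζ0 : ζ ≠ 0 := hζ.ne_zero hn.ne'
  set w : ℂ := ζ ^ (a : ℕ) * (ζ⁻¹) ^ (b : ℕ) with hw
  have hterm : ∀ j : Fin n, ζ ^ ((a : ℕ) * j) * (ζ⁻¹) ^ ((j : ℕ) * b) = w ^ (j : ℕ) := by
    intro j
    rw [hw, mul_pow, ← pow_mul, ← pow_mul, mul_comm (a : ℕ) (j : ℕ), mul_comm (b : ℕ) (j : ℕ)]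
  simp_rw [hterm]
  rw [Fin.sum_univ_eq_sum_range (fun j => w ^ j) n]
  by_cases hab : a = b
  · have hw1 : w = 1 := by
      rw [hw, hab, inv_pow, mul_inv_cancel₀ (pow_ne_zero _ hζ0)]
    simp [hw1, hab]
  · have hwn : w ^ n = 1 := by
      rw [hw, mul_pow, ← pow_mul, ← pow_mul, mul_comm (a : ℕ) n, mul_comm (b : ℕ) n,
        pow_mul, pow_mul, hζ.pow_eq_one, inv_pow, hζ.pow_eq_one]
      simp
    have hw1 : w ≠ 1 := by
      intro hw1
      apply hab
      have : ζ ^ (a : ℕ) = ζ ^ (b : ℕ) := by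
        have := hw1
        rw [hw, inv_pow, mul_inv_eq_one₀ (pow_ne_zero _ hζ0)] at this
        exact this
      exact Fin.ext (hζ.pow_inj a.isLt b.isLt this)
    rw [geom_sum_eq hw1, hwn, sub_self, zero_div, if_neg hab]

lemma mem_hull (n : ℕ) (hn : 0 < n) (A : Fin n → Fin n → ℂ)
    (hA : ‖(Matrix.of A).trace‖ < n) : A ∈ convexHull ℝ (specBall n) := by
  classical
  obtain ⟨ζ, hζ⟩ : ∃ ζ : ℂ, IsPrimitiveRoot ζ n := ⟨_, Complex.isPrimitiveRoot_exp n hn.ne'⟩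
  have hn' : (0:ℝ) < n := by exact_mod_cast hn
  have hnC : (n:ℂ) ≠ 0 := by exact_mod_cast hn.ne'
  set Am : Matrix (Fin n) (Fin n) ℂ := Matrix.of A with hAm
  set d : Fin n → ℂ := fun i => Am i i with hd
  set τ : ℂ := Am.trace with hτ
  set c : ℂ := τ / n with hc
  have hcn : ‖c‖ < 1 := by
    rw [hc, norm_div]
    simp only [Complex.norm_natCast]
    rw [div_lt_one hn']
    exact hA
  set F : Matrix (Fin n) (Fin n) ℂ := Matrix.of fun a b => ζ ^ ((a:ℕ) * b) with hF
  set G : Matrix (Fin n) (Fin n) ℂ := Matrix.of fun a b => (n:ℂ)⁻¹ * (ζ⁻¹) ^ ((a:ℕ) * b) with hG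
  have hFG : F * G = 1 := by
    ext a b
    rw [Matrix.mul_apply]
    simp only [hF, hG, Matrix.of_apply]
    have key : ∀ j : Fin n, ζ ^ ((a:ℕ) * j) * ((n:ℂ)⁻¹ * (ζ⁻¹) ^ ((j:ℕ) * b))
        = (n:ℂ)⁻¹ * (ζ ^ ((a:ℕ) * j) * (ζ⁻¹) ^ ((j:ℕ) * b)) := fun j => by ring
    rw [Finset.sum_congr rfl (fun j _ => key j), ← Finset.mul_sum, sum_zeta hn hζ a b]
    by_cases hab : a = b
    · rw [if_pos hab, inv_mul_cancel₀ hnC, hab, Matrix.one_apply_eq]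
    · rw [if_neg hab, mul_zero, Matrix.one_apply_ne hab]
  set Cm : Matrix (Fin n) (Fin n) ℂ := G * Matrix.diagonal d * F with hCm
  have hCdiag : ∀ a, Cm a a = c := by
    intro a
    rw [hCm, Matrix.mul_apply]
    have h1 : ∀ j, (G * Matrix.diagonal d) a j * F j a = (n:ℂ)⁻¹ * d j := by
      intro j
      rw [Matrix.mul_diagonal]
      simp only [hG, hF, Matrix.of_apply]
      have h2 : (ζ⁻¹) ^ ((a:ℕ)*j) * ζ ^ ((j:ℕ)*a) = 1 := by
        rw [mul_comm (j:ℕ) (a:ℕ), inv_pow, inv_mul_cancel₀ (pow_ne_zero _ (hζ.ne_zero hn.ne'))]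
      calc (n:ℂ)⁻¹ * (ζ⁻¹) ^ ((a:ℕ)*j) * d j * ζ ^ ((j:ℕ)*a)
          = (n:ℂ)⁻¹ * d j * ((ζ⁻¹) ^ ((a:ℕ)*j) * ζ ^ ((j:ℕ)*a)) := by ring
        _ = (n:ℂ)⁻¹ * d j := by rw [h2, mul_one]
    rw [Finset.sum_congr rfl fun j _ => h1 j, ← Finset.mul_sum]
    have hτd : ∑ j, d j = τ := by
      rw [hτ, Matrix.trace]
      rfl
    rw [hτd, hc]
    ring
  set Lo : Matrix (Fin n) (Fin n) ℂ :=
    Matrix.of (fun i j => if (j:ℕ) < (i:ℕ) then Cm i j else 0) with hLo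
  set Up : Matrix (Fin n) (Fin n) ℂ :=
    Matrix.of (fun i j => if (i:ℕ) < (j:ℕ) then Cm i j else 0) with hUp
  set AL : Matrix (Fin n) (Fin n) ℂ :=
    Matrix.of (fun i j => if (j:ℕ) < (i:ℕ) then Am i j else 0) with hAL
  set AU : Matrix (Fin n) (Fin n) ℂ :=
    Matrix.of (fun i j => if (i:ℕ) < (j:ℕ) then Am i j else 0) with hAU
  have hCsplit : Cm = c • (1 : Matrix (Fin n) (Fin n) ℂ) + Lo + Up := by
    ext i j
    simp only [Matrix.add_apply, Matrix.smul_apply, Matrix.one_apply, hLo, hUp, Matrix.of_apply,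
      smul_eq_mul]
    rcases lt_trichotomy (i:ℕ) (j:ℕ) with h | h | h
    · rw [if_neg (by omega : ¬ (j:ℕ) < (i:ℕ)), if_pos h, if_neg (fun hij => by
        rw [hij] at h; omega)]
      ring
    · have hij : i = j := Fin.ext h
      rw [if_pos hij, if_neg (by omega), if_neg (by omega), hij, hCdiag]
      ring
    · rw [if_pos h, if_neg (by omega : ¬ (i:ℕ) < (j:ℕ)), if_neg (fun hij => by
        rw [hij] at h; omega)]
      ring
  have hAsplit : Am = Matrix.diagonal d + AL + AU := by
    ext i j
    simp only [Matrix.add_apply, Matrix.diagonal_apply, hAL, hAU, Matrix.of_apply]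
    rcases lt_trichotomy (i:ℕ) (j:ℕ) with h | h | h
    · rw [if_neg (by omega : ¬ (j:ℕ) < (i:ℕ)), if_pos h, if_neg (fun hij => by
        rw [hij] at h; omega)]
      ring
    · have hij : i = j := Fin.ext h
      rw [if_pos hij, if_neg (by omega), if_neg (by omega), hij]
      simp [hd]
    · rw [if_pos h, if_neg (by omega : ¬ (i:ℕ) < (j:ℕ)), if_neg (fun hij => by
        rw [hij] at h; omega)]
      ring
  have hFCG : F * Cm * G = Matrix.diagonal d := by
    rw [hCm]
    calc F * (G * Matrix.diagonal d * F) * G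
        = (F * G) * Matrix.diagonal d * (F * G) := by noncomm_ring
      _ = Matrix.diagonal d := by rw [hFG, one_mul, mul_one]
  set T1 : Matrix (Fin n) (Fin n) ℂ := F * (c • 1 + (4:ℂ) • Lo) * G with hT1
  set T2 : Matrix (Fin n) (Fin n) ℂ := F * (c • 1 + (4:ℂ) • Up) * G with hT2
  set T3 : Matrix (Fin n) (Fin n) ℂ := c • 1 + (4:ℂ) • AL with hT3
  set T4 : Matrix (Fin n) (Fin n) ℂ := c • 1 + (4:ℂ) • AU with hT4
  have hT1e : T1 = c • (1 : Matrix (Fin n) (Fin n) ℂ) + (4:ℂ) • (F * Lo * G) := by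
    rw [hT1]
    rw [Matrix.mul_add, Matrix.add_mul, Matrix.mul_smul, Matrix.smul_mul, Matrix.mul_smul,
      Matrix.smul_mul, Matrix.mul_one, hFG]
  have hT2e : T2 = c • (1 : Matrix (Fin n) (Fin n) ℂ) + (4:ℂ) • (F * Up * G) := by
    rw [hT2]
    rw [Matrix.mul_add, Matrix.add_mul, Matrix.mul_smul, Matrix.smul_mul, Matrix.mul_smul,
      Matrix.smul_mul, Matrix.mul_one, hFG]
  have hLU : F * Lo * G + F * Up * G = Matrix.diagonal d - c • 1 := by
    have e1 : F * Cm * G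
        = c • (1 : Matrix (Fin n) (Fin n) ℂ) + F * Lo * G + F * Up * G := by
      rw [hCsplit, Matrix.mul_add, Matrix.mul_add, Matrix.add_mul, Matrix.add_mul,
        Matrix.mul_smul, Matrix.smul_mul, Matrix.mul_one, hFG]
    rw [hFCG] at e1
    rw [e1]
    abel
  have hsum : T1 + T2 + T3 + T4 = (4:ℂ) • Am := by
    rw [hT1e, hT2e, hT3, hT4]
    have : c • (1 : Matrix (Fin n) (Fin n) ℂ) + (4:ℂ) • (F * Lo * G)
        + (c • 1 + (4:ℂ) • (F * Up * G)) + (c • 1 + (4:ℂ) • AL) + (c • 1 + (4:ℂ) • AU)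
        = (4:ℂ) • (c • (1 : Matrix (Fin n) (Fin n) ℂ))
          + (4:ℂ) • (F * Lo * G + F * Up * G) + (4:ℂ) • (AL + AU) := by
      simp only [smul_add]
      match_scalars <;> ring
    rw [this, hLU, hAsplit]
    simp only [smul_sub, smul_add]
    abel
  -- membership of the four pieces in the spectral ball
  have hmemUp : ∀ M : Matrix (Fin n) (Fin n) ℂ, M.BlockTriangular id → (∀ i, M i i = c) →
      (M : Fin n → Fin n → ℂ) ∈ specBall n := by
    intro M hM hMd μ hμ
    have hch : (Matrix.of (M : Fin n → Fin n → ℂ)).charpoly = (X - C c) ^ n :=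
      charpoly_upper hM hMd
    rw [hch] at hμ
    rw [roots_pow_sub hn hμ]
    exact hcn
  have hT4mem : (T4 : Fin n → Fin n → ℂ) ∈ specBall n := by
    apply hmemUp
    · intro i j hlt
      simp only [hT4, Matrix.add_apply, Matrix.smul_apply, hAU, Matrix.of_apply, smul_eq_mul]
      rw [Matrix.one_apply_ne (by exact fun h => absurd h (by intro h; subst h; exact lt_irrefl _ hlt) : i ≠ j)]
      rw [if_neg (by exact_mod_cast not_lt.mpr (le_of_lt (by exact_mod_cast hlt)))]
      ring
    · intro i
      simp only [hT4, Matrix.add_apply, Matrix.smul_apply, hAU, Matrix.of_apply, smul_eq_mul,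
        Matrix.one_apply_eq, lt_irrefl, if_false]
      ring
  have hT3mem : (T3 : Fin n → Fin n → ℂ) ∈ specBall n := by
    intro μ hμ
    have hch : (Matrix.of (T3 : Fin n → Fin n → ℂ)).charpoly = (X - C c) ^ n := by
      show T3.charpoly = (X - C c) ^ n
      have := charpoly_transpose T3
      rw [← this]
      apply charpoly_upper
      · intro i j hlt
        simp only [Matrix.transpose_apply, hT3, Matrix.add_apply, Matrix.smul_apply, hAL,
          Matrix.of_apply, smul_eq_mul]
        rw [Matrix.one_apply_ne (by exact fun h => absurd h (by intro h; subst h; exact lt_irrefl _ hlt) : j ≠ i)]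
        rw [if_neg (by exact_mod_cast not_lt.mpr (le_of_lt (by exact_mod_cast hlt)))]
        ring
      · intro i
        simp only [Matrix.transpose_apply, hT3, Matrix.add_apply, Matrix.smul_apply, hAL,
          Matrix.of_apply, smul_eq_mul, Matrix.one_apply_eq, lt_irrefl, if_false]
        ring
    rw [hch] at hμ
    rw [roots_pow_sub hn hμ]
    exact hcn
  have hT1mem : (T1 : Fin n → Fin n → ℂ) ∈ specBall n := by
    intro μ hμ
    have hch : (Matrix.of (T1 : Fin n → Fin n → ℂ)).charpoly = (X - C c) ^ n := by
      have hconj : (Matrix.of (T1 : Fin n → Fin n → ℂ)).charpoly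
          = (c • (1 : Matrix (Fin n) (Fin n) ℂ) + (4:ℂ) • Lo).charpoly :=
        charpoly_conj_s16 F G _ hFG
      rw [hconj, ← charpoly_transpose]
      apply charpoly_upper
      · intro i j hlt
        simp only [Matrix.transpose_apply, Matrix.add_apply, Matrix.smul_apply, hLo,
          Matrix.of_apply, smul_eq_mul]
        rw [Matrix.one_apply_ne (by exact fun h => absurd h (by intro h; subst h; exact lt_irrefl _ hlt) : j ≠ i)]
        rw [if_neg (by exact_mod_cast not_lt.mpr (le_of_lt (by exact_mod_cast hlt)))]
        ring
      · intro i
        simp only [Matrix.transpose_apply, Matrix.add_apply, Matrix.smul_apply, hLo,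
          Matrix.of_apply, smul_eq_mul, Matrix.one_apply_eq, lt_irrefl, if_false]
        ring
    rw [hch] at hμ
    rw [roots_pow_sub hn hμ]
    exact hcn
  have hT2mem : (T2 : Fin n → Fin n → ℂ) ∈ specBall n := by
    intro μ hμ
    have hch : (Matrix.of (T2 : Fin n → Fin n → ℂ)).charpoly = (X - C c) ^ n := by
      have hconj : (Matrix.of (T2 : Fin n → Fin n → ℂ)).charpoly
          = (c • (1 : Matrix (Fin n) (Fin n) ℂ) + (4:ℂ) • Up).charpoly :=
        charpoly_conj_s16 F G _ hFG
      rw [hconj]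
      apply charpoly_upper
      · intro i j hlt
        simp only [Matrix.add_apply, Matrix.smul_apply, hUp, Matrix.of_apply, smul_eq_mul]
        rw [Matrix.one_apply_ne (by exact fun h => absurd h (by intro h; subst h; exact lt_irrefl _ hlt) : i ≠ j)]
        rw [if_neg (by exact_mod_cast not_lt.mpr (le_of_lt (by exact_mod_cast hlt)))]
        ring
      · intro i
        simp only [Matrix.add_apply, Matrix.smul_apply, hUp, Matrix.of_apply, smul_eq_mul,
          Matrix.one_apply_eq, lt_irrefl, if_false]
        ring
    rw [hch] at hμ
    rw [roots_pow_sub hn hμ]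
    exact hcn
  -- assemble the convex combination
  have hconv := convex_convexHull ℝ (specBall n)
  have m1 := subset_convexHull ℝ (specBall n) hT1mem
  have m2 := subset_convexHull ℝ (specBall n) hT2mem
  have m3 := subset_convexHull ℝ (specBall n) hT3mem
  have m4 := subset_convexHull ℝ (specBall n) hT4mem
  have m12 := hconv m1 m2 (by norm_num : (0:ℝ) ≤ 1/2) (by norm_num : (0:ℝ) ≤ 1/2) (by norm_num)
  have m34 := hconv m3 m4 (by norm_num : (0:ℝ) ≤ 1/2) (by norm_num : (0:ℝ) ≤ 1/2) (by norm_num)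
  have mA := hconv m12 m34 (by norm_num : (0:ℝ) ≤ 1/2) (by norm_num : (0:ℝ) ≤ 1/2) (by norm_num)
  have hAeq : A = (1/2:ℝ) • ((1/2:ℝ) • (T1 : Fin n → Fin n → ℂ) + (1/2:ℝ) • (T2 : Fin n → Fin n → ℂ))
      + (1/2:ℝ) • ((1/2:ℝ) • (T3 : Fin n → Fin n → ℂ) + (1/2:ℝ) • (T4 : Fin n → Fin n → ℂ)) := by
    have h4 : (T1 + T2 + T3 + T4 : Matrix (Fin n) (Fin n) ℂ) = (4:ℂ) • Am := hsum
    funext i j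
    have h4ij := congrFun (congrFun (congrArg (fun M : Matrix (Fin n) (Fin n) ℂ => (M : Fin n → Fin n → ℂ)) h4) i) j
    simp only [Matrix.add_apply, Matrix.smul_apply, smul_eq_mul] at h4ij
    show A i j = ((1/2:ℝ) • ((1/2:ℝ) • T1 + (1/2:ℝ) • T2)
      + (1/2:ℝ) • ((1/2:ℝ) • T3 + (1/2:ℝ) • T4) : Matrix (Fin n) (Fin n) ℂ) i j
    simp only [Matrix.add_apply, Matrix.smul_apply, Complex.real_smul, smul_eq_mul]
    push_cast
    have hAij : Am i j = A i j := rfl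
    rw [hAij] at h4ij
    linear_combination (-1/4 : ℂ) * h4ij
  rw [hAeq]
  exact mA

end SpecBallAux

/-- the convex hull of the spectral ball `Ωₙ` is exactly
`{A ∈ Mₙ(ℂ) : |tr A| / n < 1}`. -/
theorem convexHull_specBall (n : ℕ) (hn : 0 < n) :
    convexHull ℝ (specBall n) =
      {A : Fin n → Fin n → ℂ | ‖Matrix.trace (Matrix.of A)‖ / n < 1} := by
  apply Set.Subset.antisymm
  · have hn' : (0 : ℝ) < n := by exact_mod_cast hn
    apply convexHull_min
    · intro A hA
      have hsum : (Matrix.of A).trace = (Matrix.of A).charpoly.roots.sum :=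
        Matrix.trace_eq_sum_roots_charpoly _
      have hcard : (Matrix.of A).charpoly.roots.card = n := by
        rw [(Polynomial.splits_iff_card_roots).mp (IsAlgClosed.splits _)]
        simp
      have hne : (Matrix.of A).charpoly.roots ≠ ∅ := by
        intro h
        rw [h] at hcard
        simp at hcard
        omega
      have h1 : ‖(Matrix.of A).trace‖ < n := by
        calc ‖(Matrix.of A).trace‖ ≤ ((Matrix.of A).charpoly.roots.map norm).sum := by
              rw [hsum]; exact norm_multiset_sum_le _
          _ < ((Matrix.of A).charpoly.roots.map (fun _ => (1:ℝ))).sum :=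
              Multiset.sum_lt_sum_of_nonempty hne hA
          _ = n := by rw [Multiset.map_const', Multiset.sum_replicate, hcard]; simp
      simpa [Set.mem_setOf_eq, div_lt_one hn'] using h1
    · intro x hx y hy a b ha hb hab
      simp only [Set.mem_setOf_eq, div_lt_one hn'] at hx hy ⊢
      have hof : Matrix.of (a • x + b • y) = a • Matrix.of x + b • Matrix.of y := rfl
      rw [hof, Matrix.trace_add, Matrix.trace_smul, Matrix.trace_smul]
      calc ‖a • (Matrix.of x).trace + b • (Matrix.of y).trace‖
          ≤ ‖a • (Matrix.of x).trace‖ + ‖b • (Matrix.of y).trace‖ := norm_add_le _ _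
        _ = a * ‖(Matrix.of x).trace‖ + b * ‖(Matrix.of y).trace‖ := by
            rw [norm_smul, norm_smul, Real.norm_of_nonneg ha, Real.norm_of_nonneg hb]
        _ < n := by
            rcases eq_or_lt_of_le ha with h0 | hpos
            · have hb1 : b = 1 := by linarith
              rw [← h0, hb1]; simpa using hy
            · nlinarith [mul_lt_mul_of_pos_left hx hpos, mul_le_mul_of_nonneg_left hy.le hb]

  · intro A hA
    have hn' : (0:ℝ) < n := by exact_mod_cast hn
    rw [Set.mem_setOf_eq, div_lt_one hn'] at hA
    exact SpecBallAux.mem_hull n hn A hA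
end
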